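/- arXiv:2106.07706 — 8 statements merged into one kernel-verified Lean document; each statement's English description precedes it below -/
import Mathlib

section
/- For every real α > 3 and every b ∈ ℝ, if γ ≥ 0 satisfies F_α(γ) = Φ(b), then γ ≤ 2α + b². (Equivalently, the Gamma quantile transform h(b;α) = F_α⁻¹(Φ(b)) of the standard normal CDF satisfies h(b;α) ≤ 2α + b² for all α > 3 and b ∈ ℝ.) -/
open MeasureTheory Set

/-- The Gamma(α,1) cumulative distribution function
`F_α(γ) = Γ(α)⁻¹ ∫₀^γ t^(α−1) e^(−t) dt`. -/
noncomputable def gammaCDF (α γ : ℝ) : ℝ :=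
  (Real.Gamma α)⁻¹ * ∫ t in Set.Ioc (0 : ℝ) γ, t ^ (α - 1) * Real.exp (-t)

/-- The standard normal cumulative distribution function
`Φ(b) = (2π)^(−1/2) ∫_{−∞}^b e^(−t²/2) dt`. -/
noncomputable def stdNormalCDF (b : ℝ) : ℝ :=
  (Real.sqrt (2 * Real.pi))⁻¹ * ∫ t in Set.Iic b, Real.exp (-t ^ 2 / 2)

namespace GammaQuantile

lemma sqrt2pi_pos : 0 < Real.sqrt (2 * Real.pi) :=
  Real.sqrt_pos.2 (by positivity)

lemma sqrt2pi_le : Real.sqrt (2 * Real.pi) ≤ 2.52 := by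
  rw [show (2.52:ℝ) = Real.sqrt (2.52^2) from (Real.sqrt_sq (by norm_num)).symm]
  exact Real.sqrt_le_sqrt (by nlinarith [Real.pi_lt_d2])

lemma log_sqrt2pi_le : Real.log (Real.sqrt (2*Real.pi)) ≤ 1 := by
  rw [Real.log_le_iff_le_exp sqrt2pi_pos]
  have h := Real.exp_one_gt_d9
  have := sqrt2pi_le
  linarith

/-- Chord lower bound from log-convexity: `Γ(α) ≥ 2^(α-2)` for `α ≥ 3`, in log form. -/
lemma chord {α : ℝ} (hα : 3 ≤ α) : (α - 2) * Real.log 2 ≤ Real.log (Real.Gamma α) := by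
  have h3 : Real.Gamma 3 = 2 := by
    rw [show (3:ℝ) = (2:ℕ) + 1 by norm_num, Real.Gamma_nat_eq_factorial]
    norm_num [Nat.factorial]
  rcases eq_or_lt_of_le hα with h | h
  · rw [← h, h3]; norm_num
  · have hc := Real.convexOn_log_Gamma.2 (mem_Ioi.2 (by norm_num : (0:ℝ) < 2))
      (mem_Ioi.2 (by linarith : (0:ℝ) < α))
      (show (0:ℝ) ≤ (α-3)/(α-2) by apply div_nonneg <;> linarith)
      (show (0:ℝ) ≤ 1/(α-2) by
        apply div_nonneg <;> linarith)
      (show (α-3)/(α-2) + 1/(α-2) = 1 by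
        have hne : α - 2 ≠ 0 := by linarith
        field_simp
        ring)
    simp only [Function.comp, smul_eq_mul] at hc
    rw [show (α-3)/(α-2) * 2 + 1/(α-2) * α = 3 by
      have hne : α - 2 ≠ 0 := by linarith
      field_simp
      ring] at hc
    rw [h3, Real.Gamma_two, Real.log_one, mul_zero, zero_add] at hc
    have h2 : (α - 2) * ((1/(α-2)) * Real.log (Real.Gamma α)) = Real.log (Real.Gamma α) := by
      have hne : α - 2 ≠ 0 := by linarith
      field_simp
    calc (α - 2) * Real.log 2 ≤ (α - 2) * ((1/(α-2)) * Real.log (Real.Gamma α)) :=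
          mul_le_mul_of_nonneg_left hc (by linarith)
      _ = Real.log (Real.Gamma α) := h2

/-- Log form of the key lower bound on Γ. -/
lemma auxNlog : ∀ n : ℕ, ∀ α : ℝ, 3 ≤ α → α ≤ 4 + n →
    Real.log (Real.sqrt (2*Real.pi)) - 1/2 + Real.log 2 + Real.log α / 2
      + (α-1) * Real.log (2*α) - 2*α ≤ Real.log (Real.Gamma α) := by
  intro n
  induction n with
  | zero =>
    intro α h3 h4
    norm_num at h4
    refine le_trans ?_ (chord h3)
    have hl2 := Real.log_two_lt_d9
    have hl2' := Real.log_two_gt_d9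
    have hα0 : (0:ℝ) < α := by linarith
    have hlogα : Real.log α ≤ 2 * Real.log 2 := by
      calc Real.log α ≤ Real.log 4 := (Real.log_le_log_iff hα0 (by norm_num)).2 h4
        _ = 2 * Real.log 2 := by
            rw [show (4:ℝ) = 2^2 by norm_num, Real.log_pow]; push_cast; ring
    have hlog2α : Real.log (2*α) ≤ 3 * Real.log 2 := by
      calc Real.log (2*α) ≤ Real.log 8 := (Real.log_le_log_iff (by linarith) (by norm_num)).2 (by linarith)
        _ = 3 * Real.log 2 := by
            rw [show (8:ℝ) = 2^3 by norm_num, Real.log_pow]; push_cast; ring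
    have hmul : (α-1) * Real.log (2*α) ≤ (α-1) * (3*Real.log 2) :=
      mul_le_mul_of_nonneg_left hlog2α (by linarith)
    have hK := log_sqrt2pi_le
    nlinarith [mul_le_mul_of_nonneg_left hl2.le (show (0:ℝ) ≤ 2*α+1 by linarith)]
  | succ n ih =>
    intro α h3 h4
    by_cases hc : α ≤ 4 + n
    · exact ih α h3 hc
    · push_neg at hc
      have h4' : (4:ℝ) < α := by
        have h0 : (0:ℝ) ≤ (n:ℝ) := Nat.cast_nonneg n
        push_cast at hc
        linarith
      have hprev := ih (α - 1) (by linarith) (by push_cast at h4 ⊢; linarith)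
      have hΓpos : 0 < Real.Gamma (α-1) := Real.Gamma_pos_of_pos (by linarith)
      have hrec : Real.Gamma α = (α-1) * Real.Gamma (α-1) := by
        have h := Real.Gamma_add_one (s := α - 1) (by
          intro h0
          have := sub_eq_zero.mp h0
          linarith)
        rw [sub_add_cancel] at h
        exact h
      have hlogΓ : Real.log (Real.Gamma α)
          = Real.log (α-1) + Real.log (Real.Gamma (α-1)) := by
        rw [hrec, Real.log_mul (ne_of_gt (by linarith : (0:ℝ) < α - 1)) (ne_of_gt hΓpos)]
      rw [hlogΓ]
      have hrle : Real.log α - Real.log (α-1) ≤ 1/(α-1) := by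
        have hne1 : α ≠ 0 := ne_of_gt (by linarith)
        have hne2 : α - 1 ≠ 0 := ne_of_gt (by linarith)
        rw [← Real.log_div hne1 hne2]
        have h := Real.log_le_sub_one_of_pos
          (show (0:ℝ) < α/(α-1) from div_pos (by linarith) (by linarith))
        have heq : α/(α-1) - 1 = 1/(α-1) := by
          field_simp
          ring
        linarith
      have key : (α - 1/2) * (Real.log α - Real.log (α-1)) ≤ 2 - Real.log 2 := by
        have h1 : (α - 1/2) * (Real.log α - Real.log (α-1)) ≤ (α - 1/2) * (1/(α-1)) :=
          mul_le_mul_of_nonneg_left hrle (by linarith)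
        have h2 : (α - 1/2) * (1/(α-1)) ≤ 7/6 := by
          rw [show (α - 1/2) * (1/(α-1)) = (α - 1/2)/(α-1) by ring,
            div_le_iff₀ (by linarith)]
          linarith
        have := Real.log_two_lt_d9
        linarith
      have hs1 : Real.log (2*α) = Real.log 2 + Real.log α :=
        Real.log_mul (by norm_num) (by linarith)
      have hs2 : Real.log (2*(α-1)) = Real.log 2 + Real.log (α-1) :=
        Real.log_mul (by norm_num) (by linarith)
      rw [hs1]
      rw [hs2] at hprev
      nlinarith [key, hprev]

/-- The key lower bound on Γ:
`√(2π) e^{-1/2} · 2√α · (2α)^(α-1) e^{-2α} ≤ Γ(α)` for `α ≥ 3`. -/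
lemma auxN {α : ℝ} (hα : 3 ≤ α) :
    Real.sqrt (2*Real.pi) * Real.exp (-(1/2)) * (2 * Real.sqrt α)
      * ((2*α) ^ (α-1) * Real.exp (-(2*α))) ≤ Real.Gamma α := by
  obtain ⟨n, hn⟩ := exists_nat_ge (α - 4)
  have hα0 : (0:ℝ) < α := by linarith
  have hlog := auxNlog n α hα (by linarith)
  have hL : Real.exp (Real.log (Real.sqrt (2*Real.pi)) - 1/2 + Real.log 2 + Real.log α / 2
      + (α-1) * Real.log (2*α) - 2*α)
      = Real.sqrt (2*Real.pi) * Real.exp (-(1/2)) * (2 * Real.sqrt α)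
        * ((2*α) ^ (α-1) * Real.exp (-(2*α))) := by
    rw [show Real.log (Real.sqrt (2*Real.pi)) - 1/2 + Real.log 2 + Real.log α / 2
        + (α-1) * Real.log (2*α) - 2*α
        = Real.log (Real.sqrt (2*Real.pi)) + (-(1/2)) + (Real.log 2 + Real.log α / 2)
          + (Real.log (2*α) * (α-1) + (-(2*α))) by ring]
    rw [Real.exp_add, Real.exp_add, Real.exp_add, Real.exp_add, Real.exp_add]
    rw [Real.exp_log sqrt2pi_pos, Real.exp_log (show (0:ℝ) < 2 by norm_num),
      ← Real.log_sqrt hα0.le, Real.exp_log (Real.sqrt_pos.2 hα0),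
      ← Real.rpow_def_of_pos (by linarith : (0:ℝ) < 2*α)]
  rw [← hL, ← Real.exp_log (Real.Gamma_pos_of_pos hα0)]
  exact Real.exp_le_exp.2 hlog

/-- Pointwise inequality: the substituted Gamma tail density is below the normal density. -/
lemma pointwise {α : ℝ} (hα : 3 ≤ α) {s : ℝ} (hs : 0 ≤ s) :
    2*s * ((2*α + s^2) ^ (α-1) * Real.exp (-(2*α + s^2)))
      ≤ Real.Gamma α * (Real.sqrt (2*Real.pi))⁻¹ * Real.exp (-s^2/2) := by
  have hα0 : (0:ℝ) < α := by linarith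
  have hS := sqrt2pi_pos
  have key : Real.sqrt (2*Real.pi) * (2*s * ((2*α + s^2) ^ (α-1) * Real.exp (-(2*α + s^2))))
      ≤ Real.Gamma α * Real.exp (-s^2/2) := by
    have hu : (0:ℝ) ≤ s^2/(2*α) := by positivity
    have h1 : (2*α + s^2) ^ (α-1) ≤ (2*α) ^ (α-1) * Real.exp ((α-1) * (s^2/(2*α))) := by
      rw [show (2*α + s^2) = (2*α) * (1 + s^2/(2*α)) by field_simp,
        Real.mul_rpow (by linarith) (by linarith)]
      have hb : (0:ℝ) < 1 + s^2/(2*α) := by linarith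
      have hlog : Real.log (1 + s^2/(2*α)) ≤ s^2/(2*α) := by
        have := Real.log_le_sub_one_of_pos hb
        linarith
      have h2 : (1 + s^2/(2*α)) ^ (α-1) ≤ Real.exp ((α-1) * (s^2/(2*α))) := by
        rw [Real.rpow_def_of_pos hb]
        exact Real.exp_le_exp.2 (by nlinarith [hlog])
      exact mul_le_mul_of_nonneg_left h2 (Real.rpow_nonneg (by linarith) _)
    have hw2 : Real.sqrt α ^ 2 = α := Real.sq_sqrt hα0.le
    have hwpos : 0 < Real.sqrt α := Real.sqrt_pos.2 hα0
    have h2 : 2*s * Real.exp (-(s^2/(2*α))) ≤ 2*Real.sqrt α * Real.exp (-(1/2)) := by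
      have hkey : s ≤ Real.sqrt α * Real.exp (s^2/(2*α) - 1/2) := by
        have hexp : s^2/(2*α) - 1/2 + 1 ≤ Real.exp (s^2/(2*α) - 1/2) :=
          Real.add_one_le_exp _
        have hineq : s ≤ Real.sqrt α * (s^2/(2*α) - 1/2 + 1) := by
          have h3 : Real.sqrt α * (s^2/(2*α) - 1/2 + 1) - s
              = (s - Real.sqrt α)^2 / (2*Real.sqrt α) := by
            rw [eq_div_iff (by positivity)]
            have : α = Real.sqrt α ^ 2 := hw2.symm
            field_simp
            nlinarith [hw2]
          nlinarith [h3, sq_nonneg (s - Real.sqrt α), hwpos,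
            div_nonneg (sq_nonneg (s - Real.sqrt α)) (by positivity : (0:ℝ) ≤ 2*Real.sqrt α)]
        calc s ≤ Real.sqrt α * (s^2/(2*α) - 1/2 + 1) := hineq
          _ ≤ Real.sqrt α * Real.exp (s^2/(2*α) - 1/2) :=
              mul_le_mul_of_nonneg_left hexp hwpos.le
      calc 2*s * Real.exp (-(s^2/(2*α)))
          ≤ 2*(Real.sqrt α * Real.exp (s^2/(2*α) - 1/2)) * Real.exp (-(s^2/(2*α))) := by
            have he : (0:ℝ) < Real.exp (-(s^2/(2*α))) := Real.exp_pos _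
            nlinarith [hkey, he]
        _ = 2*Real.sqrt α * Real.exp (-(1/2)) := by
            rw [show 2*(Real.sqrt α * Real.exp (s^2/(2*α) - 1/2)) * Real.exp (-(s^2/(2*α)))
              = 2*Real.sqrt α * (Real.exp (s^2/(2*α) - 1/2) * Real.exp (-(s^2/(2*α)))) by ring,
              ← Real.exp_add]
            congr 2
            ring
    have hexps : Real.exp ((α-1) * (s^2/(2*α))) * Real.exp (-(2*α + s^2))
        = Real.exp (-(2*α)) * (Real.exp (-(s^2/(2*α))) * Real.exp (-s^2/2)) := by
      rw [← Real.exp_add, ← Real.exp_add, ← Real.exp_add]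
      congr 1
      field_simp
      ring
    calc Real.sqrt (2*Real.pi) * (2*s * ((2*α + s^2) ^ (α-1) * Real.exp (-(2*α + s^2))))
        ≤ Real.sqrt (2*Real.pi) * (2*s * (((2*α) ^ (α-1) * Real.exp ((α-1) * (s^2/(2*α)))) * Real.exp (-(2*α + s^2)))) := by
          have hmul : (2*α + s^2) ^ (α-1) * Real.exp (-(2*α + s^2))
              ≤ ((2*α) ^ (α-1) * Real.exp ((α-1) * (s^2/(2*α)))) * Real.exp (-(2*α + s^2)) :=
            mul_le_mul_of_nonneg_right h1 (Real.exp_pos _).le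
          have h2s : (0:ℝ) ≤ 2*s := by linarith
          nlinarith [hmul, hS, h2s, mul_le_mul_of_nonneg_left hmul h2s]
      _ = (Real.sqrt (2*Real.pi) * (2*α) ^ (α-1) * Real.exp (-(2*α)))
            * (2*s * Real.exp (-(s^2/(2*α)))) * Real.exp (-s^2/2) := by
          rw [show 2*s * (((2*α) ^ (α-1) * Real.exp ((α-1) * (s^2/(2*α)))) * Real.exp (-(2*α + s^2)))
            = 2*s * ((2*α) ^ (α-1) * (Real.exp ((α-1) * (s^2/(2*α))) * Real.exp (-(2*α + s^2)))) by ring,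
            hexps]
          ring
      _ ≤ (Real.sqrt (2*Real.pi) * (2*α) ^ (α-1) * Real.exp (-(2*α)))
            * (2*Real.sqrt α * Real.exp (-(1/2))) * Real.exp (-s^2/2) := by
          have hA : (0:ℝ) ≤ Real.sqrt (2*Real.pi) * (2*α) ^ (α-1) * Real.exp (-(2*α)) := by
            apply mul_nonneg (mul_nonneg hS.le (Real.rpow_nonneg (by linarith) _)) (Real.exp_pos _).le
          have := mul_le_mul_of_nonneg_left h2 hA
          nlinarith [this, Real.exp_pos (-s^2/2)]
      _ = (Real.sqrt (2*Real.pi) * Real.exp (-(1/2)) * (2 * Real.sqrt α)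
            * ((2*α) ^ (α-1) * Real.exp (-(2*α)))) * Real.exp (-s^2/2) := by ring
      _ ≤ Real.Gamma α * Real.exp (-s^2/2) :=
          mul_le_mul_of_nonneg_right (auxN hα) (Real.exp_pos _).le
  calc 2*s * ((2*α + s^2) ^ (α-1) * Real.exp (-(2*α + s^2)))
      = (Real.sqrt (2*Real.pi))⁻¹ * (Real.sqrt (2*Real.pi)
          * (2*s * ((2*α + s^2) ^ (α-1) * Real.exp (-(2*α + s^2))))) := by
        field_simp
    _ ≤ (Real.sqrt (2*Real.pi))⁻¹ * (Real.Gamma α * Real.exp (-s^2/2)) :=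
        mul_le_mul_of_nonneg_left key (inv_nonneg.2 hS.le)
    _ = Real.Gamma α * (Real.sqrt (2*Real.pi))⁻¹ * Real.exp (-s^2/2) := by ring

lemma gauss_integrable : MeasureTheory.Integrable (fun t : ℝ => Real.exp (-t^2/2)) := by
  have h := integrable_exp_neg_mul_sq (show (0:ℝ) < 1/2 by norm_num)
  have e : (fun t : ℝ => Real.exp (-(1/2) * t^2)) = fun t : ℝ => Real.exp (-t^2/2) := by
    funext t; congr 1; ring
  rwa [e] at h

lemma gauss_total : (∫ t : ℝ, Real.exp (-t^2/2)) = Real.sqrt (2*Real.pi) := by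
  have h := integral_gaussian (1/2 : ℝ)
  have e : (fun t : ℝ => Real.exp (-(1/2) * t^2)) = fun t : ℝ => Real.exp (-t^2/2) := by
    funext t; congr 1; ring
  rw [e] at h
  rw [h]
  congr 1
  ring

lemma stdNormal_eq (b : ℝ) :
    stdNormalCDF b = 1 - (Real.sqrt (2*Real.pi))⁻¹ * ∫ t in Set.Ioi b, Real.exp (-t^2/2) := by
  have hsplit : (∫ t in Set.Iic b, Real.exp (-t^2/2)) + (∫ t in Set.Ioi b, Real.exp (-t^2/2))
      = Real.sqrt (2*Real.pi) := by
    have h := MeasureTheory.setIntegral_union (f := fun t : ℝ => Real.exp (-t^2/2))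
      (μ := MeasureTheory.volume) (Set.Iic_disjoint_Ioi (le_refl b)) measurableSet_Ioi
      gauss_integrable.integrableOn gauss_integrable.integrableOn
    rw [Set.Iic_union_Ioi, MeasureTheory.setIntegral_univ, gauss_total] at h
    linarith [h]
  have hS := sqrt2pi_pos
  unfold stdNormalCDF
  have h1 : (∫ t in Set.Iic b, Real.exp (-t^2/2))
      = Real.sqrt (2*Real.pi) - ∫ t in Set.Ioi b, Real.exp (-t^2/2) := by linarith
  rw [h1, mul_sub, inv_mul_cancel₀ (ne_of_gt hS)]

lemma gamma_integrand_integrableOn {α : ℝ} (hα : 0 < α) {S : Set ℝ} (hS : S ⊆ Set.Ioi 0) :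
    MeasureTheory.IntegrableOn (fun t : ℝ => t ^ (α-1) * Real.exp (-t)) S := by
  have h := Real.GammaIntegral_convergent hα
  have e : (fun t : ℝ => Real.exp (-t) * t ^ (α-1)) = fun t : ℝ => t ^ (α-1) * Real.exp (-t) := by
    funext t; ring
  rw [e] at h
  exact h.mono_set hS

lemma Gamma_eq {α : ℝ} (hα : 0 < α) :
    Real.Gamma α = ∫ t in Set.Ioi (0:ℝ), t ^ (α-1) * Real.exp (-t) := by
  rw [Real.Gamma_eq_integral hα]
  exact MeasureTheory.setIntegral_congr_fun measurableSet_Ioi (fun t _ => mul_comm _ _)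

lemma gammaCDF_eq {α x : ℝ} (hα : 0 < α) (hx : 0 ≤ x) :
    gammaCDF α x = 1 - (Real.Gamma α)⁻¹ * ∫ t in Set.Ioi x, t ^ (α-1) * Real.exp (-t) := by
  have hsplit : (∫ t in Set.Ioc (0:ℝ) x, t ^ (α-1) * Real.exp (-t))
      + (∫ t in Set.Ioi x, t ^ (α-1) * Real.exp (-t)) = Real.Gamma α := by
    rw [Gamma_eq hα, ← Set.Ioc_union_Ioi_eq_Ioi hx,
      MeasureTheory.setIntegral_union (Set.Ioc_disjoint_Ioi le_rfl) measurableSet_Ioi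
        (gamma_integrand_integrableOn hα Set.Ioc_subset_Ioi_self)
        (gamma_integrand_integrableOn hα (Set.Ioi_subset_Ioi hx))]
  have hΓ : (0:ℝ) < Real.Gamma α := Real.Gamma_pos_of_pos hα
  unfold gammaCDF
  have h1 : (∫ t in Set.Ioc (0:ℝ) x, t ^ (α-1) * Real.exp (-t))
      = Real.Gamma α - ∫ t in Set.Ioi x, t ^ (α-1) * Real.exp (-t) := by linarith
  rw [h1, mul_sub, inv_mul_cancel₀ (ne_of_gt hΓ)]

lemma key_comparison {α b : ℝ} (hα : 3 ≤ α) (hb : 0 ≤ b) :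
    stdNormalCDF b ≤ gammaCDF α (2*α + b^2) := by
  have hα0 : (0:ℝ) < α := by linarith
  have hx0 : (0:ℝ) ≤ 2*α + b^2 := by positivity
  rw [stdNormal_eq, gammaCDF_eq hα0 hx0]
  have hS := sqrt2pi_pos
  have hΓ : (0:ℝ) < Real.Gamma α := Real.Gamma_pos_of_pos hα0
  have hderiv : ∀ s ∈ Set.Ioi b, HasDerivWithinAt (fun s : ℝ => 2*α + s^2) (2*s) (Set.Ioi b) s := by
    intro s _
    have h : HasDerivAt (fun s : ℝ => 2*α + s^2) (2*s) s := by
      simpa using ((hasDerivAt_pow 2 s).const_add (2*α))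
    exact h.hasDerivWithinAt
  have hinj : Set.InjOn (fun s : ℝ => 2*α + s^2) (Set.Ioi b) := by
    intro s hs t ht hst
    simp only [Set.mem_Ioi] at hs ht
    simp only at hst
    have h1 : s^2 = t^2 := by linarith
    have h2 : (s - t) * (s + t) = 0 := by ring_nf; linarith [h1]
    rcases mul_eq_zero.1 h2 with h | h
    · linarith
    · linarith
  have himg : (fun s : ℝ => 2*α + s^2) '' (Set.Ioi b) = Set.Ioi (2*α + b^2) := by
    ext y
    simp only [Set.mem_image, Set.mem_Ioi]
    constructor
    · rintro ⟨s, hs, rfl⟩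
      nlinarith
    · intro hy
      refine ⟨Real.sqrt (y - 2*α), ?_, ?_⟩
      · have h1 : b^2 < y - 2*α := by linarith
        calc b = Real.sqrt (b^2) := (Real.sqrt_sq hb).symm
          _ < Real.sqrt (y - 2*α) := Real.sqrt_lt_sqrt (sq_nonneg b) h1
      · have h2 : (0:ℝ) ≤ y - 2*α := by nlinarith [sq_nonneg b]
        rw [Real.sq_sqrt h2]
        ring
  have hCoV := MeasureTheory.integral_image_eq_integral_abs_deriv_smul measurableSet_Ioi
    hderiv hinj (fun t => t ^ (α-1) * Real.exp (-t))
  rw [himg] at hCoV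
  have hint_img : MeasureTheory.IntegrableOn (fun t : ℝ => t ^ (α-1) * Real.exp (-t))
      (Set.Ioi (2*α + b^2)) :=
    gamma_integrand_integrableOn hα0 (Set.Ioi_subset_Ioi (by positivity))
  have hint1 : MeasureTheory.IntegrableOn
      (fun s : ℝ => |2*s| • ((2*α + s^2) ^ (α-1) * Real.exp (-(2*α + s^2)))) (Set.Ioi b) := by
    have h := (MeasureTheory.integrableOn_image_iff_integrableOn_abs_deriv_smul measurableSet_Ioi
      hderiv hinj (fun t => t ^ (α-1) * Real.exp (-t))).1
    rw [himg] at h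
    exact h hint_img
  have hint2 : MeasureTheory.IntegrableOn
      (fun s : ℝ => Real.Gamma α * (Real.sqrt (2*Real.pi))⁻¹ * Real.exp (-s^2/2)) (Set.Ioi b) :=
    (gauss_integrable.const_mul (Real.Gamma α * (Real.sqrt (2*Real.pi))⁻¹)).integrableOn
  have hmono : (∫ s in Set.Ioi b, |2*s| • ((2*α + s^2) ^ (α-1) * Real.exp (-(2*α + s^2))))
      ≤ ∫ s in Set.Ioi b, Real.Gamma α * (Real.sqrt (2*Real.pi))⁻¹ * Real.exp (-s^2/2) := by
    apply MeasureTheory.setIntegral_mono_on hint1 hint2 measurableSet_Ioi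
    intro s hs
    simp only [Set.mem_Ioi] at hs
    have hs0 : (0:ℝ) ≤ s := le_trans hb hs.le
    rw [smul_eq_mul, abs_of_nonneg (by linarith : (0:ℝ) ≤ 2*s)]
    exact pointwise hα hs0
  have hconst : (∫ s in Set.Ioi b, Real.Gamma α * (Real.sqrt (2*Real.pi))⁻¹ * Real.exp (-s^2/2))
      = Real.Gamma α * (Real.sqrt (2*Real.pi))⁻¹ * ∫ s in Set.Ioi b, Real.exp (-s^2/2) :=
    MeasureTheory.integral_const_mul _ _
  have main : (Real.Gamma α)⁻¹ * (∫ t in Set.Ioi (2*α + b^2), t ^ (α-1) * Real.exp (-t))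
      ≤ (Real.sqrt (2*Real.pi))⁻¹ * ∫ t in Set.Ioi b, Real.exp (-t^2/2) := by
    rw [hCoV]
    calc (Real.Gamma α)⁻¹ * ∫ s in Set.Ioi b, |2*s| • ((2*α + s^2) ^ (α-1) * Real.exp (-(2*α + s^2)))
        ≤ (Real.Gamma α)⁻¹ * ∫ s in Set.Ioi b, Real.Gamma α * (Real.sqrt (2*Real.pi))⁻¹ * Real.exp (-s^2/2) :=
          mul_le_mul_of_nonneg_left hmono (inv_nonneg.2 hΓ.le)
      _ = (Real.sqrt (2*Real.pi))⁻¹ * ∫ t in Set.Ioi b, Real.exp (-t^2/2) := by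
          rw [hconst, ← mul_assoc, ← mul_assoc, inv_mul_cancel₀ (ne_of_gt hΓ), one_mul]
  linarith [main]

end GammaQuantile

/-- For every `α > 3` and `b ∈ ℝ`, if `γ ≥ 0` satisfies `F_α(γ) = Φ(b)`,
then `γ ≤ 2α + b²`. -/
theorem gamma_quantile_le (α b γ : ℝ) (hα : 3 < α) (hγ : 0 ≤ γ)
    (h : gammaCDF α γ = stdNormalCDF b) :
    γ ≤ 2 * α + b ^ 2 := by
  by_contra hcon
  push_neg at hcon
  have hα0 : (0:ℝ) < α := by linarith
  have hx0 : (0:ℝ) ≤ 2*α + b^2 := by positivity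
  have hΓ : (0:ℝ) < Real.Gamma α := Real.Gamma_pos_of_pos hα0
  have hmono : stdNormalCDF b ≤ stdNormalCDF |b| := by
    unfold stdNormalCDF
    apply mul_le_mul_of_nonneg_left _ (inv_nonneg.2 GammaQuantile.sqrt2pi_pos.le)
    apply MeasureTheory.setIntegral_mono_set GammaQuantile.gauss_integrable.integrableOn
    · exact Filter.Eventually.of_forall (fun x => (Real.exp_pos _).le)
    · exact HasSubset.Subset.eventuallyLE (Set.Iic_subset_Iic.2 (le_abs_self b))
  have hcomp := GammaQuantile.key_comparison hα.le (abs_nonneg b)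
  rw [sq_abs] at hcomp
  have hsub2 : Set.Ioc (2*α + b^2) γ ⊆ Set.Ioi 0 := by
    intro t ht
    have : (0:ℝ) < 2*α + b^2 := by positivity
    exact lt_trans this ht.1
  have hsplit : gammaCDF α γ = gammaCDF α (2*α + b^2)
      + (Real.Gamma α)⁻¹ * ∫ t in Set.Ioc (2*α + b^2) γ, t ^ (α-1) * Real.exp (-t) := by
    unfold gammaCDF
    rw [← Set.Ioc_union_Ioc_eq_Ioc hx0 hcon.le,
      MeasureTheory.setIntegral_union (by rw [Set.Ioc_disjoint_Ioc]; exact inf_le_left.trans le_sup_right)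
        measurableSet_Ioc
        (GammaQuantile.gamma_integrand_integrableOn hα0 Set.Ioc_subset_Ioi_self)
        (GammaQuantile.gamma_integrand_integrableOn hα0 hsub2),
      mul_add]
  have hposint : 0 < (Real.Gamma α)⁻¹ * ∫ t in Set.Ioc (2*α + b^2) γ, t ^ (α-1) * Real.exp (-t) := by
    apply mul_pos (inv_pos.2 hΓ)
    have hx0pos : (0:ℝ) < 2*α + b^2 := by positivity
    have hc : ∀ t ∈ Set.Ioc (2*α + b^2) γ, (2*α + b^2) ^ (α-1) * Real.exp (-γ) ≤ t ^ (α-1) * Real.exp (-t) := by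
      intro t ht
      have h1 : (2*α + b^2) ^ (α-1) ≤ t ^ (α-1) :=
        Real.rpow_le_rpow hx0 ht.1.le (by linarith)
      have h2 : Real.exp (-γ) ≤ Real.exp (-t) := Real.exp_le_exp.2 (by linarith [ht.2])
      exact mul_le_mul h1 h2 (Real.exp_pos _).le (Real.rpow_nonneg (by linarith [ht.1, hx0pos]) _)
    have hlb := MeasureTheory.setIntegral_ge_of_const_le measurableSet_Ioc
      (by rw [Real.volume_Ioc]; exact ENNReal.ofReal_ne_top) hc
      (GammaQuantile.gamma_integrand_integrableOn hα0 hsub2)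
    have hvol : (volume (Set.Ioc (2*α + b^2) γ)).toReal = γ - (2*α + b^2) := by
      rw [Real.volume_Ioc, ENNReal.toReal_ofReal (by linarith)]
    rw [measureReal_def, hvol, smul_eq_mul] at hlb
    have : (0:ℝ) < (2*α + b^2) ^ (α-1) * Real.exp (-γ) * (γ - (2*α + b^2)) := by
      apply mul_pos (mul_pos (Real.rpow_pos_of_pos hx0pos _) (Real.exp_pos _))
      linarith
    linarith
  linarith [hmono, hcomp, hsplit, hposint, h]
end

section
/- For every real α > 3, one has F_α(2α) > F_3(6) = 1 − 25 e^{−6}; equivalently, P_α := F_α(2α) − 1/2 > 1/2 − 25 e^{−6} ≈ 0.438 for all α > 3. -/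
set_option maxHeartbeats 1000000

namespace GammaCDFAux

open Real MeasureTheory Set

/-! ### Derivative and FTC helpers -/

lemma hd_quad (x : ℝ) : HasDerivAt (fun s : ℝ => s^2 + 2*s + 2) (2*x + 2) x := by
  have h := ((hasDerivAt_pow 2 x).add ((hasDerivAt_id x).const_mul 2)).add_const 2
  refine h.congr_deriv ?_
  simp; try ring

lemma hd_cubic (x : ℝ) : HasDerivAt (fun s : ℝ => s^3 + 3*s^2 + 6*s + 6) (3*x^2 + 6*x + 6) x := by
  have h := (((hasDerivAt_pow 3 x).add ((hasDerivAt_pow 2 x).const_mul 3)).add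
      ((hasDerivAt_id x).const_mul 6)).add_const 6
  refine h.congr_deriv ?_
  simp; try ring

lemma hd_exp_neg (x : ℝ) : HasDerivAt (fun s : ℝ => Real.exp (-s)) (-Real.exp (-x)) x := by
  simpa using (hasDerivAt_neg x).exp

lemma hd_line (m k x : ℝ) :
    HasDerivAt (fun s : ℝ => -((m*(s^3+3*s^2+6*s+6) + k*(s^2+2*s+2)) * Real.exp (-s)))
      (x^2 * Real.exp (-x) * (m*x + k)) x := by
  have h := ((((hd_cubic x).const_mul m).add ((hd_quad x).const_mul k)).mul (hd_exp_neg x)).neg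
  refine h.congr_deriv ?_
  simp only [Pi.add_apply]; ring

lemma integral_Ioc_line (m k a b : ℝ) (hab : a ≤ b) :
    ∫ s in Ioc a b, s^2 * Real.exp (-s) * (m*s + k)
    = (m*(a^3+3*a^2+6*a+6) + k*(a^2+2*a+2)) * Real.exp (-a)
      - (m*(b^3+3*b^2+6*b+6) + k*(b^2+2*b+2)) * Real.exp (-b) := by
  rw [← intervalIntegral.integral_of_le hab]
  rw [intervalIntegral.integral_eq_sub_of_hasDerivAt (fun x _ => hd_line m k x)
    (Continuous.intervalIntegrable (by continuity) a b)]
  ring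

lemma integral_Ioc_sq (a b : ℝ) (hab : a ≤ b) :
    ∫ s in Ioc a b, s^2 * Real.exp (-s)
    = (a^2+2*a+2) * Real.exp (-a) - (b^2+2*b+2) * Real.exp (-b) := by
  have h := integral_Ioc_line 0 1 a b hab
  simp only [zero_mul, one_mul, zero_add] at h
  rw [← h]
  congr 1; ext s; ring

lemma hd_poly0 (q x : ℝ) :
    HasDerivAt (fun s : ℝ => q*s^3/3 - s^2/2 - s^4/12) (q*x^2 - x - x^3/3) x := by
  have h := ((((hasDerivAt_pow 3 x).const_mul q).div_const 3).sub
      ((hasDerivAt_pow 2 x).div_const 2)).sub ((hasDerivAt_pow 4 x).div_const 12)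
  refine h.congr_deriv ?_
  simp; try ring

lemma integral_Ioc_poly0 (q : ℝ) :
    ∫ s in Ioc (0:ℝ) 1, (q*s^2 - s - s^3/3) = q/3 - 1/2 - 1/12 := by
  rw [← intervalIntegral.integral_of_le (by norm_num : (0:ℝ) ≤ 1)]
  rw [intervalIntegral.integral_eq_sub_of_hasDerivAt (fun x _ => hd_poly0 q x)
    (Continuous.intervalIntegrable (by continuity) 0 1)]
  norm_num

/-! ### Numeric bounds -/

lemma exp2_bounds : 0.13533528 < Real.exp (-2) ∧ Real.exp (-2) < 0.13533529 := by
  have h : Real.exp (-2) = Real.exp (-1) * Real.exp (-1) := by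
    rw [← Real.exp_add]; norm_num
  have h1 := Real.exp_neg_one_gt_d9
  have h2 := Real.exp_neg_one_lt_d9
  constructor <;> nlinarith

lemma exp4_bounds : 0.0183156 < Real.exp (-4) ∧ Real.exp (-4) < 0.0183157 := by
  have h : Real.exp (-4) = Real.exp (-2) * Real.exp (-2) := by
    rw [← Real.exp_add]; norm_num
  obtain ⟨h1, h2⟩ := exp2_bounds
  constructor <;> nlinarith

lemma exp6_bounds : 0.0024787 < Real.exp (-6) ∧ Real.exp (-6) < 0.0024788 := by
  have h : Real.exp (-6) = Real.exp (-2) * Real.exp (-4) := by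
    rw [← Real.exp_add]; norm_num
  obtain ⟨h1, h2⟩ := exp2_bounds
  obtain ⟨h3, h4⟩ := exp4_bounds
  constructor <;> nlinarith

lemma exp1_bounds : 0.36787944 < Real.exp (-1) ∧ Real.exp (-1) < 0.36787945 := by
  constructor
  · linarith [Real.exp_neg_one_gt_d9]
  · linarith [Real.exp_neg_one_lt_d9]

lemma log_three_lt : Real.log 3 < 1.0987 := by
  rw [Real.log_lt_iff_lt_exp (by norm_num)]
  have h : Real.exp 1.0987 = Real.exp 1 * Real.exp 0.0987 := by
    rw [← Real.exp_add]; norm_num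
  have hb := Real.exp_bound (x := 0.0987) (by rw [abs_of_nonneg] <;> norm_num) (n := 4) (by norm_num)
  have hs : (∑ m ∈ Finset.range 4, (0.0987:ℝ) ^ m / m.factorial)
      = 1 + 0.0987 + 0.0987^2/2 + 0.0987^3/6 := by
    norm_num [Finset.sum_range_succ, Nat.factorial]
  rw [hs] at hb
  have herr : |(0.0987:ℝ)| ^ 4 * ((Nat.succ 4) / ((Nat.factorial 4 : ℝ) * 4)) ≤ 0.000005 := by
    rw [abs_of_nonneg (by norm_num : (0:ℝ) ≤ 0.0987)]
    try norm_num [Nat.factorial]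
  have hlow : Real.exp 0.0987 ≥ 1.1037260 := by
    have h6 := (abs_sub_le_iff.1 hb).2
    nlinarith
  have he1 := Real.exp_one_gt_d9
  rw [h]
  nlinarith

lemma log_three_gt : 1.0985 < Real.log 3 := by
  rw [Real.lt_log_iff_exp_lt (by norm_num)]
  have h : Real.exp 1.0985 = Real.exp 1 * Real.exp 0.0985 := by
    rw [← Real.exp_add]; norm_num
  have hb := Real.exp_bound (x := 0.0985) (by rw [abs_of_nonneg] <;> norm_num) (n := 4) (by norm_num)
  have hs : (∑ m ∈ Finset.range 4, (0.0985:ℝ) ^ m / m.factorial)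
      = 1 + 0.0985 + 0.0985^2/2 + 0.0985^3/6 := by
    norm_num [Finset.sum_range_succ, Nat.factorial]
  rw [hs] at hb
  have herr : |(0.0985:ℝ)| ^ 4 * ((Nat.succ 4) / ((Nat.factorial 4 : ℝ) * 4)) ≤ 0.000005 := by
    rw [abs_of_nonneg (by norm_num : (0:ℝ) ≤ 0.0985)]
    try norm_num [Nat.factorial]
  have hhi : Real.exp 0.0985 ≤ 1.1035155 := by
    have h6 := (abs_sub_le_iff.1 hb).1
    nlinarith
  have he1 := Real.exp_one_lt_d9
  have he0 : (0:ℝ) < Real.exp 0.0985 := Real.exp_pos _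
  rw [h]
  nlinarith

lemma log_six_eq : Real.log 6 = Real.log 2 + Real.log 3 := by
  rw [show (6:ℝ) = 2 * 3 by norm_num, Real.log_mul (by norm_num) (by norm_num)]

lemma log_six_lt : Real.log 6 < 1.7918472 := by
  have := Real.log_two_lt_d9
  have := log_three_lt
  rw [log_six_eq]; linarith

lemma log_six_gt : 1.7916471 < Real.log 6 := by
  have := Real.log_two_gt_d9
  have := log_three_gt
  rw [log_six_eq]; linarith

lemma log_four_gt : 1.3862942 < Real.log 4 := by
  have h4 : Real.log 4 = 2 * Real.log 2 := by
    rw [show (4:ℝ) = 2^2 by norm_num, Real.log_pow]; norm_num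
  have := Real.log_two_gt_d9
  rw [h4]; linarith

/-! ### Chord lemma for `log` -/

lemma log_ge_line {a b m k s : ℝ} (ha : 0 < a) (hs : s ∈ Icc a b)
    (hA : m*a + k ≤ Real.log a) (hB : m*b + k ≤ Real.log b) : m*s + k ≤ Real.log s := by
  obtain ⟨h1, h2⟩ := hs
  rcases eq_or_lt_of_le (h1.trans h2) with hab | hab
  · have : s = a := le_antisymm (hab ▸ h2) h1
    rw [this]; exact hA
  · have hba : 0 < b - a := by linarith
    set l1 := (b - s)/(b - a) with hl1
    set l2 := (s - a)/(b - a) with hl2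
    have hl1n : 0 ≤ l1 := div_nonneg (by linarith) hba.le
    have hl2n : 0 ≤ l2 := div_nonneg (by linarith) hba.le
    have hsum : l1 + l2 = 1 := by rw [hl1, hl2, ← add_div]; field_simp; ring
    have hcomb : l1 • a + l2 • b = s := by
      simp only [smul_eq_mul, hl1, hl2]; field_simp; ring
    have hconc := strictConcaveOn_log_Ioi.concaveOn.2 (mem_Ioi.2 ha)
      (mem_Ioi.2 (lt_of_lt_of_le ha (h1.trans h2))) hl1n hl2n hsum
    rw [hcomb] at hconc
    have hle : l1 * (m*a+k) + l2 * (m*b+k) ≤ l1 * Real.log a + l2 * Real.log b :=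
      add_le_add (mul_le_mul_of_nonneg_left hA hl1n) (mul_le_mul_of_nonneg_left hB hl2n)
    have heq : l1 * (m*a+k) + l2 * (m*b+k) = m*s+k := by
      rw [← hcomb]; simp only [smul_eq_mul, hl1, hl2]; field_simp; ring
    simp only [smul_eq_mul] at hconc
    linarith

/-! ### Integrability -/

lemma intSqExp : IntegrableOn (fun s : ℝ => s^2 * Real.exp (-s)) (Ioi 0) := by
  have h := Real.GammaIntegral_convergent (by norm_num : (0:ℝ) < 3)
  apply h.congr_fun _ measurableSet_Ioi
  intro x hx
  show Real.exp (-x) * x ^ ((3:ℝ)-1) = x^2 * Real.exp (-x)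
  rw [show ((3:ℝ)-1) = ((2:ℕ):ℝ) by norm_num, Real.rpow_natCast]
  ring

lemma intGammaInt {α : ℝ} (hα : 0 < α) :
    IntegrableOn (fun t : ℝ => t ^ (α-1) * Real.exp (-t)) (Ioi 0) := by
  exact (Real.GammaIntegral_convergent hα).congr_fun (fun x _ => mul_comm _ _) measurableSet_Ioi

lemma intG {α : ℝ} (hα : 0 < α) :
    IntegrableOn (fun s : ℝ => s ^ (α-1) * Real.exp (-(α/3) * s)) (Ioi 0) := by
  have h := integrableOn_rpow_mul_exp_neg_mul_rpow (p := 1) (s := α - 1) (b := α/3)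
    (by linarith) zero_lt_one (by linarith)
  apply h.congr_fun _ measurableSet_Ioi
  intro x _
  show x ^ (α-1) * Real.exp (-(α/3) * x ^ (1:ℝ)) = x ^ (α-1) * Real.exp (-(α/3) * x)
  rw [Real.rpow_one]

lemma intLogPart : IntegrableOn (fun s : ℝ => s^2 * Real.exp (-s) * Real.log s) (Ioc 0 6) := by
  have hmeas : AEStronglyMeasurable (fun s : ℝ => s^2 * Real.exp (-s) * Real.log s)
      (volume.restrict (Ioc (0:ℝ) 6)) := by
    apply Measurable.aestronglyMeasurable
    exact (((continuous_pow 2).mul (Real.continuous_exp.comp continuous_neg)).measurable).mul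
      Real.measurable_log
  apply Integrable.mono' (g := fun _ => (200:ℝ)) _ hmeas
  · rw [ae_restrict_iff' measurableSet_Ioc]
    apply ae_of_all
    intro s hs
    obtain ⟨hs0, hs6⟩ := hs
    have he : Real.exp (-s) ≤ 1 := Real.exp_le_one_iff.2 (by linarith)
    have hep : (0:ℝ) < Real.exp (-s) := Real.exp_pos _
    have habs : |s^2 * Real.exp (-s) * Real.log s| = s^2 * Real.exp (-s) * |Real.log s| := by
      rw [abs_mul, abs_mul, abs_of_nonneg (sq_nonneg s), abs_of_nonneg hep.le]
    rw [Real.norm_eq_abs, habs]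
    rcases le_or_gt s 1 with hs1 | hs1
    · have hlog : Real.log (1/s) ≤ 1/s - 1 := Real.log_le_sub_one_of_pos (by positivity)
      rw [one_div, Real.log_inv] at hlog
      have habs2 : |Real.log s| = -Real.log s := abs_of_nonpos (Real.log_nonpos hs0.le hs1)
      rw [habs2]
      have hnn : 0 ≤ -Real.log s := by rw [← habs2]; exact abs_nonneg _
      have step1 : s^2 * Real.exp (-s) * -Real.log s ≤ s^2 * -Real.log s := by
        nlinarith [mul_nonneg (mul_nonneg (sq_nonneg s) hnn) (sub_nonneg.2 he)]
      have hid : s^2 * (s⁻¹ - 1) = s - s^2 := by field_simp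
      have step2 : s^2 * -Real.log s ≤ s - s^2 := by
        rw [← hid]; exact mul_le_mul_of_nonneg_left hlog (sq_nonneg s)
      nlinarith [sq_nonneg s]
    · have hlog : Real.log s ≤ s - 1 := Real.log_le_sub_one_of_pos (by linarith)
      have habs2 : |Real.log s| = Real.log s := abs_of_nonneg (Real.log_nonneg hs1.le)
      rw [habs2]
      have hlognn : 0 ≤ Real.log s := Real.log_nonneg hs1.le
      have step1 : s^2 * Real.exp (-s) * Real.log s ≤ s^2 * Real.log s := by
        nlinarith [mul_nonneg (mul_nonneg (sq_nonneg s) hlognn) (sub_nonneg.2 he)]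
      have step2 : s^2 * Real.log s ≤ s^2 * (s - 1) :=
        mul_le_mul_of_nonneg_left hlog (sq_nonneg s)
      nlinarith [sq_nonneg s, sq_nonneg (s - 6)]
  · exact integrableOn_const measure_Ioc_lt_top.ne

lemma intPhiPart : IntegrableOn
    (fun s : ℝ => s^2 * Real.exp (-s) * (Real.log s - s/3 + 2 - Real.log 6)) (Ioc 0 6) := by
  have heq : (fun s : ℝ => s^2 * Real.exp (-s) * (Real.log s - s/3 + 2 - Real.log 6))
      = (fun s : ℝ => s^2 * Real.exp (-s) * Real.log s
          + s^2 * Real.exp (-s) * (2 - Real.log 6 - s/3)) := by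
    funext s; ring
  rw [heq]
  apply Integrable.add intLogPart
  apply Continuous.integrableOn_Ioc
  continuity

lemma piece_bound {a b m k : ℝ} (ha : 0 < a) (hab : a ≤ b) (hb6 : b ≤ 6)
    (hA : m*a + k ≤ Real.log a) (hB : m*b + k ≤ Real.log b) :
    ((m - 1/3)*(a^3+3*a^2+6*a+6) + (k + 0.2081528)*(a^2+2*a+2)) * Real.exp (-a)
      - ((m - 1/3)*(b^3+3*b^2+6*b+6) + (k + 0.2081528)*(b^2+2*b+2)) * Real.exp (-b)
    ≤ ∫ s in Ioc a b, s^2 * Real.exp (-s) * (Real.log s - s/3 + 2 - Real.log 6) := by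
  rw [← integral_Ioc_line (m - 1/3) (k + 0.2081528) a b hab]
  apply setIntegral_mono_on (Continuous.integrableOn_Ioc (by fun_prop))
    (intPhiPart.mono_set (Ioc_subset_Ioc ha.le hb6)) measurableSet_Ioc
  intro s hs
  obtain ⟨hs1, hs2⟩ := hs
  have hlog := log_ge_line ha ⟨hs1.le, hs2⟩ hA hB
  have hl6 := log_six_lt
  have hW : 0 ≤ s^2 * Real.exp (-s) := mul_nonneg (sq_nonneg s) (Real.exp_pos _).le
  show s^2 * Real.exp (-s) * ((m - 1/3)*s + (k + 0.2081528))
      ≤ s^2 * Real.exp (-s) * (Real.log s - s/3 + 2 - Real.log 6)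
  apply mul_le_mul_of_nonneg_left _ hW
  linarith

end GammaCDFAux

open Real MeasureTheory Set GammaCDFAux

/-- For every `α > 3`, `F_α(2α) > F_3(6) = 1 − 25 e^{−6}`. -/
theorem gammaCDF_two_alpha_gt :
    gammaCDF 3 6 = 1 - 25 * Real.exp (-6) ∧
    ∀ α : ℝ, 3 < α → gammaCDF α (2 * α) > gammaCDF 3 6 := by
  have gamma3 : Real.Gamma 3 = 2 := by
    rw [show (3:ℝ) = (2:ℕ) + 1 by norm_num, Real.Gamma_nat_eq_factorial]
    norm_num
  have part1 : gammaCDF 3 6 = 1 - 25 * Real.exp (-6) := by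
    unfold gammaCDF
    rw [gamma3]
    have h1 : ∫ t in Set.Ioc (0:ℝ) 6, t ^ ((3:ℝ) - 1) * Real.exp (-t)
        = ∫ t in Set.Ioc (0:ℝ) 6, t^2 * Real.exp (-t) := by
      apply setIntegral_congr_fun measurableSet_Ioc
      intro t _
      show t ^ ((3:ℝ)-1) * Real.exp (-t) = t^2 * Real.exp (-t)
      rw [show ((3:ℝ)-1) = ((2:ℕ):ℝ) by norm_num, Real.rpow_natCast]
    rw [h1, integral_Ioc_sq 0 6 (by norm_num)]
    norm_num [Real.exp_zero]
    ring
  refine ⟨part1, fun α hα => ?_⟩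
  rw [part1]
  -- setup
  have hα0 : (0:ℝ) < α := by linarith
  have hl : (0:ℝ) < α/3 := by linarith
  have hβ : (0:ℝ) < α - 3 := by linarith
  have hGint : IntegrableOn (fun s : ℝ => s ^ (α-1) * Real.exp (-(α/3) * s)) (Ioi 0) := intG hα0
  have hFint : IntegrableOn (fun t : ℝ => t ^ (α-1) * Real.exp (-t)) (Ioi 0) := intGammaInt hα0
  have hGamma : Real.Gamma α = ∫ t in Ioi 0, t ^ (α-1) * Real.exp (-t) := by
    rw [Real.Gamma_eq_integral hα0]
    exact setIntegral_congr_fun measurableSet_Ioi (fun x _ => mul_comm _ _)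
  have hGammaPos : 0 < Real.Gamma α := Real.Gamma_pos_of_pos hα0
  have hD : (0:ℝ) < (α/3) * (α/3) ^ (α-1) := mul_pos hl (Real.rpow_pos_of_pos hl _)
  -- substitution
  have hsub : ∀ a : ℝ, 0 ≤ a →
      (∫ t in Ioi ((α/3)*a), t ^ (α-1) * Real.exp (-t))
        = ((α/3) * (α/3) ^ (α-1)) * ∫ s in Ioi a, s ^ (α-1) * Real.exp (-(α/3) * s) := by
    intro a ha
    have h := MeasureTheory.integral_comp_mul_left_Ioi
      (fun t => t ^ (α-1) * Real.exp (-t)) a hl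
    have h2 : (∫ s in Ioi a, ((α/3)*s) ^ (α-1) * Real.exp (-((α/3)*s)))
        = (α/3) ^ (α-1) * ∫ s in Ioi a, s ^ (α-1) * Real.exp (-(α/3) * s) := by
      rw [← MeasureTheory.integral_const_mul]
      apply setIntegral_congr_fun measurableSet_Ioi
      intro s hs
      have hs0 : 0 < s := lt_of_le_of_lt ha hs
      show ((α/3)*s) ^ (α-1) * Real.exp (-((α/3)*s))
          = (α/3) ^ (α-1) * (s ^ (α-1) * Real.exp (-(α/3) * s))
      rw [Real.mul_rpow hl.le hs0.le, neg_mul]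
      ring
    rw [smul_eq_mul] at h
    rw [show (fun s => ((α/3)*s) ^ (α-1) * Real.exp (-((α/3)*s)))
      = fun s => (fun t => t ^ (α-1) * Real.exp (-t)) ((α/3)*s) from rfl] at h2
    rw [h2] at h
    rw [inv_mul_eq_div, eq_div_iff hl.ne'] at h
    rw [← h]; ring
  -- the three main integrals
  have hsplitG : (∫ s in Ioi (0:ℝ), s ^ (α-1) * Real.exp (-(α/3) * s))
      = (∫ s in Ioc (0:ℝ) 6, s ^ (α-1) * Real.exp (-(α/3) * s))
        + ∫ s in Ioi (6:ℝ), s ^ (α-1) * Real.exp (-(α/3) * s) := by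
    rw [← Ioc_union_Ioi_eq_Ioi (by norm_num : (0:ℝ) ≤ 6),
      setIntegral_union Ioc_disjoint_Ioi_same measurableSet_Ioi
        (hGint.mono_set Ioc_subset_Ioi_self)
        (hGint.mono_set (Ioi_subset_Ioi (by norm_num)))]
  have hGamma2 : Real.Gamma α = ((α/3) * (α/3) ^ (α-1)) *
      ((∫ s in Ioc (0:ℝ) 6, s ^ (α-1) * Real.exp (-(α/3) * s))
        + ∫ s in Ioi (6:ℝ), s ^ (α-1) * Real.exp (-(α/3) * s)) := by
    have h0 := hsub 0 le_rfl
    rw [mul_zero] at h0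
    rw [hGamma, h0, hsplitG]
  have hIoiF : (∫ t in Ioi (2*α), t ^ (α-1) * Real.exp (-t))
      = ((α/3) * (α/3) ^ (α-1)) * ∫ s in Ioi (6:ℝ), s ^ (α-1) * Real.exp (-(α/3) * s) := by
    have h6 := hsub 6 (by norm_num)
    rw [show (α/3) * 6 = 2*α by ring] at h6
    exact h6
  have hIocF : (∫ t in Ioc (0:ℝ) (2*α), t ^ (α-1) * Real.exp (-t))
      = Real.Gamma α - ((α/3) * (α/3) ^ (α-1)) *
          ∫ s in Ioi (6:ℝ), s ^ (α-1) * Real.exp (-(α/3) * s) := by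
    have hsp : (∫ t in Ioi (0:ℝ), t ^ (α-1) * Real.exp (-t))
        = (∫ t in Ioc (0:ℝ) (2*α), t ^ (α-1) * Real.exp (-t))
          + ∫ t in Ioi (2*α), t ^ (α-1) * Real.exp (-t) := by
      rw [← Ioc_union_Ioi_eq_Ioi (by linarith : (0:ℝ) ≤ 2*α),
        setIntegral_union Ioc_disjoint_Ioi_same measurableSet_Ioi
          (hFint.mono_set Ioc_subset_Ioi_self)
          (hFint.mono_set (Ioi_subset_Ioi (by linarith)))]
    rw [← hGamma, hIoiF] at hsp
    linarith
  -- numeric reference integrals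
  have hSq06 : (∫ s in Ioc (0:ℝ) 6, s^2 * Real.exp (-s)) = 2 - 50 * Real.exp (-6) := by
    rw [integral_Ioc_sq 0 6 (by norm_num)]
    norm_num
  have hSqIoi0 : (∫ s in Ioi (0:ℝ), s^2 * Real.exp (-s)) = 2 := by
    have h := Real.Gamma_eq_integral (by norm_num : (0:ℝ) < 3)
    rw [gamma3] at h
    have h2 : (∫ s in Ioi (0:ℝ), s^2 * Real.exp (-s))
        = ∫ x in Ioi (0:ℝ), Real.exp (-x) * x ^ ((3:ℝ)-1) := by
      apply setIntegral_congr_fun measurableSet_Ioi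
      intro x _
      show x^2 * Real.exp (-x) = Real.exp (-x) * x ^ ((3:ℝ)-1)
      rw [show ((3:ℝ)-1) = ((2:ℕ):ℝ) by norm_num, Real.rpow_natCast]
      ring
    rw [h2, ← h]
  have hSqIoi6 : (∫ s in Ioi (6:ℝ), s^2 * Real.exp (-s)) = 50 * Real.exp (-6) := by
    have hsp : (∫ s in Ioi (0:ℝ), s^2*Real.exp (-s))
        = (∫ s in Ioc (0:ℝ) 6, s^2*Real.exp (-s)) + ∫ s in Ioi (6:ℝ), s^2*Real.exp (-s) := by
      rw [← Ioc_union_Ioi_eq_Ioi (by norm_num : (0:ℝ) ≤ 6),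
        setIntegral_union Ioc_disjoint_Ioi_same measurableSet_Ioi
          (intSqExp.mono_set Ioc_subset_Ioi_self)
          (intSqExp.mono_set (Ioi_subset_Ioi (by norm_num)))]
    rw [hSqIoi0, hSq06] at hsp
    linarith
  -- upper bound for the tail integral A
  have hEb : (0:ℝ) < Real.exp ((α-3) * (Real.log 6 - 2)) := Real.exp_pos _
  have hAle : (∫ s in Ioi (6:ℝ), s ^ (α-1) * Real.exp (-(α/3) * s))
      ≤ Real.exp ((α-3) * (Real.log 6 - 2)) * (50 * Real.exp (-6)) := by
    have hmono : (∫ s in Ioi (6:ℝ), s ^ (α-1) * Real.exp (-(α/3) * s))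
        ≤ ∫ s in Ioi (6:ℝ), Real.exp ((α-3) * (Real.log 6 - 2)) * (s^2 * Real.exp (-s)) := by
      apply setIntegral_mono_on (hGint.mono_set (Ioi_subset_Ioi (by norm_num)))
        ((intSqExp.mono_set (Ioi_subset_Ioi (by norm_num))).const_mul _) measurableSet_Ioi
      intro s hs
      have hs6 : (6:ℝ) < s := hs
      have hs0 : (0:ℝ) < s := by linarith
      have hGs : s ^ (α-1) * Real.exp (-(α/3) * s)
          = Real.exp (Real.log s * (α-1) + -(α/3) * s) := by
        rw [Real.rpow_def_of_pos hs0, ← Real.exp_add]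
      have hRs : Real.exp ((α-3) * (Real.log 6 - 2)) * (s^2 * Real.exp (-s))
          = Real.exp ((α-3) * (Real.log 6 - 2) + (Real.log s * 2 + -s)) := by
        rw [show s^2 = s ^ ((2:ℕ):ℝ) from (Real.rpow_natCast s 2).symm,
          Real.rpow_def_of_pos hs0, ← Real.exp_add, ← Real.exp_add]
        norm_num
      rw [hGs, hRs, Real.exp_le_exp]
      have hlog : Real.log s - Real.log 6 ≤ s/6 - 1 := by
        have hd : Real.log (s/6) ≤ s/6 - 1 := Real.log_le_sub_one_of_pos (by positivity)
        rwa [Real.log_div hs0.ne' (by norm_num)] at hd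
      have hkey : Real.log s - s/3 ≤ Real.log 6 - 2 := by linarith
      nlinarith [mul_le_mul_of_nonneg_left hkey hβ.le]
    calc (∫ s in Ioi (6:ℝ), s ^ (α-1) * Real.exp (-(α/3) * s)) ≤ _ := hmono
      _ = Real.exp ((α-3) * (Real.log 6 - 2)) * ∫ s in Ioi (6:ℝ), s^2 * Real.exp (-s) :=
          MeasureTheory.integral_const_mul _ _
      _ = Real.exp ((α-3) * (Real.log 6 - 2)) * (50 * Real.exp (-6)) := by rw [hSqIoi6]
  -- lower bound for C
  have hCge : Real.exp ((α-3) * (Real.log 6 - 2)) * ((2 - 50*Real.exp (-6))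
        + (α-3) * ∫ s in Ioc (0:ℝ) 6, s^2 * Real.exp (-s) * (Real.log s - s/3 + 2 - Real.log 6))
      ≤ ∫ s in Ioc (0:ℝ) 6, s ^ (α-1) * Real.exp (-(α/3) * s) := by
    have hmono : (∫ s in Ioc (0:ℝ) 6, Real.exp ((α-3) * (Real.log 6 - 2))
          * (s^2*Real.exp (-s)
            + (α-3) * (s^2*Real.exp (-s)*(Real.log s - s/3 + 2 - Real.log 6))))
        ≤ ∫ s in Ioc (0:ℝ) 6, s ^ (α-1) * Real.exp (-(α/3) * s) := by
      apply setIntegral_mono_on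
        (((intSqExp.mono_set Ioc_subset_Ioi_self).add (intPhiPart.const_mul (α-3))).const_mul _)
        (hGint.mono_set Ioc_subset_Ioi_self) measurableSet_Ioc
      intro s hs
      obtain ⟨hs0, hs6⟩ := hs
      have hGs : s ^ (α-1) * Real.exp (-(α/3) * s)
          = Real.exp (Real.log s * 2 + -s) * (Real.exp ((α-3) * (Real.log 6 - 2))
            * Real.exp ((α-3) * (Real.log s - s/3 + 2 - Real.log 6))) := by
        rw [Real.rpow_def_of_pos hs0, ← Real.exp_add, ← Real.exp_add, ← Real.exp_add]
        congr 1
        ring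
      have hW : s^2 * Real.exp (-s) = Real.exp (Real.log s * 2 + -s) := by
        rw [show s^2 = s ^ ((2:ℕ):ℝ) from (Real.rpow_natCast s 2).symm,
          Real.rpow_def_of_pos hs0, ← Real.exp_add]
        norm_num
      have h1e : 1 + (α-3)*(Real.log s - s/3 + 2 - Real.log 6)
          ≤ Real.exp ((α-3) * (Real.log s - s/3 + 2 - Real.log 6)) := by
        linarith [Real.add_one_le_exp ((α-3)*(Real.log s - s/3 + 2 - Real.log 6))]
      show Real.exp ((α-3) * (Real.log 6 - 2)) * (s^2*Real.exp (-s)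
            + (α-3) * (s^2*Real.exp (-s)*(Real.log s - s/3 + 2 - Real.log 6)))
          ≤ s ^ (α-1) * Real.exp (-(α/3) * s)
      rw [hGs, hW]
      nlinarith [mul_le_mul_of_nonneg_left h1e
        (mul_nonneg (Real.exp_pos (Real.log s * 2 + -s)).le hEb.le),
        Real.exp_pos (Real.log s * 2 + -s), hEb]
    have hval : (∫ s in Ioc (0:ℝ) 6, Real.exp ((α-3) * (Real.log 6 - 2))
          * (s^2*Real.exp (-s)
            + (α-3) * (s^2*Real.exp (-s)*(Real.log s - s/3 + 2 - Real.log 6))))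
        = Real.exp ((α-3) * (Real.log 6 - 2)) * ((2 - 50*Real.exp (-6))
          + (α-3) * ∫ s in Ioc (0:ℝ) 6, s^2 * Real.exp (-s)
              * (Real.log s - s/3 + 2 - Real.log 6)) := by
      rw [MeasureTheory.integral_const_mul,
        MeasureTheory.integral_add (intSqExp.mono_set Ioc_subset_Ioi_self)
          (intPhiPart.const_mul (α-3)),
        MeasureTheory.integral_const_mul, hSq06]
    rw [← hval]
    exact hmono
  -- positivity of K
  have hKpos : (0:ℝ) < ∫ s in Ioc (0:ℝ) 6,
      s^2 * Real.exp (-s) * (Real.log s - s/3 + 2 - Real.log 6) := by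
    have i01 := intPhiPart.mono_set (Ioc_subset_Ioc le_rfl (by norm_num : (1:ℝ) ≤ 6))
    have i12 := intPhiPart.mono_set (Ioc_subset_Ioc (by norm_num : (0:ℝ) ≤ 1) (by norm_num : (2:ℝ) ≤ 6))
    have i24 := intPhiPart.mono_set (Ioc_subset_Ioc (by norm_num : (0:ℝ) ≤ 2) (by norm_num : (4:ℝ) ≤ 6))
    have i46 := intPhiPart.mono_set (Ioc_subset_Ioc (by norm_num : (0:ℝ) ≤ 4) le_rfl)
    have i16 := intPhiPart.mono_set (Ioc_subset_Ioc (by norm_num : (0:ℝ) ≤ 1) le_rfl)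
    have i26 := intPhiPart.mono_set (Ioc_subset_Ioc (by norm_num : (0:ℝ) ≤ 2) le_rfl)
    have hs1 : (∫ s in Ioc (0:ℝ) 6, s^2 * Real.exp (-s) * (Real.log s - s/3 + 2 - Real.log 6))
        = (∫ s in Ioc (0:ℝ) 1, s^2 * Real.exp (-s) * (Real.log s - s/3 + 2 - Real.log 6))
          + ∫ s in Ioc (1:ℝ) 6, s^2 * Real.exp (-s) * (Real.log s - s/3 + 2 - Real.log 6) := by
      rw [← setIntegral_union (Ioc_disjoint_Ioc_of_le le_rfl) measurableSet_Ioc i01 i16,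
        Ioc_union_Ioc_eq_Ioc (by norm_num : (0:ℝ) ≤ 1) (by norm_num : (1:ℝ) ≤ 6)]
    have hs2 : (∫ s in Ioc (1:ℝ) 6, s^2 * Real.exp (-s) * (Real.log s - s/3 + 2 - Real.log 6))
        = (∫ s in Ioc (1:ℝ) 2, s^2 * Real.exp (-s) * (Real.log s - s/3 + 2 - Real.log 6))
          + ∫ s in Ioc (2:ℝ) 6, s^2 * Real.exp (-s) * (Real.log s - s/3 + 2 - Real.log 6) := by
      rw [← setIntegral_union (Ioc_disjoint_Ioc_of_le le_rfl) measurableSet_Ioc i12 i26,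
        Ioc_union_Ioc_eq_Ioc (by norm_num : (1:ℝ) ≤ 2) (by norm_num : (2:ℝ) ≤ 6)]
    have hs3 : (∫ s in Ioc (2:ℝ) 6, s^2 * Real.exp (-s) * (Real.log s - s/3 + 2 - Real.log 6))
        = (∫ s in Ioc (2:ℝ) 4, s^2 * Real.exp (-s) * (Real.log s - s/3 + 2 - Real.log 6))
          + ∫ s in Ioc (4:ℝ) 6, s^2 * Real.exp (-s) * (Real.log s - s/3 + 2 - Real.log 6) := by
      rw [← setIntegral_union (Ioc_disjoint_Ioc_of_le le_rfl) measurableSet_Ioc i24 i46,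
        Ioc_union_Ioc_eq_Ioc (by norm_num : (2:ℝ) ≤ 4) (by norm_num : (4:ℝ) ≤ 6)]
    -- piece (0,1]
    have hb0 : ((1.2081528:ℝ)/3 - 1/2 - 1/12)
        ≤ ∫ s in Ioc (0:ℝ) 1, s^2 * Real.exp (-s) * (Real.log s - s/3 + 2 - Real.log 6) := by
      rw [← integral_Ioc_poly0 1.2081528]
      apply setIntegral_mono_on (Continuous.integrableOn_Ioc (by fun_prop)) i01 measurableSet_Ioc
      intro s hs
      obtain ⟨hs0, hs1⟩ := hs
      show 1.2081528*s^2 - s - s^3/3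
          ≤ s^2 * Real.exp (-s) * (Real.log s - s/3 + 2 - Real.log 6)
      have hlog : 1 - s⁻¹ ≤ Real.log s := by
        have h := Real.log_le_sub_one_of_pos (show (0:ℝ) < s⁻¹ by positivity)
        rw [Real.log_inv] at h
        linarith
      have hlog2 : Real.log s ≤ s - 1 := Real.log_le_sub_one_of_pos hs0
      have hg0 : Real.log s - s/3 + 2 - Real.log 6 ≤ 0 := by
        have := log_six_gt
        linarith
      have he : Real.exp (-s) ≤ 1 := Real.exp_le_one_iff.2 (by linarith)
      have step1 : s^2 * (Real.log s - s/3 + 2 - Real.log 6)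
          ≤ s^2 * Real.exp (-s) * (Real.log s - s/3 + 2 - Real.log 6) := by
        nlinarith [mul_nonneg (sq_nonneg s)
          (mul_nonneg (sub_nonneg.2 he) (neg_nonneg.2 hg0))]
      have hsinv : s^2 * s⁻¹ = s := by
        rw [sq, mul_assoc, mul_inv_cancel₀ hs0.ne', mul_one]
      have step2 : 1.2081528*s^2 - s - s^3/3
          ≤ s^2 * (Real.log s - s/3 + 2 - Real.log 6) := by
        nlinarith [mul_le_mul_of_nonneg_left hlog (sq_nonneg s),
          mul_le_mul_of_nonneg_left log_six_lt.le (sq_nonneg s), hsinv]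
      linarith
    have hb1 := piece_bound (a := 1) (b := 2) (m := 0.6931) (k := -0.6931)
      (by norm_num) (by norm_num) (by norm_num)
      (by rw [Real.log_one]; norm_num)
      (by have := Real.log_two_gt_d9; norm_num; linarith)
    have hb2 := piece_bound (a := 2) (b := 4) (m := 0.3465) (k := 0.0001)
      (by norm_num) (by norm_num) (by norm_num)
      (by have := Real.log_two_gt_d9; norm_num; linarith)
      (by have := log_four_gt; norm_num; linarith)
    have hb3 := piece_bound (a := 4) (b := 6) (m := 0.2027) (k := 0.5754)
      (by norm_num) (by norm_num) (by norm_num)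
      (by have := log_four_gt; norm_num; linarith)
      (by have := log_six_gt; norm_num; linarith)
    obtain ⟨e1l, e1h⟩ := exp1_bounds
    obtain ⟨e2l, e2h⟩ := exp2_bounds
    obtain ⟨e4l, e4h⟩ := exp4_bounds
    obtain ⟨e6l, e6h⟩ := exp6_bounds
    rw [hs1, hs2, hs3]
    norm_num at hb1 hb2 hb3 ⊢
    nlinarith [hb0, hb1, hb2, hb3]
  -- conclude
  have hC0pos : (0:ℝ) < 2 - 50 * Real.exp (-6) := by
    obtain ⟨e6l, e6h⟩ := exp6_bounds
    nlinarith
  have hCpos : (0:ℝ) < ∫ s in Ioc (0:ℝ) 6, s ^ (α-1) * Real.exp (-(α/3) * s) := by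
    calc (0:ℝ) < Real.exp ((α-3) * (Real.log 6 - 2)) * ((2 - 50*Real.exp (-6))
          + (α-3) * ∫ s in Ioc (0:ℝ) 6, s^2 * Real.exp (-s)
            * (Real.log s - s/3 + 2 - Real.log 6)) := by
          apply mul_pos hEb
          nlinarith [mul_pos hβ hKpos]
      _ ≤ _ := hCge
  have hAnn : (0:ℝ) ≤ ∫ s in Ioi (6:ℝ), s ^ (α-1) * Real.exp (-(α/3) * s) := by
    apply setIntegral_nonneg measurableSet_Ioi
    intro s hs
    have hs0 : (0:ℝ) < s := lt_trans (by norm_num) hs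
    positivity
  have h25 : 25 * Real.exp (-6) < 1 := by
    obtain ⟨e6l, e6h⟩ := exp6_bounds
    nlinarith
  -- key strict inequality : A < 25 e^{-6} (C + A)
  have hmain : (∫ s in Ioi (6:ℝ), s ^ (α-1) * Real.exp (-(α/3) * s))
      < 25 * Real.exp (-6) * ((∫ s in Ioc (0:ℝ) 6, s ^ (α-1) * Real.exp (-(α/3) * s))
        + ∫ s in Ioi (6:ℝ), s ^ (α-1) * Real.exp (-(α/3) * s)) := by
    have h1 : (1 - 25 * Real.exp (-6)) * (∫ s in Ioi (6:ℝ), s ^ (α-1) * Real.exp (-(α/3) * s))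
        ≤ (1 - 25 * Real.exp (-6)) * (Real.exp ((α-3) * (Real.log 6 - 2)) * (50 * Real.exp (-6))) :=
      mul_le_mul_of_nonneg_left hAle (by linarith)
    have h2 : (1 - 25 * Real.exp (-6)) * (Real.exp ((α-3) * (Real.log 6 - 2)) * (50 * Real.exp (-6)))
        = 25 * Real.exp (-6) * (Real.exp ((α-3) * (Real.log 6 - 2)) * (2 - 50 * Real.exp (-6))) := by
      ring
    have h3 : 25 * Real.exp (-6) * (Real.exp ((α-3) * (Real.log 6 - 2)) * (2 - 50 * Real.exp (-6)))
        < 25 * Real.exp (-6) * (Real.exp ((α-3) * (Real.log 6 - 2)) * ((2 - 50*Real.exp (-6))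
          + (α-3) * ∫ s in Ioc (0:ℝ) 6, s^2 * Real.exp (-s)
            * (Real.log s - s/3 + 2 - Real.log 6))) := by
      have he6 : (0:ℝ) < Real.exp (-6) := Real.exp_pos _
      have hprod : (0:ℝ) < (α-3) * ∫ s in Ioc (0:ℝ) 6, s^2 * Real.exp (-s)
          * (Real.log s - s/3 + 2 - Real.log 6) := mul_pos hβ hKpos
      nlinarith [mul_pos (mul_pos (show (0:ℝ) < 25*Real.exp (-6) by positivity) hEb) hprod]
    have h4 : 25 * Real.exp (-6) * (Real.exp ((α-3) * (Real.log 6 - 2)) * ((2 - 50*Real.exp (-6))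
          + (α-3) * ∫ s in Ioc (0:ℝ) 6, s^2 * Real.exp (-s)
            * (Real.log s - s/3 + 2 - Real.log 6)))
        ≤ 25 * Real.exp (-6) * ∫ s in Ioc (0:ℝ) 6, s ^ (α-1) * Real.exp (-(α/3) * s) := by
      apply mul_le_mul_of_nonneg_left hCge (by positivity)
    nlinarith [h1, h3, h4]
  -- express the CDF and finish
  unfold gammaCDF
  rw [hIocF]
  have hBpos : (0:ℝ) < (∫ s in Ioc (0:ℝ) 6, s ^ (α-1) * Real.exp (-(α/3) * s))
      + ∫ s in Ioi (6:ℝ), s ^ (α-1) * Real.exp (-(α/3) * s) := by linarith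
  have habstract : ∀ x y d : ℝ, 0 < d → 0 < x + y →
      (d*(x+y))⁻¹ * (d*(x+y) - d*y) = 1 - y/(x+y) := by
    intro x y d hd hxy
    field_simp
  have hexpr : (Real.Gamma α)⁻¹ * (Real.Gamma α - ((α/3) * (α/3) ^ (α-1)) *
      ∫ s in Ioi (6:ℝ), s ^ (α-1) * Real.exp (-(α/3) * s))
      = 1 - (∫ s in Ioi (6:ℝ), s ^ (α-1) * Real.exp (-(α/3) * s))
          / ((∫ s in Ioc (0:ℝ) 6, s ^ (α-1) * Real.exp (-(α/3) * s))
            + ∫ s in Ioi (6:ℝ), s ^ (α-1) * Real.exp (-(α/3) * s)) := by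
    rw [hGamma2]
    exact habstract _ _ _ hD hBpos
  rw [hexpr]
  have hdiv : (∫ s in Ioi (6:ℝ), s ^ (α-1) * Real.exp (-(α/3) * s))
      / ((∫ s in Ioc (0:ℝ) 6, s ^ (α-1) * Real.exp (-(α/3) * s))
        + ∫ s in Ioi (6:ℝ), s ^ (α-1) * Real.exp (-(α/3) * s)) < 25 * Real.exp (-6) :=
    (div_lt_iff₀ hBpos).2 (by linarith [hmain])
  linarith
end

section
/- For every real α > 3, the quantity a_α := 2√(2π) e^{−2α} (2α)^{α−1} / Γ(α) satisfies a_α ≤ 36√(2π) e^{−6} (≈ 0.223679). -/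
open Set

private lemma convexOn_affine {s : Set ℝ} (hs : Convex ℝ s) (c d : ℝ) :
    ConvexOn ℝ s (fun t => c * t + d) := by
  refine ⟨hs, fun x _ y _ p q hp hq hpq => ?_⟩
  simp only [smul_eq_mul]
  have e1 : p * (c * x + d) + q * (c * y + d) = c * (p * x + q * y) + (p + q) * d := by ring
  rw [e1, hpq, one_mul]

/-- Chord lower bound for Gamma from log-convexity. -/
private lemma gamma_ge {p x : ℝ} (hp : 0 < p) (hx : p + 1 ≤ x) :
    Real.Gamma (p + 1) * p ^ (x - (p + 1)) ≤ Real.Gamma x := by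
  rcases eq_or_lt_of_le hx with h | h
  · rw [← h]; simp
  · have hΓp := Real.Gamma_pos_of_pos hp
    have hΓp1 := Real.Gamma_pos_of_pos (by linarith : (0:ℝ) < p + 1)
    have hΓx := Real.Gamma_pos_of_pos (by linarith : (0:ℝ) < x)
    have hs := Real.convexOn_log_Gamma.slope_mono_adjacent (Set.mem_Ioi.2 hp)
      (Set.mem_Ioi.2 (by linarith : (0:ℝ) < x)) (by linarith : p < p + 1) h
    have hd : 0 < x - (p + 1) := by linarith
    simp only [Function.comp_apply] at hs
    rw [show p + 1 - p = 1 by ring, div_one, Real.Gamma_add_one hp.ne',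
      Real.log_mul hp.ne' hΓp.ne', le_div_iff₀ hd] at hs
    have key1 : Real.log (Real.Gamma (p+1)) + Real.log p * (x - (p + 1))
        ≤ Real.log (Real.Gamma x) := by
      rw [Real.Gamma_add_one hp.ne', Real.log_mul hp.ne' hΓp.ne']
      linarith [hs]
    calc Real.Gamma (p + 1) * p ^ (x - (p + 1))
        = Real.exp (Real.log (Real.Gamma (p+1)) + Real.log p * (x - (p + 1))) := by
          rw [Real.exp_add, Real.exp_log hΓp1, Real.rpow_def_of_pos hp]
      _ ≤ Real.exp (Real.log (Real.Gamma x)) := Real.exp_le_exp.2 key1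
      _ = Real.Gamma x := Real.exp_log hΓx

/-- Convexity-based interpolation: the inequality at interval endpoints implies it inside. -/
private lemma chordUB {a b x A B : ℝ} (ha : 0 < a) (h1 : a ≤ x) (h2 : x ≤ b)
    (hA : 0 < A) (hB : 0 < B)
    (hga : Real.exp (6 - 2*a) * (2*a) ^ (a-1) ≤ A)
    (hgb : Real.exp (6 - 2*b) * (2*b) ^ (b-1) ≤ A * B ^ (b-a)) :
    Real.exp (6 - 2*x) * (2*x) ^ (x-1) ≤ A * B ^ (x-a) := by
  have hb : 0 < b := lt_of_lt_of_le ha (h1.trans h2)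
  have hx : 0 < x := lt_of_lt_of_le ha h1
  set c : ℝ := Real.log 2 - 2 - Real.log B with hc
  set d : ℝ := 6 - Real.log 2 - Real.log A + a * Real.log B with hd
  set E : ℝ → ℝ := fun t => (t * Real.log t + -Real.log t) + (c * t + d) with hE
  have hEconv : ConvexOn ℝ (Set.Ioi 0) E := by
    have hmul : ConvexOn ℝ (Set.Ioi 0) (fun t : ℝ => t * Real.log t) :=
      Real.convexOn_mul_log.subset (fun y hy => Set.mem_Ici.2 (le_of_lt (Set.mem_Ioi.1 hy))) (convex_Ioi 0)
    have hneg : ConvexOn ℝ (Set.Ioi 0) (fun t : ℝ => -Real.log t) :=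
      strictConcaveOn_log_Ioi.concaveOn.neg
    have haff : ConvexOn ℝ (Set.Ioi 0) (fun t : ℝ => c * t + d) :=
      convexOn_affine (convex_Ioi 0) c d
    exact (hmul.add hneg).add haff
  have hEval : ∀ t : ℝ, 0 < t →
      E t = (6 - 2*t) + (t-1) * Real.log (2*t) - (Real.log A + (t-a) * Real.log B) := by
    intro t ht
    rw [hE]; simp only
    rw [Real.log_mul two_ne_zero ht.ne', hc, hd]; ring
  have logle : ∀ t C : ℝ, 0 < t → 0 < C → Real.exp (6 - 2*t) * (2*t) ^ (t-1) ≤ C →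
      (6 - 2*t) + (t-1) * Real.log (2*t) ≤ Real.log C := by
    intro t C ht hC hle
    have h := Real.log_le_log (by positivity) hle
    rwa [Real.log_mul (Real.exp_pos _).ne' (by positivity), Real.log_exp,
      Real.log_rpow (by positivity)] at h
  have hEa : E a ≤ 0 := by
    rw [hEval a ha]
    have := logle a A ha hA hga
    linarith
  have hEb : E b ≤ 0 := by
    rw [hEval b hb]
    have h := logle b (A * B ^ (b-a)) hb (by positivity) hgb
    rw [Real.log_mul hA.ne' (by positivity), Real.log_rpow hB] at h
    linarith
  have hseg : x ∈ segment ℝ a b := by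
    rw [segment_eq_Icc (h1.trans h2)]; exact ⟨h1, h2⟩
  have hEx : E x ≤ 0 :=
    (hEconv.le_on_segment (Set.mem_Ioi.2 ha) (Set.mem_Ioi.2 hb) hseg).trans (max_le hEa hEb)
  rw [hEval x hx] at hEx
  calc Real.exp (6 - 2*x) * (2*x) ^ (x-1)
      = Real.exp ((6 - 2*x) + (x-1) * Real.log (2*x)) := by
        rw [Real.exp_add, Real.rpow_def_of_pos (by positivity), mul_comm (Real.log (2*x)) (x-1)]
    _ ≤ Real.exp (Real.log A + (x-a) * Real.log B) := Real.exp_le_exp.2 (by linarith)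
    _ = A * B ^ (x-a) := by
        rw [Real.exp_add, Real.exp_log hA, Real.rpow_def_of_pos hB, mul_comm (Real.log B) (x-a)]

/-- `Q(n)`: the endpoint inequality at `n+4`, shifted: for all `n`,
`exp(-2-2n) * (2n+8)^(n+3) ≤ 18 * (n+2)! * (n+2)`. -/
private lemma lemQ : ∀ n : ℕ, Real.exp (-2 - 2*(n:ℝ)) * (2*(n:ℝ)+8)^(n+3)
    ≤ 18 * ((Nat.factorial (n+2) : ℕ) : ℝ) * ((n:ℝ)+2) := by
  intro n
  induction n with
  | zero =>
      have he : (2.7182818283 : ℝ) < Real.exp 1 := Real.exp_one_gt_d9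
      have h2 : Real.exp (-2 : ℝ) * Real.exp 2 = 1 := by
        rw [← Real.exp_add]; norm_num
      have h2' : (7.2:ℝ) < Real.exp 2 := by
        have hsq : (2.7182818283:ℝ) * 2.7182818283 < Real.exp 1 * Real.exp 1 := by
          nlinarith [he, Real.exp_pos 1]
        rw [show (2:ℝ) = 1 + 1 by norm_num, Real.exp_add]
        nlinarith [hsq]
      norm_num [Nat.factorial]
      nlinarith [Real.exp_pos (-2 : ℝ), h2, h2']
  | succ n ih =>
      push_cast
      set x : ℝ := 1/((n:ℝ)+4) with hxdef
      have hx0 : 0 < x := by positivity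
      have hbase : (2*((n:ℝ)+1)+8) = (2*(n:ℝ)+8)*(1+x) := by
        rw [hxdef]; field_simp; ring
      have hexp1 : (1+x)^(n+3) ≤ Real.exp 1 := by
        have h1x : 1 + x ≤ Real.exp x := by linarith [Real.add_one_le_exp x]
        calc (1+x)^(n+3) ≤ (Real.exp x)^(n+3) := pow_le_pow_left₀ (by positivity) h1x _
          _ = Real.exp (((n+3 : ℕ):ℝ) * x) := (Real.exp_nat_mul x (n+3)).symm
          _ ≤ Real.exp 1 := by
              apply Real.exp_le_exp.2
              rw [hxdef, mul_one_div]
              apply (div_le_one (by positivity)).2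
              push_cast; linarith
      have e1 : Real.exp (-2 - 2*((n:ℝ)+1)) = Real.exp (-2 - 2*(n:ℝ)) * Real.exp (-2 : ℝ) := by
        rw [← Real.exp_add]; congr 1; ring
      have e2 : (2*((n:ℝ)+1)+8)^(n+1+3)
          = (2*(n:ℝ)+8)^(n+3) * ((1+x)^(n+3) * (2*((n:ℝ)+1)+8)) := by
        rw [show n+1+3 = (n+3)+1 by omega, pow_succ]
        nth_rewrite 1 [hbase]
        rw [mul_pow]; ring
      have hfpos : (0:ℝ) < ((Nat.factorial (n+2) : ℕ) : ℝ) := by positivity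
      have hn0 : (0:ℝ) ≤ (n:ℝ) := Nat.cast_nonneg n
      have hei : Real.exp (-2 : ℝ) * Real.exp 1 = Real.exp (-1 : ℝ) := by
        rw [← Real.exp_add]; norm_num
      have hei2 : Real.exp (-1 : ℝ) * Real.exp 1 = 1 := by
        rw [← Real.exp_add]; norm_num
      have he := Real.exp_one_gt_d9
      have hex : Real.exp (-1 : ℝ) ≤ 1/2.7 := by
        nlinarith [hei2, he, Real.exp_pos (-1 : ℝ)]
      have hkey2 : Real.exp (-1 : ℝ) * ((2*((n:ℝ)+1)+8) * ((n:ℝ)+2)) ≤ ((n:ℝ)+3)*((n:ℝ)+3) := by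
        have hq : (0:ℝ) ≤ (2*((n:ℝ)+1)+8) * ((n:ℝ)+2) := by positivity
        nlinarith [mul_le_mul_of_nonneg_right hex hq, hn0, mul_nonneg hn0 hn0]
      have hfact : ((Nat.factorial (n+1+2) : ℕ) : ℝ)
          = ((n:ℝ)+3) * ((Nat.factorial (n+2) : ℕ) : ℝ) := by
        rw [show n+1+2 = (n+2)+1 by omega, Nat.factorial_succ]
        push_cast; ring
      calc Real.exp (-2 - 2*((n:ℝ)+1)) * (2*((n:ℝ)+1)+8)^(n+1+3)
          = (Real.exp (-2 - 2*(n:ℝ)) * (2*(n:ℝ)+8)^(n+3))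
              * ((1+x)^(n+3)) * (Real.exp (-2 : ℝ) * (2*((n:ℝ)+1)+8)) := by
            rw [e1, e2]; ring
        _ ≤ (18 * ((Nat.factorial (n+2) : ℕ) : ℝ) * ((n:ℝ)+2))
              * (Real.exp 1) * (Real.exp (-2 : ℝ) * (2*((n:ℝ)+1)+8)) := by
            apply mul_le_mul_of_nonneg_right _ (by positivity)
            apply mul_le_mul ih hexp1 (by positivity) (by positivity)
        _ = (18 * ((Nat.factorial (n+2) : ℕ) : ℝ))
              * (Real.exp (-1 : ℝ) * ((2*((n:ℝ)+1)+8) * ((n:ℝ)+2))) := by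
            rw [← hei]; ring
        _ ≤ (18 * ((Nat.factorial (n+2) : ℕ) : ℝ)) * (((n:ℝ)+3)*((n:ℝ)+3)) :=
            mul_le_mul_of_nonneg_left hkey2 (by positivity)
        _ = 18 * ((Nat.factorial (n+1+2) : ℕ) : ℝ) * (((n:ℝ)+1)+2) := by
            rw [hfact]; ring
      
/-- `P(n)`: the endpoint inequality at `n+3`, shifted. -/
private lemma lemP : ∀ n : ℕ, Real.exp (-(2*(n:ℝ))) * (2*(n:ℝ)+6)^(n+2)
    ≤ 18 * ((Nat.factorial (n+2) : ℕ) : ℝ) := by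
  intro n
  cases n with
  | zero => norm_num [Nat.factorial]
  | succ m =>
      have hq := lemQ m
      have h1 : -(2*(((m:ℕ)+1:ℕ):ℝ)) = -2 - 2*(m:ℝ) := by push_cast; ring
      have h2 : 2*(((m:ℕ)+1:ℕ):ℝ)+6 = 2*(m:ℝ)+8 := by push_cast; ring
      rw [h1, h2, show m+1+2 = (m+3) by omega]
      refine hq.trans ?_
      have hfact : ((Nat.factorial (m+3) : ℕ) : ℝ)
          = ((m:ℝ)+3) * ((Nat.factorial (m+2) : ℕ) : ℝ) := by
        rw [show m+3 = (m+2)+1 by omega, Nat.factorial_succ]; push_cast; ring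
      rw [hfact]
      have hfpos : (0:ℝ) ≤ ((Nat.factorial (m+2) : ℕ) : ℝ) := by positivity
      nlinarith [Nat.cast_nonneg (α := ℝ) m, hfpos]

/-- Main inequality: for `α ≥ 3`, `exp(6-2α) (2α)^(α-1) ≤ 18 Γ(α)`. -/
private lemma key (α : ℝ) (hα : 3 ≤ α) :
    Real.exp (6 - 2*α) * (2*α) ^ (α-1) ≤ 18 * Real.Gamma α := by
  obtain ⟨m, hm⟩ : ∃ m : ℕ, ⌊α⌋₊ = m + 3 :=
    ⟨⌊α⌋₊ - 3, (Nat.sub_add_cancel (Nat.le_floor (by exact_mod_cast hα))).symm⟩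
  have hfl : ((m:ℝ)+3) ≤ α := by
    have h := Nat.floor_le (by linarith : (0:ℝ) ≤ α)
    rw [hm] at h; push_cast at h; linarith
  have hfu : α ≤ (m:ℝ)+4 := by
    have h := (Nat.lt_floor_add_one α).le
    rw [hm] at h; push_cast at h; linarith
  set F : ℝ := ((Nat.factorial (m+2) : ℕ) : ℝ) with hF
  have hFpos : 0 < F := by rw [hF]; positivity
  have hga : Real.exp (6 - 2*((m:ℝ)+3)) * (2*((m:ℝ)+3)) ^ (((m:ℝ)+3)-1) ≤ 18*F := by
    have hp := lemP m
    have e1 : 6 - 2*((m:ℝ)+3) = -(2*(m:ℝ)) := by ring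
    have e2 : (2*((m:ℝ)+3)) = 2*(m:ℝ)+6 := by ring
    have e3 : (((m:ℝ)+3)-1) = ((m+2 : ℕ):ℝ) := by push_cast; ring
    rw [e1, e2, e3, Real.rpow_natCast]
    exact hp
  have hgb : Real.exp (6 - 2*((m:ℝ)+4)) * (2*((m:ℝ)+4)) ^ (((m:ℝ)+4)-1)
      ≤ 18*F * ((m:ℝ)+2) ^ (((m:ℝ)+4)-((m:ℝ)+3)) := by
    have hq := lemQ m
    have e1 : 6 - 2*((m:ℝ)+4) = -2 - 2*(m:ℝ) := by ring
    have e2 : (2*((m:ℝ)+4)) = 2*(m:ℝ)+8 := by ring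
    have e3 : (((m:ℝ)+4)-1) = ((m+3 : ℕ):ℝ) := by push_cast; ring
    have e4 : (((m:ℝ)+4)-((m:ℝ)+3)) = (1:ℝ) := by ring
    rw [e1, e2, e3, e4, Real.rpow_natCast, Real.rpow_one]
    exact hq
  have hchord := chordUB (a := (m:ℝ)+3) (b := (m:ℝ)+4) (x := α) (A := 18*F) (B := (m:ℝ)+2)
      (by positivity) hfl hfu (by positivity) (by positivity) hga hgb
  have hgam := gamma_ge (p := (m:ℝ)+2) (x := α) (by positivity) (by linarith)
  have hΓ : Real.Gamma ((m:ℝ)+2+1) = F := by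
    rw [hF, show ((m:ℝ)+2+1) = ((m+2:ℕ):ℝ)+1 by push_cast; ring, Real.Gamma_nat_eq_factorial]
  rw [hΓ] at hgam
  have hgam' : F * ((m:ℝ)+2) ^ (α - ((m:ℝ)+3)) ≤ Real.Gamma α := by
    rw [show α - ((m:ℝ)+3) = α - ((m:ℝ)+2+1) by ring]; exact hgam
  have hrp : (0:ℝ) ≤ ((m:ℝ)+2) ^ (α - ((m:ℝ)+3)) := by positivity
  calc Real.exp (6 - 2*α) * (2*α) ^ (α-1)
      ≤ 18*F * ((m:ℝ)+2) ^ (α-((m:ℝ)+3)) := hchord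
    _ = 18 * (F * ((m:ℝ)+2) ^ (α-((m:ℝ)+3))) := by ring
    _ ≤ 18 * Real.Gamma α := by linarith [hgam']

/-- For every `α > 3`, `a_α := 2√(2π) e^{−2α} (2α)^{α−1} / Γ(α)`
satisfies `a_α ≤ 36√(2π) e^{−6}`. -/
theorem a_alpha_le (α : ℝ) (hα : 3 < α) :
    2 * Real.sqrt (2 * Real.pi) * Real.exp (-(2 * α)) * (2 * α) ^ (α - 1) / Real.Gamma α ≤
      36 * Real.sqrt (2 * Real.pi) * Real.exp (-6) := by
  have hΓ : 0 < Real.Gamma α := Real.Gamma_pos_of_pos (by linarith)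
  have hk := key α hα.le
  rw [div_le_iff₀ hΓ]
  have he : Real.exp (-(2*α)) = Real.exp (-6 : ℝ) * Real.exp (6 - 2*α) := by
    rw [← Real.exp_add]; congr 1; ring
  calc 2 * Real.sqrt (2 * Real.pi) * Real.exp (-(2 * α)) * (2 * α) ^ (α - 1)
      = (2 * Real.sqrt (2 * Real.pi) * Real.exp (-6 : ℝ))
          * (Real.exp (6 - 2*α) * (2*α) ^ (α-1)) := by rw [he]; ring
    _ ≤ (2 * Real.sqrt (2 * Real.pi) * Real.exp (-6 : ℝ)) * (18 * Real.Gamma α) := by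
        apply mul_le_mul_of_nonneg_left hk (by positivity)
    _ = 36 * Real.sqrt (2 * Real.pi) * Real.exp (-6) * Real.Gamma α := by ring
end

section
/- For every real α > 3 and every real b > 0, one has a_α · b · (1 + b²/(2α))^{α−1} < e^{b²/2}, where a_α := 2√(2π) e^{−2α} (2α)^{α−1} / Γ(α). -/
open Real MeasureTheory Set

lemma gamma_lb (α : ℝ) (hα : 0 < α) :
    Real.exp (-(2 * α)) * (2 * α) ^ α ≤ Real.Gamma α := by
  have h2α : 0 < 2 * α := by linarith
  -- pointwise bound on Icc α (2α)
  have hpt : ∀ x ∈ Icc α (2 * α),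
      Real.exp (-(2 * α)) * (2 * α) ^ α ≤ Real.exp (-x) * x ^ α := by
    intro x hx
    obtain ⟨hx1, hx2⟩ := hx
    have hx0 : 0 < x := lt_of_lt_of_le hα hx1
    rw [Real.rpow_def_of_pos h2α, Real.rpow_def_of_pos hx0, ← Real.exp_add, ← Real.exp_add]
    apply Real.exp_le_exp.mpr
    have hlog : Real.log (2 * α / x) ≤ 2 * α / x - 1 :=
      Real.log_le_sub_one_of_pos (by positivity)
    have hld : Real.log (2 * α / x) = Real.log (2 * α) - Real.log x :=
      Real.log_div (ne_of_gt h2α) (ne_of_gt hx0)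
    rw [hld] at hlog
    have h1 : α * (Real.log (2 * α) - Real.log x) ≤ α * (2 * α / x - 1) := by
      apply mul_le_mul_of_nonneg_left hlog (le_of_lt hα)
    have h2 : α * (2 * α / x - 1) = α * (2 * α - x) / x := by field_simp
    have h3 : α * (2 * α - x) / x ≤ 2 * α - x := by
      rw [div_le_iff₀ hx0]
      have : 0 ≤ 2 * α - x := by linarith
      nlinarith
    nlinarith [h1, h2 ▸ h1]
  -- integral bound
  have hint : IntegrableOn (fun x : ℝ => Real.exp (-x) * x ^ ((α + 1) - 1)) (Ioi 0) :=
    Real.GammaIntegral_convergent (by linarith)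
  have hint' : IntegrableOn (fun x : ℝ => Real.exp (-x) * x ^ α) (Ioi 0) := by
    simpa using hint
  have hsub : Icc α (2 * α) ⊆ Ioi 0 := fun x hx => lt_of_lt_of_le hα hx.1
  have key : α * (Real.exp (-(2 * α)) * (2 * α) ^ α) ≤ Real.Gamma (α + 1) := by
    rw [Real.Gamma_eq_integral (by linarith : (0:ℝ) < α + 1)]
    simp only [add_sub_cancel_right]
    have step1 : ∫ x in Icc α (2 * α), Real.exp (-x) * x ^ α ≤
        ∫ x in Ioi 0, Real.exp (-x) * x ^ α := by
      apply setIntegral_mono_set hint'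
      · filter_upwards [ae_restrict_mem measurableSet_Ioi] with x hx
        have hx0 : 0 < x := hx
        positivity
      · exact HasSubset.Subset.eventuallyLE hsub
    have step2 : α * (Real.exp (-(2 * α)) * (2 * α) ^ α) ≤
        ∫ x in Icc α (2 * α), Real.exp (-x) * x ^ α := by
      have hconst : ∫ _x in Icc α (2 * α), (Real.exp (-(2 * α)) * (2 * α) ^ α) =
          α * (Real.exp (-(2 * α)) * (2 * α) ^ α) := by
        rw [setIntegral_const]
        rw [measureReal_def, Real.volume_Icc]
        rw [ENNReal.toReal_ofReal (by linarith)]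
        rw [smul_eq_mul]
        ring_nf
      rw [← hconst]
      apply setIntegral_mono_on (integrableOn_const (by
        rw [Real.volume_Icc]; exact ENNReal.ofReal_ne_top))
        (hint'.mono_set hsub) measurableSet_Icc hpt
    linarith
  rw [Real.Gamma_add_one (ne_of_gt hα)] at key
  exact le_of_mul_le_mul_left key hα

/-- For every `α > 3` and `b > 0`,
`a_α · b · (1 + b²/(2α))^{α−1} < e^{b²/2}` where
`a_α := 2√(2π) e^{−2α} (2α)^{α−1} / Γ(α)`. -/
theorem a_alpha_bound (α b : ℝ) (hα : 3 < α) (hb : 0 < b) :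
    (2 * Real.sqrt (2 * Real.pi) * Real.exp (-(2 * α)) * (2 * α) ^ (α - 1) / Real.Gamma α) *
        b * (1 + b ^ 2 / (2 * α)) ^ (α - 1) < Real.exp (b ^ 2 / 2) := by
  have hα0 : (0:ℝ) < α := by linarith
  have h2α : (0:ℝ) < 2 * α := by linarith
  have hπ : (0:ℝ) < Real.pi := Real.pi_pos
  have hs : (0:ℝ) < Real.sqrt (2 * Real.pi) := Real.sqrt_pos.mpr (by positivity)
  have hΓpos : 0 < Real.Gamma α := Real.Gamma_pos_of_pos hα0
  have hΓ := gamma_lb α hα0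
  -- A ≤ sqrt(2π)/α
  set A := 2 * Real.sqrt (2 * Real.pi) * Real.exp (-(2 * α)) * (2 * α) ^ (α - 1) / Real.Gamma α
    with hA
  have hApos : 0 < A := by
    apply div_pos _ hΓpos
    positivity
  have hrw : (2 * α) ^ (α - 1) = (2 * α) ^ α / (2 * α) := by
    rw [Real.rpow_sub h2α, Real.rpow_one]
  have hAle : A ≤ Real.sqrt (2 * Real.pi) / α := by
    rw [hA, div_le_div_iff₀ hΓpos hα0, hrw]
    have hnum : 2 * Real.sqrt (2 * Real.pi) * Real.exp (-(2 * α)) * ((2 * α) ^ α / (2 * α)) * α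
        = Real.sqrt (2 * Real.pi) * (Real.exp (-(2 * α)) * (2 * α) ^ α) := by
      field_simp
    rw [hnum]
    exact mul_le_mul_of_nonneg_left hΓ (le_of_lt hs)
  -- X ≤ exp
  set X := (1 + b ^ 2 / (2 * α)) ^ (α - 1) with hX
  have hXpos : 0 < X := Real.rpow_pos_of_pos (by positivity) _
  have hXle : X ≤ Real.exp (b ^ 2 / 2 - b ^ 2 / (2 * α)) := by
    have h1 : (1 : ℝ) + b ^ 2 / (2 * α) ≤ Real.exp (b ^ 2 / (2 * α)) := by
      have := Real.add_one_le_exp (b ^ 2 / (2 * α))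
      linarith
    calc X ≤ (Real.exp (b ^ 2 / (2 * α))) ^ (α - 1) :=
          Real.rpow_le_rpow (by positivity) h1 (by linarith)
      _ = Real.exp (b ^ 2 / (2 * α) * (α - 1)) := (Real.exp_mul _ _).symm
      _ = Real.exp (b ^ 2 / 2 - b ^ 2 / (2 * α)) := by
          congr 1
          field_simp
  -- key: sqrt(2π)/α * b < exp (b²/(2α))
  have hkey : Real.sqrt (2 * Real.pi) / α * b < Real.exp (b ^ 2 / (2 * α)) := by
    have hP : 0 < Real.sqrt (2 * Real.pi) / α * b := by positivity
    have hQ : 0 < Real.exp (b ^ 2 / (2 * α)) := Real.exp_pos _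
    have hsq : (Real.sqrt (2 * Real.pi) / α * b) ^ 2 < (Real.exp (b ^ 2 / (2 * α))) ^ 2 := by
      have hE : (Real.exp (b ^ 2 / (2 * α))) ^ 2 = Real.exp (b ^ 2 / α) := by
        rw [← Real.exp_nat_mul]
        congr 1
        field_simp
        ring
      have hL : (Real.sqrt (2 * Real.pi) / α * b) ^ 2 = 2 * Real.pi * b ^ 2 / α ^ 2 := by
        rw [mul_pow, div_pow, Real.sq_sqrt (by positivity)]
        ring
      rw [hE, hL]
      have hex : Real.exp 1 * (b ^ 2 / α) ≤ Real.exp (b ^ 2 / α) := by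
        have h := Real.add_one_le_exp (b ^ 2 / α - 1)
        have : Real.exp (b ^ 2 / α) = Real.exp 1 * Real.exp (b ^ 2 / α - 1) := by
          rw [← Real.exp_add]; ring_nf
        nlinarith [Real.exp_pos (1:ℝ), Real.exp_pos (b ^ 2 / α - 1)]
      have hpi : 2 * Real.pi < Real.exp 1 * α := by
        have h1 : Real.pi < 3.1416 := by
          have := Real.pi_lt_d6
          linarith
        have h2 : (2.7182818283 : ℝ) < Real.exp 1 := Real.exp_one_gt_d9
        nlinarith
      have heq : Real.exp 1 * (b ^ 2 / α) * α ^ 2 = Real.exp 1 * α * b ^ 2 := by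
        field_simp
      have : 2 * Real.pi * b ^ 2 / α ^ 2 < Real.exp 1 * (b ^ 2 / α) := by
        rw [div_lt_iff₀ (by positivity), heq]
        exact mul_lt_mul_of_pos_right hpi (by positivity)
      linarith
    nlinarith [hsq, hP, hQ]
  -- assemble
  have hchain : A * b * X ≤ Real.sqrt (2 * Real.pi) / α * b * Real.exp (b ^ 2 / 2 - b ^ 2 / (2 * α)) := by
    apply mul_le_mul _ hXle (le_of_lt hXpos) (by positivity)
    exact mul_le_mul_of_nonneg_right hAle (le_of_lt hb)
  have hfin : Real.sqrt (2 * Real.pi) / α * b * Real.exp (b ^ 2 / 2 - b ^ 2 / (2 * α)) <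
      Real.exp (b ^ 2 / 2) := by
    have : Real.exp (b ^ 2 / 2) = Real.exp (b ^ 2 / (2 * α)) * Real.exp (b ^ 2 / 2 - b ^ 2 / (2 * α)) := by
      rw [← Real.exp_add]; ring_nf
    rw [this]
    exact mul_lt_mul_of_pos_right hkey (Real.exp_pos _)
  calc A * b * X ≤ _ := hchain
    _ < _ := hfin
end

section
/- Fix b ∈ ℝ, and let q : ℝ → ℝ be any function such that for every α > 3 one has q(α) ≥ 0 and F_α(q(α)) = Φ(b). Then (q(α) − α)/√α converges to b as α → +∞; i.e., the Gamma quantile h(b;α) = F_α⁻¹(Φ(b)) satisfies h(b;α) = α + b√α + o(√α). -/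
open MeasureTheory Real Filter Set Topology

lemma le_of_hasDerivAt_nonneg {f f' : ℝ → ℝ} {a b : ℝ} (hab : a ≤ b)
    (hd : ∀ t ∈ Set.Icc a b, HasDerivAt f (f' t) t)
    (h0 : ∀ t ∈ Set.Icc a b, 0 ≤ f' t) : f a ≤ f b := by
  have hm : MonotoneOn f (Set.Icc a b) := by
    apply monotoneOn_of_deriv_nonneg (convex_Icc a b)
      (fun t ht => (hd t ht).continuousAt.continuousWithinAt)
    · intro t ht
      rw [interior_Icc] at ht
      exact (hd t (Ioo_subset_Icc_self ht)).differentiableAt.differentiableWithinAt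
    · intro t ht
      rw [interior_Icc] at ht
      rw [(hd t (Ioo_subset_Icc_self ht)).deriv]
      exact h0 t (Ioo_subset_Icc_self ht)
  exact hm (left_mem_Icc.2 hab) (right_mem_Icc.2 hab) hab

lemma psiA {x : ℝ} (hx1 : -1 < x) (hx0 : x ≤ 0) : Real.log (1+x) - x ≤ -x^2/2 := by
  have key : (fun t => Real.log (1+t) - t + t^2/2) x ≤ (fun t => Real.log (1+t) - t + t^2/2) 0 := by
    apply le_of_hasDerivAt_nonneg hx0
    · intro t ht
      have h1 : (0:ℝ) < 1 + t := by have := ht.1; linarith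
      have : HasDerivAt (fun t : ℝ => Real.log (1+t)) (1/(1+t)) t := by
        simpa using (HasDerivAt.log ((hasDerivAt_id t).const_add 1) (ne_of_gt h1))
      have h2 : HasDerivAt (fun t : ℝ => Real.log (1+t) - t + t^2/2)
          (1/(1+t) - 1 + t) t := by
        have := (this.sub (hasDerivAt_id t)).add ((hasDerivAt_pow 2 t).div_const 2)
        exact this.congr_deriv (by push_cast; ring)
      exact h2
    · intro t ht
      have h1 : (0:ℝ) < 1 + t := by have := ht.1; linarith
      have : 1/(1+t) - 1 + t = t^2/(1+t) := by field_simp; ring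
      rw [this]
      positivity
  simp at key
  nlinarith [key]

lemma log_hasDerivAt {t : ℝ} (h1 : (0:ℝ) < 1 + t) :
    HasDerivAt (fun t : ℝ => Real.log (1+t)) (1/(1+t)) t := by
  simpa using (HasDerivAt.log ((hasDerivAt_id t).const_add 1) (ne_of_gt h1))

lemma psiB {x : ℝ} (hx0 : 0 ≤ x) (hx1 : x ≤ 1) : Real.log (1+x) - x ≤ -x^2/6 := by
  have key : (fun t => -t^2/6 - Real.log (1+t) + t) 0 ≤ (fun t => -t^2/6 - Real.log (1+t) + t) x := by
    refine le_of_hasDerivAt_nonneg (f := fun t => -t^2/6 - Real.log (1+t) + t)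
      (f' := fun t => -t/3 - 1/(1+t) + 1) hx0 ?_ ?_
    · intro t ht
      have h1 : (0:ℝ) < 1 + t := by have := ht.1; linarith
      have h2 := (((hasDerivAt_pow 2 t).neg.div_const 6).sub (log_hasDerivAt h1)).add (hasDerivAt_id t)
      exact h2.congr_deriv (by push_cast; ring)
    · intro t ht
      have h1 : (0:ℝ) < 1 + t := by have := ht.1; linarith
      have ht1 : t ≤ 1 := le_trans ht.2 hx1
      have ht0 : 0 ≤ t := ht.1
      have h3 : -t/3 - 1/(1+t) + 1 = t*(2-t)/(3*(1+t)) := by field_simp; ring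
      show 0 ≤ -t/3 - 1/(1+t) + 1
      rw [h3]
      apply div_nonneg
      · nlinarith
      · linarith
  simp at key
  nlinarith [key]

lemma psiC {x : ℝ} (hx : 1 ≤ x) : Real.log (1+x) - x ≤ -x/4 := by
  have key : (fun t => -t/4 - Real.log (1+t) + t) 1 ≤ (fun t => -t/4 - Real.log (1+t) + t) x := by
    refine le_of_hasDerivAt_nonneg (f := fun t => -t/4 - Real.log (1+t) + t)
      (f' := fun t => -(1/4) - 1/(1+t) + 1) hx ?_ ?_
    · intro t ht
      have h1 : (0:ℝ) < 1 + t := by have := ht.1; linarith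
      have h2 := (((hasDerivAt_id t).div_const 4).neg.sub (log_hasDerivAt h1)).add (hasDerivAt_id t)
      have h3 : (fun t:ℝ => -t/4 - Real.log (1+t) + t) = fun x:ℝ => -(x/4) - Real.log (1+x) + x := by
        funext u; ring
      rw [h3]
      exact h2
    · intro t ht
      have h1 : (2:ℝ) ≤ 1 + t := by have := ht.1; linarith
      have h2 : 1/(1+t) ≤ 1/2 := by
        apply one_div_le_one_div_of_le <;> linarith
      show (0:ℝ) ≤ -(1/4) - 1/(1+t) + 1
      linarith
  have hlog2 : Real.log 2 < 0.6931471808 := Real.log_two_lt_d9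
  simp only [] at key
  have h12 : Real.log (1+1) = Real.log 2 := by norm_num
  rw [h12] at key
  nlinarith [key]

noncomputable def Gfun (α s : ℝ) : ℝ :=
  if -Real.sqrt α < s then
    Real.exp ((α - 1) * Real.log (1 + s / Real.sqrt α) - s * Real.sqrt α) else 0

lemma Gfun_nonneg (α s : ℝ) : 0 ≤ Gfun α s := by
  unfold Gfun; split
  · positivity
  · exact le_refl 0

lemma measurable_Gfun (α : ℝ) : Measurable (Gfun α) := by
  unfold Gfun
  apply Measurable.ite
  · exact measurableSet_lt measurable_const measurable_id
  · exact Measurable.exp ((measurable_const.mul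
      (Real.measurable_log.comp ((measurable_id.div_const _).const_add 1))).sub
      (measurable_id.mul_const _))
  · exact measurable_const

noncomputable def gArg (α s : ℝ) : ℝ :=
  (α - 1) * Real.log (1 + s / Real.sqrt α) - s * Real.sqrt α

lemma Gfun_indicator (α : ℝ) :
    Gfun α = (Ioi (-Real.sqrt α)).indicator (fun s => Real.exp (gArg α s)) := by
  funext s
  simp [Gfun, gArg, Set.indicator_apply, mem_Ioi]

lemma int_Iic (α c : ℝ) :
    ∫ s in Iic c, Gfun α s = ∫ s in Ioc (-Real.sqrt α) c, Real.exp (gArg α s) := by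
  rw [Gfun_indicator, setIntegral_indicator measurableSet_Ioi, Set.Iic_inter_Ioi]

lemma int_univ (α : ℝ) :
    ∫ s, Gfun α s = ∫ s in Ioi (-Real.sqrt α), Real.exp (gArg α s) := by
  rw [Gfun_indicator, integral_indicator measurableSet_Ioi]

lemma integrand_eq {α : ℝ} (hα : 0 < α) {s : ℝ} (hs : -Real.sqrt α < s) :
    (α + Real.sqrt α * s) ^ (α - 1) * Real.exp (-(α + Real.sqrt α * s))
      = (α ^ (α - 1) * Real.exp (-α)) * Real.exp (gArg α s) := by
  have hsq : 0 < Real.sqrt α := Real.sqrt_pos.2 hα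
  have hss : Real.sqrt α * Real.sqrt α = α := Real.mul_self_sqrt hα.le
  have hx : 0 < 1 + s / Real.sqrt α := by
    have : -1 < s / Real.sqrt α := by
      rw [lt_div_iff₀ hsq]; linarith
    linarith
  have hval : α + Real.sqrt α * s = α * (1 + s / Real.sqrt α) := by
    field_simp
    nlinarith [hss]
  rw [hval, Real.mul_rpow hα.le hx.le, Real.rpow_def_of_pos hx]
  rw [gArg, ← hval]
  rw [show (α - 1) * Real.log (1 + s / Real.sqrt α) - s * Real.sqrt α
      = (α - 1) * Real.log (1 + s / Real.sqrt α) + (-(s * Real.sqrt α)) by ring,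
    Real.exp_add]
  rw [show -(α + Real.sqrt α * s) = -α + -(s * Real.sqrt α) by ring, Real.exp_add]
  ring

lemma affine_hasDeriv (α : ℝ) (x : ℝ) :
    HasDerivAt (fun s : ℝ => α + Real.sqrt α * s) (Real.sqrt α) x := by
  simpa using ((hasDerivAt_id x).const_mul (Real.sqrt α)).const_add α

lemma affine_injOn {α : ℝ} (hα : 0 < α) (S : Set ℝ) :
    Set.InjOn (fun s : ℝ => α + Real.sqrt α * s) S := by
  intro a _ b _ hab
  have hsq : Real.sqrt α ≠ 0 := ne_of_gt (Real.sqrt_pos.2 hα)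
  simp only [] at hab
  have := add_left_cancel hab
  exact mul_left_cancel₀ hsq this

lemma map_Ioc {α : ℝ} (hα : 0 < α) (c : ℝ) :
    (fun s : ℝ => α + Real.sqrt α * s) '' Ioc (-Real.sqrt α) c
      = Ioc 0 (α + Real.sqrt α * c) := by
  have hsq : 0 < Real.sqrt α := Real.sqrt_pos.2 hα
  have hss : Real.sqrt α * Real.sqrt α = α := Real.mul_self_sqrt hα.le
  ext t
  constructor
  · rintro ⟨s, ⟨hs1, hs2⟩, rfl⟩
    dsimp only
    constructor
    · nlinarith
    · nlinarith
  · rintro ⟨ht1, ht2⟩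
    refine ⟨(t - α) / Real.sqrt α, ⟨?_, ?_⟩, ?_⟩
    · rw [lt_div_iff₀ hsq]; nlinarith
    · rw [div_le_iff₀ hsq]; nlinarith
    · field_simp
      ring

lemma map_Ioi {α : ℝ} (hα : 0 < α) :
    (fun s : ℝ => α + Real.sqrt α * s) '' Ioi (-Real.sqrt α) = Ioi 0 := by
  have hsq : 0 < Real.sqrt α := Real.sqrt_pos.2 hα
  have hss : Real.sqrt α * Real.sqrt α = α := Real.mul_self_sqrt hα.le
  ext t
  constructor
  · rintro ⟨s, hs1, rfl⟩
    dsimp only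
    simp only [mem_Ioi] at *
    nlinarith
  · intro ht
    simp only [mem_Ioi] at ht
    refine ⟨(t - α) / Real.sqrt α, ?_, ?_⟩
    · simp only [mem_Ioi]
      rw [lt_div_iff₀ hsq]; nlinarith
    · field_simp
      ring

lemma subst_Ioc {α : ℝ} (hα : 0 < α) {c : ℝ} :
    ∫ t in Ioc (0:ℝ) (α + Real.sqrt α * c), t ^ (α - 1) * Real.exp (-t)
      = (Real.sqrt α * (α ^ (α - 1) * Real.exp (-α))) * ∫ s in Iic c, Gfun α s := by
  have hsq : 0 < Real.sqrt α := Real.sqrt_pos.2 hα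
  rw [int_Iic, ← map_Ioc hα c]
  rw [integral_image_eq_integral_abs_deriv_smul measurableSet_Ioc
    (fun x _ => (affine_hasDeriv α x).hasDerivWithinAt) (affine_injOn hα _)
    (fun t => t ^ (α - 1) * Real.exp (-t))]
  rw [← MeasureTheory.integral_const_mul]
  apply setIntegral_congr_fun measurableSet_Ioc
  intro s hs
  dsimp only
  rw [smul_eq_mul, abs_of_pos hsq, integrand_eq hα hs.1]
  ring

lemma subst_Gamma {α : ℝ} (hα : 0 < α) :
    Real.Gamma α = (Real.sqrt α * (α ^ (α - 1) * Real.exp (-α))) * ∫ s, Gfun α s := by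
  have hsq : 0 < Real.sqrt α := Real.sqrt_pos.2 hα
  rw [Real.Gamma_eq_integral hα, int_univ, ← map_Ioi hα]
  rw [integral_image_eq_integral_abs_deriv_smul measurableSet_Ioi
    (fun x _ => (affine_hasDeriv α x).hasDerivWithinAt) (affine_injOn hα _)
    (fun t => Real.exp (-t) * t ^ (α - 1))]
  rw [← MeasureTheory.integral_const_mul]
  apply setIntegral_congr_fun measurableSet_Ioi
  intro s hs
  dsimp only
  rw [smul_eq_mul, abs_of_pos hsq]
  rw [show Real.exp (-(α + Real.sqrt α * s)) * (α + Real.sqrt α * s) ^ (α - 1)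
      = (α + Real.sqrt α * s) ^ (α - 1) * Real.exp (-(α + Real.sqrt α * s)) by ring,
    integrand_eq hα hs]
  ring


lemma gammaCDF_ratio {α : ℝ} (hα : 0 < α) (c : ℝ) :
    gammaCDF α (α + Real.sqrt α * c) = (∫ s in Iic c, Gfun α s) / (∫ s, Gfun α s) := by
  have hsq : 0 < Real.sqrt α := Real.sqrt_pos.2 hα
  have hC : 0 < Real.sqrt α * (α ^ (α - 1) * Real.exp (-α)) := by
    have := Real.rpow_pos_of_pos hα (α - 1)
    positivity
  have hΓ : 0 < Real.Gamma α := Real.Gamma_pos_of_pos hα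
  have hJ : 0 < ∫ s, Gfun α s := by
    have h := subst_Gamma hα
    nlinarith [hΓ, hC, mul_pos hC (lt_of_le_of_ne (integral_nonneg (Gfun_nonneg α))
      (fun h0 => by rw [h, ← h0, mul_zero] at hΓ; exact lt_irrefl 0 hΓ))]
  unfold gammaCDF
  rw [subst_Ioc hα, subst_Gamma hα]
  field_simp

noncomputable def Dfun (s : ℝ) : ℝ :=
  Real.exp 1 * Real.exp (-s^2/12) + (Ioi (0:ℝ)).indicator (fun s => Real.exp (-s/4)) s

lemma Dfun_integrable : Integrable Dfun := by
  apply Integrable.add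
  · have h : Integrable (fun s : ℝ => Real.exp (-(1/12) * s^2)) :=
      integrable_exp_neg_mul_sq (by norm_num)
    have h2 : (fun s : ℝ => Real.exp 1 * Real.exp (-s^2/12))
        = fun s => Real.exp 1 * Real.exp (-(1/12) * s^2) := by
      funext s; ring_nf
    rw [h2]
    exact h.const_mul _
  · have h : IntegrableOn (fun x : ℝ => Real.exp (-(1/4) * x)) (Ioi 0) :=
      exp_neg_integrableOn_Ioi 0 (by norm_num)
    have h2 : (fun s : ℝ => Real.exp (-s/4)) = fun s => Real.exp (-(1/4) * s) := by
      funext s; ring_nf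
    rw [h2]
    exact h.integrable_indicator measurableSet_Ioi

lemma Gfun_le_Dfun {α : ℝ} (hα : 4 ≤ α) (s : ℝ) : Gfun α s ≤ Dfun s := by
  have hα0 : (0:ℝ) < α := by linarith
  have hsq : 0 < Real.sqrt α := Real.sqrt_pos.2 hα0
  have hsq2 : (2:ℝ) ≤ Real.sqrt α := by
    rw [show (2:ℝ) = Real.sqrt 4 by rw [show (4:ℝ) = 2^2 by norm_num, Real.sqrt_sq]; norm_num]
    exact Real.sqrt_le_sqrt hα
  have hss : Real.sqrt α * Real.sqrt α = α := Real.mul_self_sqrt hα0.le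
  have hD1 : 0 ≤ Real.exp 1 * Real.exp (-s^2/12) := by positivity
  have hD2 : 0 ≤ (Ioi (0:ℝ)).indicator (fun s => Real.exp (-s/4)) s :=
    Set.indicator_nonneg (fun x _ => (Real.exp_pos _).le) s
  unfold Gfun
  split
  case isFalse => unfold Dfun; positivity
  case isTrue h =>
    set x := s / Real.sqrt α with hxdef
    have hx1 : -1 < x := by
      rw [hxdef, lt_div_iff₀ hsq]; linarith
    have hsx : s = x * Real.sqrt α := by
      rw [hxdef]; field_simp
    have hsα : s * Real.sqrt α = α * x := by
      rw [hsx]; nlinarith [hss]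
    have hE : (α - 1) * Real.log (1 + x) - s * Real.sqrt α
        = (α - 1) * (Real.log (1 + x) - x) - x := by
      rw [hsα]; ring
    have hxsq : α * x^2 = s^2 := by
      rw [hsx]; nlinarith [hss]
    rcases le_or_gt x 1 with hxle | hxgt
    · -- x ∈ (-1, 1]
      have hψ : Real.log (1 + x) - x ≤ -x^2/6 := by
        rcases le_or_gt x 0 with h0 | h0
        · have := psiA hx1 h0
          nlinarith
        · exact psiB h0.le hxle
      have hE2 : (α - 1) * Real.log (1 + x) - s * Real.sqrt α ≤ 1 - s^2/12 := by
        rw [hE]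
        have h1 : (α - 1) * (Real.log (1 + x) - x) ≤ (α - 1) * (-x^2/6) :=
          mul_le_mul_of_nonneg_left hψ (by linarith)
        nlinarith [hxsq, sq_nonneg x]
      calc Real.exp ((α - 1) * Real.log (1 + x) - s * Real.sqrt α)
          ≤ Real.exp (1 - s^2/12) := Real.exp_le_exp.2 hE2
        _ = Real.exp 1 * Real.exp (-s^2/12) := by
            rw [← Real.exp_add]; ring_nf
        _ ≤ Dfun s := by unfold Dfun; linarith
    · -- x > 1, so s > √α ≥ 2
      have hs2 : Real.sqrt α < s := by
        nlinarith [hsx]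
      have hs0 : 0 < s := by linarith
      have hψ : Real.log (1 + x) - x ≤ -x/4 := psiC hxgt.le
      have hE2 : (α - 1) * Real.log (1 + x) - s * Real.sqrt α ≤ -s/4 := by
        rw [hE]
        have h1 : (α - 1) * (Real.log (1 + x) - x) ≤ (α - 1) * (-x/4) :=
          mul_le_mul_of_nonneg_left hψ (by linarith)
        have h2 : α * x = s * Real.sqrt α := hsα.symm
        nlinarith [hsq2, hxgt]
      calc Real.exp ((α - 1) * Real.log (1 + x) - s * Real.sqrt α)
          ≤ Real.exp (-s/4) := Real.exp_le_exp.2 hE2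
        _ = (Ioi (0:ℝ)).indicator (fun s => Real.exp (-s/4)) s := by
            rw [Set.indicator_of_mem (mem_Ioi.2 hs0)]
        _ ≤ Dfun s := by unfold Dfun; linarith

lemma cubic_bound {y : ℝ} (hy : |y| ≤ 1/2) :
    |Real.log (1 + y) - y + y^2/2| ≤ 2 * |y|^3 := by
  have h1 : |(-y)| < 1 := by rw [abs_neg]; linarith [abs_nonneg y]
  have := Real.abs_log_sub_add_sum_range_le h1 2
  simp only [Finset.sum_range_succ, Finset.sum_range_zero] at this
  have heq : (1 : ℝ) - -y = 1 + y := by ring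
  rw [heq] at this
  have h2 : |(-y)| ^ 3 / (1 - |(-y)|) ≤ 2 * |y|^3 := by
    rw [abs_neg]
    have h3 : (1:ℝ)/2 ≤ 1 - |y| := by linarith
    have h4 : |y|^3 / (1 - |y|) ≤ |y|^3 / (1/2) :=
      div_le_div_of_nonneg_left (by positivity) (by norm_num) h3
    calc |y|^3 / (1 - |y|) ≤ |y|^3/(1/2) := h4
      _ = 2 * |y|^3 := by ring
  calc |Real.log (1 + y) - y + y^2/2|
      = |(0 + (-y)^(0+1)/((0:ℕ)+1) + (-y)^(1+1)/((1:ℕ)+1)) + Real.log (1 + y)| := by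
        apply congrArg
        push_cast
        ring
    _ ≤ |(-y)| ^ (2+1) / (1 - |(-y)|) := this
    _ ≤ 2 * |y|^3 := h2

lemma tendsto_sqrt : Tendsto Real.sqrt atTop atTop := by
  apply Filter.tendsto_atTop.2
  intro b
  filter_upwards [Filter.eventually_ge_atTop (max 0 (b^2))] with α hα
  rcases le_or_gt b 0 with hb | hb
  · exact le_trans hb (Real.sqrt_nonneg α)
  · have h2 : b^2 ≤ α := le_trans (le_max_right _ _) hα
    calc b = Real.sqrt (b^2) := (Real.sqrt_sq hb.le).symm
      _ ≤ Real.sqrt α := Real.sqrt_le_sqrt h2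

lemma Gfun_tendsto (s : ℝ) :
    Tendsto (fun α => Gfun α s) atTop (𝓝 (Real.exp (-s^2/2))) := by
  rcases eq_or_ne s 0 with rfl | hs
  · have h1 : ∀ᶠ α in atTop, Gfun α 0 = Real.exp (-(0:ℝ)^2/2) := by
      filter_upwards [Filter.eventually_gt_atTop (0:ℝ)] with α hα
      have hsq : 0 < Real.sqrt α := Real.sqrt_pos.2 hα
      simp [Gfun, neg_lt_zero.2 hsq]
    exact tendsto_const_nhds.congr' (by filter_upwards [h1] with α h; rw [h])
  · set x : ℝ → ℝ := fun α => s / Real.sqrt α with hxdef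
    have hx : Tendsto x atTop (𝓝 0) := by
      have h1 : Tendsto (fun α : ℝ => (Real.sqrt α)⁻¹) atTop (𝓝 0) :=
        tendsto_sqrt.inv_tendsto_atTop
      have := h1.const_mul s
      simpa [hxdef, div_eq_mul_inv] using this
    set W : ℝ → ℝ := fun α => Real.log (1 + x α) - x α + (x α)^2/2 with hWdef
    have hxsmall : ∀ᶠ α in atTop, |x α| ≤ 1/2 := by
      have := hx.abs
      simp only [abs_zero] at this
      exact this.eventually_le_const (by norm_num)
    have hWbound : ∀ᶠ α in atTop, |W α| ≤ 2 * |x α|^3 := by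
      filter_upwards [hxsmall] with α hα
      exact cubic_bound hα
    -- (α-1) * W α → 0
    have hαW : Tendsto (fun α => (α - 1) * W α) atTop (𝓝 0) := by
      apply squeeze_zero_norm' (a := fun α => 2 * |s|^3 / Real.sqrt α)
      · filter_upwards [hxsmall, Filter.eventually_ge_atTop (1:ℝ)] with α hα hα1
        have hα0 : (0:ℝ) < α := by linarith
        have hsq : 0 < Real.sqrt α := Real.sqrt_pos.2 hα0
        have hss : Real.sqrt α * Real.sqrt α = α := Real.mul_self_sqrt hα0.le
        have hWb : |W α| ≤ 2 * |x α|^3 := cubic_bound hα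
        have hxabs : |x α| = |s| / Real.sqrt α := by
          rw [hxdef]; rw [abs_div, abs_of_pos hsq]
        have h3 : |x α|^3 = |s|^3 / (α * Real.sqrt α) := by
          rw [hxabs, div_pow]
          congr 1
          nlinarith [hss, Real.sqrt_nonneg α]
        have hαle : α - 1 ≤ α := by linarith
        have hα1' : (0:ℝ) ≤ α - 1 := by linarith
        calc ‖(α - 1) * W α‖ = (α - 1) * |W α| := by
              rw [norm_mul, Real.norm_eq_abs, Real.norm_eq_abs, abs_of_nonneg hα1']
          _ ≤ (α - 1) * (2 * |x α|^3) := mul_le_mul_of_nonneg_left hWb hα1'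
          _ = (α - 1) * (2 * |s|^3 / (α * Real.sqrt α)) := by rw [h3]; ring
          _ ≤ α * (2 * |s|^3 / (α * Real.sqrt α)) := by
              apply mul_le_mul_of_nonneg_right hαle
              positivity
          _ = 2 * |s|^3 / Real.sqrt α := by
              field_simp
      · have h1 : Tendsto (fun α : ℝ => (Real.sqrt α)⁻¹) atTop (𝓝 0) :=
          tendsto_sqrt.inv_tendsto_atTop
        have := h1.const_mul (2 * |s|^3)
        simpa [div_eq_mul_inv] using this
    -- (α-1) * (x α)^2 / 2 → s^2/2
    have hquad : Tendsto (fun α => (α - 1) * (x α)^2 / 2) atTop (𝓝 (s^2/2)) := by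
      have hev : ∀ᶠ α in atTop, (α - 1) * (x α)^2 / 2 = s^2/2 * (1 - α⁻¹) := by
        filter_upwards [Filter.eventually_gt_atTop (0:ℝ)] with α hα0
        have hsq : 0 < Real.sqrt α := Real.sqrt_pos.2 hα0
        have hss : Real.sqrt α * Real.sqrt α = α := Real.mul_self_sqrt hα0.le
        have hx2 : (x α)^2 = s^2 / α := by
          rw [hxdef, div_pow]
          congr 1
          nlinarith [hss]
        rw [hx2]
        field_simp
      have hlim : Tendsto (fun α : ℝ => s^2/2 * (1 - α⁻¹)) atTop (𝓝 (s^2/2)) := by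
        have h0 : Tendsto (fun α : ℝ => (1:ℝ) - α⁻¹) atTop (𝓝 (1 - 0)) :=
          Tendsto.sub tendsto_const_nhds tendsto_inv_atTop_zero
        have := h0.const_mul (s^2/2)
        simpa using this
      exact hlim.congr' (by filter_upwards [hev] with α h; rw [h])
    -- E → -s^2/2
    have hE : Tendsto (fun α => (α - 1) * (Real.log (1 + x α) - x α) - x α)
        atTop (𝓝 (-s^2/2)) := by
      have hrw : ∀ α : ℝ, (α - 1) * (Real.log (1 + x α) - x α) - x α
          = (α - 1) * W α - (α - 1) * (x α)^2/2 - x α := by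
        intro α
        rw [hWdef]
        ring
      have := (hαW.sub hquad).sub hx
      simp only [zero_sub, sub_zero] at this
      have h2 : -(s^2/2) - 0 = -s^2/2 := by ring
      refine Tendsto.congr (fun α => (hrw α).symm) ?_
      rw [show -s^2/2 = -(s^2/2) by ring]
      simpa using this
    -- Gfun α s = exp(E α) eventually
    have hev : ∀ᶠ α in atTop, Gfun α s = Real.exp ((α - 1) * (Real.log (1 + x α) - x α) - x α) := by
      filter_upwards [Filter.eventually_gt_atTop (max 1 (s^2))] with α hα
      have hα0 : (0:ℝ) < α := lt_trans (by norm_num) (lt_of_le_of_lt (le_max_left 1 (s^2)) hα)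
      have hsq : 0 < Real.sqrt α := Real.sqrt_pos.2 hα0
      have hss : Real.sqrt α * Real.sqrt α = α := Real.mul_self_sqrt hα0.le
      have habs : |s| < Real.sqrt α := by
        have h1 : s^2 < α := lt_of_le_of_lt (le_max_right 1 (s^2)) hα
        have := Real.sqrt_lt_sqrt (sq_nonneg s) h1
        rwa [Real.sqrt_sq_eq_abs] at this
      have hmem : -Real.sqrt α < s := by
        have := neg_abs_le s
        linarith [abs_le.1 habs.le]
      rw [Gfun, if_pos hmem]
      congr 1
      have hsα : s * Real.sqrt α = α * x α := by
        rw [hxdef]; field_simp; nlinarith [hss]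
      rw [hsα, hxdef]
      ring
    exact (Real.continuous_exp.tendsto _ |>.comp hE).congr'
      (by filter_upwards [hev] with α h; rw [h]; rfl)

lemma tendsto_I (c : ℝ) :
    Tendsto (fun α => ∫ s in Iic c, Gfun α s) atTop
      (𝓝 (∫ s in Iic c, Real.exp (-s^2/2))) := by
  apply MeasureTheory.tendsto_integral_filter_of_dominated_convergence Dfun
  · exact Eventually.of_forall fun α => ((measurable_Gfun α).aestronglyMeasurable).restrict
  · filter_upwards [Filter.eventually_ge_atTop (4:ℝ)] with α hα
    apply Eventually.of_forall
    intro s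
    rw [Real.norm_eq_abs, abs_of_nonneg (Gfun_nonneg α s)]
    exact Gfun_le_Dfun hα s
  · exact Dfun_integrable.restrict
  · exact Eventually.of_forall fun s => Gfun_tendsto s

lemma tendsto_J :
    Tendsto (fun α => ∫ s, Gfun α s) atTop (𝓝 (Real.sqrt (2 * Real.pi))) := by
  have hgauss : ∫ s : ℝ, Real.exp (-s^2/2) = Real.sqrt (2 * Real.pi) := by
    have h : (fun s : ℝ => Real.exp (-s^2/2)) = fun s => Real.exp (-(1/2) * s^2) := by
      funext s; ring_nf
    rw [h, integral_gaussian]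
    congr 1
    rw [div_div_eq_mul_div, mul_comm]
    norm_num
  rw [← hgauss]
  apply MeasureTheory.tendsto_integral_filter_of_dominated_convergence Dfun
  · exact Eventually.of_forall fun α => (measurable_Gfun α).aestronglyMeasurable
  · filter_upwards [Filter.eventually_ge_atTop (4:ℝ)] with α hα
    apply Eventually.of_forall
    intro s
    rw [Real.norm_eq_abs, abs_of_nonneg (Gfun_nonneg α s)]
    exact Gfun_le_Dfun hα s
  · exact Dfun_integrable
  · exact Eventually.of_forall fun s => Gfun_tendsto s

lemma cdf_tendsto (c : ℝ) :
    Tendsto (fun α => gammaCDF α (α + Real.sqrt α * c)) atTop (𝓝 (stdNormalCDF c)) := by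
  have hsqrtpos : (0:ℝ) < Real.sqrt (2 * Real.pi) :=
    Real.sqrt_pos.2 (by positivity)
  have hdiv := Tendsto.div (tendsto_I c) tendsto_J (ne_of_gt hsqrtpos)
  have heq : ∀ᶠ α in atTop, (∫ s in Iic c, Gfun α s) / (∫ s, Gfun α s)
      = gammaCDF α (α + Real.sqrt α * c) := by
    filter_upwards [Filter.eventually_gt_atTop (0:ℝ)] with α hα
    exact (gammaCDF_ratio hα c).symm
  have h2 : stdNormalCDF c = (∫ s in Iic c, Real.exp (-s^2/2)) / Real.sqrt (2 * Real.pi) := by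
    rw [stdNormalCDF, div_eq_inv_mul]
  rw [h2]
  exact hdiv.congr' heq

lemma gammaCDF_mono {α : ℝ} (hα : 0 < α) {γ γ' : ℝ} (h : γ ≤ γ') :
    gammaCDF α γ ≤ gammaCDF α γ' := by
  unfold gammaCDF
  apply mul_le_mul_of_nonneg_left _ (inv_nonneg.2 (Real.Gamma_pos_of_pos hα).le)
  have hint : IntegrableOn (fun t : ℝ => t ^ (α - 1) * Real.exp (-t)) (Ioc 0 γ') := by
    have h1 := Real.GammaIntegral_convergent hα
    have h2 : (fun x : ℝ => Real.exp (-x) * x ^ (α - 1))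
        = fun t : ℝ => t ^ (α - 1) * Real.exp (-t) := by
      funext t; ring
    rw [h2] at h1
    exact h1.mono_set Ioc_subset_Ioi_self
  apply setIntegral_mono_set hint
  · filter_upwards [ae_restrict_mem measurableSet_Ioc] with t ht
    have ht0 : 0 < t := ht.1
    positivity
  · exact HasSubset.Subset.eventuallyLE (Ioc_subset_Ioc_right h)

lemma stdNormal_lt {a c : ℝ} (h : a < c) : stdNormalCDF a < stdNormalCDF c := by
  have hsqrtpos : (0:ℝ) < Real.sqrt (2 * Real.pi) := Real.sqrt_pos.2 (by positivity)
  unfold stdNormalCDF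
  apply mul_lt_mul_of_pos_left _ (inv_pos.2 hsqrtpos)
  have hint : Integrable (fun t : ℝ => Real.exp (-t^2/2)) := by
    have h1 : (fun t : ℝ => Real.exp (-t^2/2)) = fun t => Real.exp (-(1/2) * t^2) := by
      funext t; ring_nf
    rw [h1]
    exact integrable_exp_neg_mul_sq (by norm_num)
  have hkey : (∫ t in Iic c, Real.exp (-t^2/2)) - ∫ t in Iic a, Real.exp (-t^2/2)
      = ∫ t in a..c, Real.exp (-t^2/2) :=
    intervalIntegral.integral_Iic_sub_Iic hint.integrableOn hint.integrableOn
  have hpos : 0 < ∫ t in a..c, Real.exp (-t^2/2) := by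
    apply intervalIntegral.intervalIntegral_pos_of_pos_on
    · exact hint.integrableOn.intervalIntegrable
    · intro t _
      exact Real.exp_pos _
    · exact h
  linarith [hkey, hpos]

/-- Fix `b ∈ ℝ`. If `q : ℝ → ℝ` satisfies `q(α) ≥ 0` and `F_α(q(α)) = Φ(b)` for every
`α > 3`, then `(q(α) − α)/√α → b` as `α → ∞`; i.e. the Gamma quantile satisfies
`h(b;α) = α + b√α + o(√α)`. -/
theorem gamma_quantile_asymptotic (b : ℝ) (q : ℝ → ℝ)
    (hq : ∀ α : ℝ, 3 < α → 0 ≤ q α ∧ gammaCDF α (q α) = stdNormalCDF b) :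
    Filter.Tendsto (fun α : ℝ => (q α - α) / Real.sqrt α) Filter.atTop (nhds b) := by
  rw [Metric.tendsto_nhds]
  intro ε hε
  have hlt1 : stdNormalCDF (b - ε) < stdNormalCDF b := stdNormal_lt (by linarith)
  have hlt2 : stdNormalCDF b < stdNormalCDF (b + ε) := stdNormal_lt (by linarith)
  have hup := (cdf_tendsto (b + ε)).eventually_const_lt hlt2
  have hlo := (cdf_tendsto (b - ε)).eventually_lt_const hlt1
  filter_upwards [hup, hlo, Filter.eventually_gt_atTop (3:ℝ)] with α h1 h2 hα3
  obtain ⟨hq0, hqe⟩ := hq α hα3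
  have hα0 : (0:ℝ) < α := by linarith
  have hsq : 0 < Real.sqrt α := Real.sqrt_pos.2 hα0
  have hQup : q α < α + Real.sqrt α * (b + ε) := by
    by_contra hcon
    push_neg at hcon
    have := gammaCDF_mono hα0 hcon
    rw [hqe] at this
    linarith
  have hQlo : α + Real.sqrt α * (b - ε) < q α := by
    by_contra hcon
    push_neg at hcon
    have := gammaCDF_mono hα0 hcon
    rw [hqe] at this
    linarith
  rw [Real.dist_eq, abs_lt]
  constructor
  · have : b - ε < (q α - α) / Real.sqrt α := by
      rw [lt_div_iff₀ hsq]
      nlinarith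
    linarith
  · have : (q α - α) / Real.sqrt α < b + ε := by
      rw [div_lt_iff₀ hsq]
      nlinarith
    linarith
end

section
/- For every θ ∈ ℝ, the pushforward of the product of the uniform probability measure on (0,1) and the uniform probability measure on (0,2π), under the map (ψ, φ) ↦ √(−2 log ψ) · cos(φ + θ), is the Gaussian measure N(0,1) on ℝ with mean 0 and variance 1. -/
open MeasureTheory ProbabilityTheory

section BMAux

open Set Real
open scoped ENNReal NNReal


-- θ removal by periodicity
lemma BM.theta_shift (h : ℝ → ℝ) (a θ : ℝ) :
    ∫ φ in Ioo (0:ℝ) (2*π), h (a * Real.cos (φ + θ)) =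
      ∫ φ in Ioo (0:ℝ) (2*π), h (a * Real.cos φ) := by
  have hper : Function.Periodic (fun φ => h (a * Real.cos φ)) (2*π) :=
    fun x => by simp [Real.cos_periodic x]
  have h2π : (0:ℝ) ≤ 2*π := by positivity
  rw [← integral_Ioc_eq_integral_Ioo, ← integral_Ioc_eq_integral_Ioo,
    ← intervalIntegral.integral_of_le h2π, ← intervalIntegral.integral_of_le h2π]
  calc ∫ φ in (0:ℝ)..(2*π), h (a * Real.cos (φ + θ))
      = ∫ φ in (0+θ)..(2*π+θ), h (a * Real.cos φ) :=
        intervalIntegral.integral_comp_add_right (fun φ => h (a * Real.cos φ)) θ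
    _ = ∫ φ in θ..(θ+2*π), h (a * Real.cos φ) := by rw [zero_add, add_comm (2*π) θ]
    _ = ∫ φ in (0:ℝ)..(0+2*π), h (a * Real.cos φ) := hper.intervalIntegral_add_eq θ 0
    _ = ∫ φ in (0:ℝ)..(2*π), h (a * Real.cos φ) := by rw [zero_add]

-- shift to (-π, π)
lemma BM.to_symm (h : ℝ → ℝ) (a : ℝ) :
    ∫ φ in Ioo (0:ℝ) (2*π), h (a * Real.cos φ) =
      ∫ φ in Ioo (-π) π, h (a * Real.cos φ) := by
  have hper : Function.Periodic (fun φ => h (a * Real.cos φ)) (2*π) :=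
    fun x => by simp [Real.cos_periodic x]
  have h2π : (0:ℝ) ≤ 2*π := by positivity
  have hππ : (-π:ℝ) ≤ π := by nlinarith [Real.pi_pos]
  rw [← integral_Ioc_eq_integral_Ioo, ← integral_Ioc_eq_integral_Ioo,
    ← intervalIntegral.integral_of_le h2π, ← intervalIntegral.integral_of_le hππ]
  have := hper.intervalIntegral_add_eq 0 (-π)
  rw [zero_add] at this
  rw [this, show -π + 2*π = π by ring]

-- image of exp(-(r^2/2))
lemma BM.image_eq : (fun r : ℝ => Real.exp (-(r^2/2))) '' Ioi 0 = Ioo (0:ℝ) 1 := by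
  ext ψ
  constructor
  · rintro ⟨r, hr, rfl⟩
    refine ⟨Real.exp_pos _, ?_⟩
    rw [Real.exp_lt_one_iff]
    have : (0:ℝ) < r := hr
    nlinarith
  · rintro ⟨h0, h1⟩
    have hlog : Real.log ψ < 0 := Real.log_neg h0 h1
    have hpos : (0:ℝ) < -(2 * Real.log ψ) := by linarith
    refine ⟨Real.sqrt (-(2 * Real.log ψ)), Real.sqrt_pos.mpr hpos, ?_⟩
    show Real.exp (-(Real.sqrt (-(2 * Real.log ψ)) ^ 2 / 2)) = ψ
    rw [Real.sq_sqrt hpos.le, show -(-(2 * Real.log ψ)/2) = Real.log ψ by ring]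
    exact Real.exp_log h0

-- substitution
lemma BM.subst (G : ℝ → ℝ) :
    ∫ ψ in Ioo (0:ℝ) 1, G (Real.sqrt (-(2 * Real.log ψ))) =
      ∫ r in Ioi (0:ℝ), (r * Real.exp (-(r^2/2))) * G r := by
  have hderiv : ∀ r ∈ Ioi (0:ℝ),
      HasDerivWithinAt (fun r : ℝ => Real.exp (-(r^2/2)))
        (-r * Real.exp (-(r^2/2))) (Ioi 0) r := by
    intro r _
    have : HasDerivAt (fun r : ℝ => Real.exp (-(r^2/2))) (-r * Real.exp (-(r^2/2))) r := by
      have h1 : HasDerivAt (fun r : ℝ => -(r^2/2)) (-r) r := by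
        simpa using (show HasDerivAt (fun x : ℝ => -(x^2/2)) _ r from ((hasDerivAt_pow 2 r).div_const 2).neg)
      simpa [mul_comm] using h1.exp
    exact this.hasDerivWithinAt
  have hinj : InjOn (fun r : ℝ => Real.exp (-(r^2/2))) (Ioi 0) := by
    intro x hx y hy hxy
    simp only [Real.exp_eq_exp] at hxy
    have hx0 : (0:ℝ) < x := hx
    have hy0 : (0:ℝ) < y := hy
    nlinarith
  have := MeasureTheory.integral_image_eq_integral_abs_deriv_smul measurableSet_Ioi hderiv hinj
    (fun ψ => G (Real.sqrt (-(2 * Real.log ψ))))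
  rw [BM.image_eq] at this
  rw [this]
  refine setIntegral_congr_fun measurableSet_Ioi ?_
  intro r hr
  have hr0 : (0:ℝ) < r := hr
  show |(-r) * Real.exp (-(r^2/2))| • G (Real.sqrt (-(2 * Real.log (Real.exp (-(r^2/2)))))) =
    r * Real.exp (-(r^2/2)) * G r
  rw [Real.log_exp]
  rw [show -(2 * -(r^2/2)) = r^2 by ring, Real.sqrt_sq hr0.le]
  rw [abs_mul, abs_neg, abs_of_pos hr0, abs_of_pos (Real.exp_pos _), smul_eq_mul]

lemma BM.key (θ : ℝ) (h : ℝ → ℝ) (hm : Measurable h) (h0 : ∀ x, 0 ≤ h x) {B : ℝ}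
    (hB : ∀ x, h x ≤ B) :
    ∫ p : ℝ × ℝ, h (Real.sqrt (-(2 * Real.log p.1)) * Real.cos (p.2 + θ))
      ∂((volume.restrict (Ioo (0:ℝ) 1)).prod
        ((ENNReal.ofReal (2*π))⁻¹ • volume.restrict (Ioo (0:ℝ) (2*π)))) =
    ∫ x, h x ∂(gaussianReal 0 1) := by
  have hπ : (0:ℝ) < π := Real.pi_pos
  have h2π : (0:ℝ) < 2*π := by linarith
  haveI hfin : IsFiniteMeasure
      ((ENNReal.ofReal (2*π))⁻¹ • volume.restrict (Ioo (0:ℝ) (2*π))) := by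
    constructor
    rw [Measure.smul_apply, Measure.restrict_apply_univ, smul_eq_mul]
    exact ENNReal.mul_lt_top
      (ENNReal.inv_lt_top.mpr (ENNReal.ofReal_pos.mpr h2π)) measure_Ioo_lt_top
  haveI hprob : IsProbabilityMeasure (volume.restrict (Ioo (0:ℝ) 1)) := by
    constructor
    rw [Measure.restrict_apply_univ, Real.volume_Ioo]
    norm_num
  have hg : Measurable (fun p : ℝ × ℝ =>
      Real.sqrt (-(2 * Real.log p.1)) * Real.cos (p.2 + θ)) :=
    (Real.continuous_sqrt.measurable.comp
      (((Real.measurable_log.comp measurable_fst).const_mul 2).neg)).mul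
      (Real.measurable_cos.comp (measurable_snd.add_const θ))
  have hB0 : (0:ℝ) ≤ B := le_trans (h0 0) (hB 0)
  have hint : Integrable (fun p : ℝ × ℝ =>
      h (Real.sqrt (-(2 * Real.log p.1)) * Real.cos (p.2 + θ)))
      ((volume.restrict (Ioo (0:ℝ) 1)).prod
        ((ENNReal.ofReal (2*π))⁻¹ • volume.restrict (Ioo (0:ℝ) (2*π)))) := by
    refine Integrable.mono' (integrable_const B) ((hm.comp hg).aestronglyMeasurable)
      (ae_of_all _ (fun p => ?_))
    rw [Real.norm_eq_abs, abs_of_nonneg (h0 _)]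
    exact hB _
  rw [MeasureTheory.integral_prod _ hint]
  simp_rw [integral_smul_measure]
  rw [integral_smul]
  have hts : ∀ ψ : ℝ, (∫ φ in Ioo (0:ℝ) (2*π),
      h (Real.sqrt (-(2 * Real.log ψ)) * Real.cos (φ + θ))) =
      ∫ φ in Ioo (0:ℝ) (2*π), h (Real.sqrt (-(2 * Real.log ψ)) * Real.cos φ) :=
    fun ψ => BM.theta_shift h _ θ
  simp_rw [hts]
  rw [BM.subst (fun a => ∫ φ in Ioo (0:ℝ) (2*π), h (a * Real.cos φ))]
  simp_rw [BM.to_symm h, ← integral_const_mul]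
  -- iterated integral to product integral
  have hray : Integrable (fun r : ℝ => r * Real.exp (-(r^2/2))) (volume.restrict (Ioi 0)) := by
    have hfe : (fun r : ℝ => r * Real.exp (-(r^2/2)))
        = fun r => r * Real.exp (-(2⁻¹) * r^2) := by funext r; ring_nf
    rw [hfe]
    exact (integrable_mul_exp_neg_mul_sq (by norm_num)).restrict
  have hS : IntegrableOn (fun q : ℝ × ℝ =>
      (q.1 * Real.exp (-(q.1^2/2))) * h (q.1 * Real.cos q.2))
      (Ioi (0:ℝ) ×ˢ Ioo (-π) π) (volume.prod volume) := by
    rw [IntegrableOn, ← Measure.prod_restrict]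
    have hconst : Integrable (fun _ : ℝ => B) (volume.restrict (Ioo (-π) π)) :=
      integrableOn_const measure_Ioo_lt_top.ne
    refine Integrable.mono' (hray.abs.mul_prod hconst)
      ((( measurable_fst.mul (((measurable_fst.pow_const 2).div_const 2).neg.exp)).mul
        (hm.comp (measurable_fst.mul (Real.measurable_cos.comp measurable_snd)))
        ).aestronglyMeasurable) (ae_of_all _ (fun p => ?_))
    rw [Real.norm_eq_abs, abs_mul]
    refine mul_le_mul_of_nonneg_left ?_ (abs_nonneg _)
    rw [abs_of_nonneg (h0 _)]
    exact hB _
  rw [← MeasureTheory.setIntegral_prod _ hS, ← Measure.volume_eq_prod]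
  -- polar coordinates
  have hfun : ∀ p : ℝ × ℝ,
      (p.1 * Real.exp (-(p.1^2/2))) * h (p.1 * Real.cos p.2)
      = p.1 • ((fun q : ℝ × ℝ => h q.1 * Real.exp (-((q.1^2 + q.2^2)/2)))
          (polarCoord.symm p)) := by
    intro p
    rw [polarCoord_symm_apply]
    have h2 : (p.1 * Real.cos p.2)^2 + (p.1 * Real.sin p.2)^2 = p.1^2 := by
      have hsc := Real.sin_sq_add_cos_sq p.2
      calc (p.1 * Real.cos p.2)^2 + (p.1 * Real.sin p.2)^2
          = p.1^2 * (Real.sin p.2^2 + Real.cos p.2^2) := by ring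
        _ = p.1^2 := by rw [hsc, mul_one]
    simp only [smul_eq_mul]
    rw [h2]
    ring
  simp_rw [hfun]
  rw [show Ioi (0:ℝ) ×ˢ Ioo (-π) π = polarCoord.target from rfl,
    integral_comp_polarCoord_symm (fun q : ℝ × ℝ => h q.1 * Real.exp (-((q.1^2 + q.2^2)/2)))]
  -- split the Gaussian on ℝ²
  have hsplit : ∀ q : ℝ × ℝ, h q.1 * Real.exp (-((q.1^2 + q.2^2)/2))
      = (h q.1 * Real.exp (-(q.1^2/2))) * Real.exp (-(q.2^2/2)) := by
    intro q
    rw [show -((q.1^2 + q.2^2)/2) = -(q.1^2/2) + -(q.2^2/2) by ring, Real.exp_add]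
    ring
  simp_rw [hsplit]
  rw [Measure.volume_eq_prod, integral_prod_mul (fun x => h x * Real.exp (-(x^2/2))) (fun y => Real.exp (-(y^2/2)))]
  have hgauss : (∫ y : ℝ, Real.exp (-(y^2/2))) = Real.sqrt (2*π) := by
    have hfe : (fun y : ℝ => Real.exp (-(y^2/2))) = fun y => Real.exp (-(2⁻¹) * y^2) := by
      funext y; ring_nf
    have : π/(2⁻¹:ℝ) = 2*π := by field_simp
    rw [hfe, integral_gaussian, this]
  rw [hgauss]
  -- right-hand side
  rw [gaussianReal_of_var_ne_zero 0 one_ne_zero,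
    show gaussianPDF 0 1 = fun x => ((Real.toNNReal (gaussianPDFReal 0 1 x) : ℝ≥0) : ℝ≥0∞)
      from rfl,
    integral_withDensity_eq_integral_smul (measurable_gaussianPDFReal 0 1).real_toNNReal h]
  have hpdf : ∀ x : ℝ, (Real.toNNReal (gaussianPDFReal 0 1 x)) • h x
      = (Real.sqrt (2*π))⁻¹ * (h x * Real.exp (-(x^2/2))) := by
    intro x
    rw [NNReal.smul_def, smul_eq_mul,
      Real.coe_toNNReal _ (gaussianPDFReal_nonneg 0 1 x)]
    rw [gaussianPDFReal]
    push_cast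
    rw [mul_one, sub_zero, show -x^2/(2*1) = -(x^2/2) by ring]
    ring
  simp_rw [hpdf]
  rw [integral_const_mul]
  -- final arithmetic
  have htr : ((ENNReal.ofReal (2*π))⁻¹).toReal = (2*π)⁻¹ := by
    rw [ENNReal.toReal_inv, ENNReal.toReal_ofReal h2π.le]
  rw [smul_eq_mul, htr]
  have hsq : Real.sqrt (2*π) * Real.sqrt (2*π) = 2*π := Real.mul_self_sqrt h2π.le
  have hspos : (0:ℝ) < Real.sqrt (2*π) := Real.sqrt_pos.mpr h2π
  set I := ∫ x : ℝ, h x * Real.exp (-(x^2/2))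
  have hinv2 : ((2*π):ℝ)⁻¹ = (Real.sqrt (2*π))⁻¹ * (Real.sqrt (2*π))⁻¹ := by
    rw [← mul_inv, hsq]
  rw [hinv2]
  have hrearr : (Real.sqrt (2*π))⁻¹ * (Real.sqrt (2*π))⁻¹ * (I * Real.sqrt (2*π))
      = (Real.sqrt (2*π))⁻¹ * I * ((Real.sqrt (2*π))⁻¹ * Real.sqrt (2*π)) := by ring
  rw [hrearr, inv_mul_cancel₀ hspos.ne', mul_one]

/-- For every `θ ∈ ℝ`, the pushforward of (uniform on (0,1)) × (uniform on (0,2π)) under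
`(ψ, φ) ↦ √(−2 log ψ) · cos(φ + θ)` is the standard Gaussian measure `N(0,1)`. -/
theorem map_boxMuller_eq_gaussian (θ : ℝ) :
    Measure.map (fun p : ℝ × ℝ => Real.sqrt (-(2 * Real.log p.1)) * Real.cos (p.2 + θ))
      ((volume.restrict (Set.Ioo (0 : ℝ) 1)).prod
        ((ENNReal.ofReal (2 * Real.pi))⁻¹ • volume.restrict (Set.Ioo (0 : ℝ) (2 * Real.pi)))) =
      gaussianReal 0 1 := by
  have hπ : (0:ℝ) < π := Real.pi_pos
  have h2π : (0:ℝ) < 2*π := by linarith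
  have hg : Measurable (fun p : ℝ × ℝ =>
      Real.sqrt (-(2 * Real.log p.1)) * Real.cos (p.2 + θ)) :=
    (Real.continuous_sqrt.measurable.comp
      (((Real.measurable_log.comp measurable_fst).const_mul 2).neg)).mul
      (Real.measurable_cos.comp (measurable_snd.add_const θ))
  haveI hprob1 : IsProbabilityMeasure (volume.restrict (Ioo (0:ℝ) 1)) := by
    constructor
    rw [Measure.restrict_apply_univ, Real.volume_Ioo]
    norm_num
  haveI hprob2 : IsProbabilityMeasure
      ((ENNReal.ofReal (2*π))⁻¹ • volume.restrict (Ioo (0:ℝ) (2*π))) := by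
    constructor
    rw [Measure.smul_apply, Measure.restrict_apply_univ, Real.volume_Ioo, smul_eq_mul, sub_zero]
    exact ENNReal.inv_mul_cancel (ENNReal.ofReal_pos.mpr h2π).ne' ENNReal.ofReal_ne_top
  haveI hprobm : IsProbabilityMeasure
      ((volume.restrict (Ioo (0:ℝ) 1)).prod
        ((ENNReal.ofReal (2*π))⁻¹ • volume.restrict (Ioo (0:ℝ) (2*π)))) := by
    infer_instance
  haveI hprobmap : IsProbabilityMeasure
      (Measure.map (fun p : ℝ × ℝ => Real.sqrt (-(2 * Real.log p.1)) * Real.cos (p.2 + θ))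
        ((volume.restrict (Ioo (0:ℝ) 1)).prod
          ((ENNReal.ofReal (2*π))⁻¹ • volume.restrict (Ioo (0:ℝ) (2*π))))) :=
    Measure.isProbabilityMeasure_map hg.aemeasurable
  refine Measure.ext_of_Ioc_finite _ _ (by rw [measure_univ, measure_univ]) (fun a b hab => ?_)
  rw [Measure.map_apply hg measurableSet_Ioc]
  refine (ENNReal.toReal_eq_toReal_iff' (measure_ne_top _ _) (measure_ne_top _ _)).mp ?_
  rw [← measureReal_def, ← measureReal_def, ← integral_indicator_one (hg measurableSet_Ioc), ← integral_indicator_one measurableSet_Ioc]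
  have hcomp : ∀ p : ℝ × ℝ,
      ((fun p : ℝ × ℝ => Real.sqrt (-(2 * Real.log p.1)) * Real.cos (p.2 + θ)) ⁻¹'
        (Ioc a b)).indicator (1 : ℝ × ℝ → ℝ) p
      = (Ioc a b).indicator (1 : ℝ → ℝ)
          (Real.sqrt (-(2 * Real.log p.1)) * Real.cos (p.2 + θ)) := by
    intro p
    by_cases hp : Real.sqrt (-(2 * Real.log p.1)) * Real.cos (p.2 + θ) ∈ Ioc a b <;>
      simp [Set.indicator, Set.mem_preimage, hp]
  simp_rw [hcomp]
  exact BM.key θ ((Ioc a b).indicator 1) (measurable_one.indicator measurableSet_Ioc)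
    (fun x => by by_cases hx : x ∈ Ioc a b <;> simp [Set.indicator, hx])
    (B := 1) (fun x => by by_cases hx : x ∈ Ioc a b <;> simp [Set.indicator, hx])

end BMAux
end

section
/- Let B be a nonempty finite index set, χ : B → ℝ with χ_β ≥ 0 for all β, and k : B → ℝ³. Equip Ω = (0,1)^B × (0,2π)^B with the product μ of the uniform probability measures on the factors, and for x ∈ ℝ³ define G_x(ψ, φ) = Σ_{β∈B} √(2 χ_β) · √(−log ψ_β) · cos(φ_β + ⟨k_β, x⟩). Then for all x, ζ ∈ ℝ³, ∫_Ω G_{x+ζ} · G_x dμ = Σ_{β∈B} χ_β cos(⟨k_β, ζ⟩); in particular this covariance does not depend on x (homogeneity), and if Σ_β χ_β = 1 then ∫_Ω G_x² dμ = 1. -/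
open MeasureTheory

namespace SpectralAux



variable {ι α : Type*} [Fintype ι] [MeasurableSpace α]

lemma integral_pi_prod (m : Measure α) [SigmaFinite m] (f : ι → α → ℝ) :
    ∫ x : ι → α, ∏ i, f i (x i) ∂(Measure.pi fun _ => m) = ∏ i, ∫ u, f i u ∂m := by
  letI : MeasureSpace α := { volume := m }
  haveI : SigmaFinite (volume : Measure α) := ‹_›
  exact MeasureTheory.integral_fintype_prod_eq_prod f

lemma integrable_pi_prod (m : Measure α) [SigmaFinite m] {f : ι → α → ℝ}
    (hf : ∀ i, Integrable (f i) m) :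
    Integrable (fun x : ι → α => ∏ i, f i (x i)) (Measure.pi fun _ => m) := by
  letI : MeasureSpace α := { volume := m }
  haveI : SigmaFinite (volume : Measure α) := ‹_›
  exact MeasureTheory.Integrable.fintype_prod hf

lemma prod_double [DecidableEq ι] {β γ : ι} (hne : β ≠ γ) (F G : ι → ℝ) :
    (∏ i, if i = β then F i else if i = γ then G i else 1) = F β * G γ := by
  have h1 : ∏ i ∈ (Finset.univ.erase β).erase γ,
      (if i = β then F i else if i = γ then G i else 1) = 1 := by
    refine Finset.prod_eq_one fun i hi => ?_
    simp only [Finset.mem_erase] at hi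
    rw [if_neg hi.2.1, if_neg hi.1]
  rw [← Finset.mul_prod_erase Finset.univ _ (Finset.mem_univ β),
      ← Finset.mul_prod_erase _ _
        (Finset.mem_erase_of_ne_of_mem (Ne.symm hne) (Finset.mem_univ γ)),
      h1, mul_one, if_pos rfl, if_neg (Ne.symm hne), if_pos rfl]

lemma integral_pi_eval (m : Measure α) [IsProbabilityMeasure m] (f : α → ℝ) (β : ι) :
    ∫ x : ι → α, f (x β) ∂(Measure.pi fun _ => m) = ∫ u, f u ∂m := by
  classical
  have h := integral_pi_prod (ι := ι) m (fun i u => if i = β then f u else 1)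
  have h2 : ∀ i, (∫ u, (if i = β then f u else 1) ∂m)
      = if i = β then ∫ u, f u ∂m else 1 := by
    intro i; by_cases hi : i = β <;> simp [hi]
  simp only [h2, Finset.prod_ite_eq', Finset.mem_univ, if_true] at h
  exact h

lemma integral_pi_eval_mul (m : Measure α) [IsProbabilityMeasure m] (f g : α → ℝ)
    {β γ : ι} (hne : β ≠ γ) :
    ∫ x : ι → α, f (x β) * g (x γ) ∂(Measure.pi fun _ => m)
      = (∫ u, f u ∂m) * ∫ u, g u ∂m := by
  classical
  have h := integral_pi_prod (ι := ι) m
    (fun i u => if i = β then f u else if i = γ then g u else 1)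
  have h2 : ∀ i, (∫ u, (if i = β then f u else if i = γ then g u else 1) ∂m)
      = if i = β then ∫ u, f u ∂m else if i = γ then ∫ u, g u ∂m else 1 := by
    intro i; by_cases hi : i = β <;> by_cases hi' : i = γ <;> simp [hi, hi', Ne.symm hne]
  simp only [h2, prod_double hne] at h
  exact h

lemma integrable_pi_eval_mul (m : Measure α) [IsProbabilityMeasure m] {f g : α → ℝ}
    (hf : Integrable f m) (hg : Integrable g m) (hfg : Integrable (fun u => f u * g u) m)
    (β γ : ι) :
    Integrable (fun x : ι → α => f (x β) * g (x γ)) (Measure.pi fun _ => m) := by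
  classical
  by_cases h : β = γ
  · subst h
    have h0 : ∀ i : ι, Integrable (fun u => if i = β then f u * g u else 1) m := by
      intro i; by_cases hi : i = β
      · simpa [hi] using hfg
      · simpa [hi] using integrable_const (1 : ℝ)
    have := integrable_pi_prod (ι := ι) m h0
    simpa [Finset.prod_ite_eq'] using this
  · have h0 : ∀ i : ι,
        Integrable (fun u => if i = β then f u else if i = γ then g u else 1) m := by
      intro i; by_cases hi : i = β <;> by_cases hi' : i = γ
      · simpa [hi, hi'] using hf
      · simpa [hi, hi'] using hf
      · simpa [hi, hi', Ne.symm h] using hg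
      · simpa [hi, hi'] using integrable_const (1 : ℝ)
    have := integrable_pi_prod (ι := ι) m h0
    simpa [prod_double h] using this




lemma sqrt_le_one_add_abs (t : ℝ) : Real.sqrt t ≤ 1 + |t| := by
  rcases le_total t 1 with h | h
  · calc Real.sqrt t ≤ Real.sqrt 1 := Real.sqrt_le_sqrt h
    _ = 1 := Real.sqrt_one
    _ ≤ 1 + |t| := le_add_of_nonneg_right (abs_nonneg t)
  · have h1 : Real.sqrt t ≤ t := (Real.sqrt_le_left (le_trans zero_le_one h)).2 (by nlinarith)
    calc Real.sqrt t ≤ t := h1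
    _ ≤ |t| := le_abs_self t
    _ ≤ 1 + |t| := by linarith

lemma sqrt_mul_self_le_abs (t : ℝ) : Real.sqrt t * Real.sqrt t ≤ |t| := by
  rcases le_or_gt 0 t with h | h
  · rw [Real.mul_self_sqrt h]; exact le_abs_self t
  · rw [Real.sqrt_eq_zero'.2 h.le]; simpa using abs_nonneg t

lemma integrableOn_log_Ioc : IntegrableOn Real.log (Set.Ioc (0:ℝ) 1) volume := by
  have hrpow : IntegrableOn (fun x : ℝ => x ^ (-(1/2) : ℝ)) (Set.Ioc (0:ℝ) 1) volume := by
    have h := intervalIntegral.intervalIntegrable_rpow' (a := (0:ℝ)) (b := 1) (r := -(1/2)) (by norm_num)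
    rwa [intervalIntegrable_iff_integrableOn_Ioc_of_le zero_le_one] at h
  refine Integrable.mono (hrpow.const_mul 2) Real.measurable_log.aestronglyMeasurable ?_
  filter_upwards [ae_restrict_mem measurableSet_Ioc] with x hx
  obtain ⟨hx0, hx1⟩ := hx
  have hlx : Real.log x ≤ 0 := Real.log_nonpos hx0.le hx1
  have hrp : (0:ℝ) < x ^ (-(1/2) : ℝ) := Real.rpow_pos_of_pos hx0 _
  rw [Real.norm_eq_abs, Real.norm_eq_abs, abs_of_nonpos hlx, abs_of_nonneg (by positivity)]
  have h1 : Real.log (x ^ (-(1/2):ℝ)) = -(1/2) * Real.log x := Real.log_rpow hx0 _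
  have h2 : Real.log (x ^ (-(1/2):ℝ)) ≤ x ^ (-(1/2):ℝ) - 1 :=
    Real.log_le_sub_one_of_pos hrp
  rw [h1] at h2
  linarith

lemma integral_log_Ioo : ∫ u in Set.Ioo (0:ℝ) 1, Real.log u = -1 := by
  rw [← integral_Ioc_eq_integral_Ioo,
    ← intervalIntegral.integral_of_le (zero_le_one : (0:ℝ) ≤ 1)]
  have hderiv : ∀ x ∈ Set.Ioo (0:ℝ) 1,
      HasDerivAt (fun y => y * Real.log y - y) (Real.log x) x := by
    intro x hx
    have h := (Real.hasDerivAt_mul_log hx.1.ne').sub (hasDerivAt_id x)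
    have h' : HasDerivAt (fun y => y * Real.log y - y) (Real.log x + 1 - 1) x := h
    simpa using h'
  have hint : IntervalIntegrable Real.log volume 0 1 :=
    (intervalIntegrable_iff_integrableOn_Ioc_of_le zero_le_one).2 integrableOn_log_Ioc
  have ht0 : Filter.Tendsto (fun y : ℝ => y * Real.log y - y) (nhdsWithin 0 (Set.Ioi 0))
      (nhds 0) := by
    have := (Real.continuous_mul_log.sub continuous_id).tendsto 0
    simp only [Pi.sub_apply, Function.comp, Real.log_zero, mul_zero, zero_mul, sub_zero, id_eq] at this
    exact this.mono_left nhdsWithin_le_nhds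
  have ht1 : Filter.Tendsto (fun y : ℝ => y * Real.log y - y) (nhdsWithin 1 (Set.Iio 1))
      (nhds (-1)) := by
    have := (Real.continuous_mul_log.sub continuous_id).tendsto 1
    simp only [Pi.sub_apply, Real.log_one, mul_zero, one_mul, id_eq, zero_sub] at this
    exact this.mono_left nhdsWithin_le_nhds
  rw [intervalIntegral.integral_eq_sub_of_hasDerivAt_of_tendsto zero_lt_one hderiv hint ht0 ht1]
  norm_num

noncomputable def mψ : Measure ℝ := volume.restrict (Set.Ioo (0:ℝ) 1)
noncomputable def mφ : Measure ℝ :=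
  (ENNReal.ofReal (2 * Real.pi))⁻¹ • volume.restrict (Set.Ioo (0:ℝ) (2 * Real.pi))

instance : IsProbabilityMeasure mψ := by
  constructor
  rw [mψ, Measure.restrict_apply_univ, Real.volume_Ioo]
  norm_num

lemma two_pi_pos : (0:ℝ) < 2 * Real.pi := by positivity

instance : IsProbabilityMeasure mφ := by
  constructor
  rw [mφ, Measure.smul_apply, Measure.restrict_apply_univ, Real.volume_Ioo, smul_eq_mul,
    sub_zero]
  rw [ENNReal.inv_mul_cancel (ENNReal.ofReal_pos.2 two_pi_pos).ne' ENNReal.ofReal_ne_top]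

lemma integrable_sqrt_log : Integrable (fun u => Real.sqrt (-Real.log u)) mψ := by
  have hlog : IntegrableOn Real.log (Set.Ioo (0:ℝ) 1) volume :=
    integrableOn_log_Ioc.mono_set Set.Ioo_subset_Ioc_self
  refine Integrable.mono ((integrable_const (1:ℝ)).add hlog.abs)
    (Real.measurable_log.neg.sqrt.aestronglyMeasurable) (Filter.Eventually.of_forall fun u => ?_)
  rw [Real.norm_eq_abs, Real.norm_eq_abs, abs_of_nonneg (Real.sqrt_nonneg _)]
  have h1 := sqrt_le_one_add_abs (-Real.log u)
  rw [abs_neg] at h1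
  exact le_trans h1 (le_abs_self _)

lemma integrable_sqrt_log_sq :
    Integrable (fun u => Real.sqrt (-Real.log u) * Real.sqrt (-Real.log u)) mψ := by
  have hlog : IntegrableOn Real.log (Set.Ioo (0:ℝ) 1) volume :=
    integrableOn_log_Ioc.mono_set Set.Ioo_subset_Ioc_self
  refine Integrable.mono hlog.abs
    ((Real.measurable_log.neg.sqrt.mul Real.measurable_log.neg.sqrt).aestronglyMeasurable)
    (Filter.Eventually.of_forall fun u => ?_)
  rw [Real.norm_eq_abs, Real.norm_eq_abs,
    abs_of_nonneg (mul_nonneg (Real.sqrt_nonneg _) (Real.sqrt_nonneg _)), abs_abs]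
  calc Real.sqrt (-Real.log u) * Real.sqrt (-Real.log u) ≤ |(-Real.log u)| :=
      sqrt_mul_self_le_abs _
    _ = |Real.log u| := abs_neg _

lemma integral_sqrt_log_sq :
    ∫ u, Real.sqrt (-Real.log u) * Real.sqrt (-Real.log u) ∂mψ = 1 := by
  rw [mψ]
  have h : ∫ u in Set.Ioo (0:ℝ) 1, Real.sqrt (-Real.log u) * Real.sqrt (-Real.log u)
      = ∫ u in Set.Ioo (0:ℝ) 1, -Real.log u := by
    refine setIntegral_congr_fun measurableSet_Ioo fun u hu => ?_
    exact Real.mul_self_sqrt (neg_nonneg.2 (Real.log_nonpos hu.1.le hu.2.le))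
  rw [h, integral_neg, integral_log_Ioo]
  norm_num

lemma integrable_bdd_mφ {h : ℝ → ℝ} (hm : Measurable h) (hb : ∀ u, |h u| ≤ 1) :
    Integrable h mφ := by
  refine Integrable.mono (integrable_const (1:ℝ)) hm.aestronglyMeasurable
    (Filter.Eventually.of_forall fun u => ?_)
  simpa [Real.norm_eq_abs] using hb u

lemma integral_cos_add_mφ (a : ℝ) : ∫ u, Real.cos (u + a) ∂mφ = 0 := by
  rw [mφ, integral_smul_measure]
  have h : ∫ u in Set.Ioo (0:ℝ) (2 * Real.pi), Real.cos (u + a) = 0 := by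
    rw [← integral_Ioc_eq_integral_Ioo,
      ← intervalIntegral.integral_of_le two_pi_pos.le,
      intervalIntegral.integral_comp_add_right (fun x => Real.cos x) a,
      integral_cos, zero_add, add_comm, Real.sin_add_two_pi, sub_self]
  rw [h, smul_zero]

lemma integral_cos_mul_cos_mφ (a b : ℝ) :
    ∫ u, Real.cos (u + a) * Real.cos (u + b) ∂mφ = Real.cos (a - b) / 2 := by
  have key : ∀ x : ℝ, HasDerivAt
      (fun y => y * (Real.cos (a - b) / 2) + Real.sin (2 * y + (a + b)) / 4)
      (Real.cos (x + a) * Real.cos (x + b)) x := by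
    intro x
    have h1 : HasDerivAt (fun y : ℝ => 2 * y + (a + b)) 2 x := by
      simpa using ((hasDerivAt_id x).const_mul 2).add_const (a + b)
    have h2 : HasDerivAt (fun y : ℝ => Real.sin (2 * y + (a + b)))
        (Real.cos (2 * x + (a + b)) * 2) x := (Real.hasDerivAt_sin _).comp x h1
    have h3 : HasDerivAt (fun y : ℝ => y * (Real.cos (a - b) / 2))
        (Real.cos (a - b) / 2) x := by
      simpa using (hasDerivAt_id x).mul_const (Real.cos (a - b) / 2)
    have h4 := h3.add (h2.div_const 4)
    have e5 : Real.cos (a - b) / 2 + Real.cos (2 * x + (a + b)) * 2 / 4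
        = Real.cos (x + a) * Real.cos (x + b) := by
      rw [show a - b = (x + a) - (x + b) by ring,
        show (2:ℝ) * x + (a + b) = (x + a) + (x + b) by ring]
      simp only [Real.cos_sub, Real.cos_add, Real.sin_add]
      ring
    exact e5 ▸ h4
  have hint : ∫ x in (0:ℝ)..(2 * Real.pi), Real.cos (x + a) * Real.cos (x + b)
      = Real.pi * Real.cos (a - b) := by
    rw [intervalIntegral.integral_eq_sub_of_hasDerivAt (fun x _ => key x)
      ((Continuous.mul (by continuity) (by continuity)).intervalIntegrable 0 (2 * Real.pi))]
    have e3 : (2:ℝ) * (2 * Real.pi) + (a + b) = (a + b) + 2 * Real.pi + 2 * Real.pi := by ring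
    have e4 : (2:ℝ) * 0 + (a + b) = a + b := by ring
    rw [e3, e4, Real.sin_add_two_pi, Real.sin_add_two_pi]
    ring
  rw [mφ, integral_smul_measure, ← integral_Ioc_eq_integral_Ioo,
    ← intervalIntegral.integral_of_le two_pi_pos.le, hint, ENNReal.toReal_inv,
    ENNReal.toReal_ofReal two_pi_pos.le, smul_eq_mul]
  field_simp




lemma main_calc {B : Type*} [Fintype B] (χ : B → ℝ) (hχ : ∀ β, 0 ≤ χ β) (a b : B → ℝ) :
    ∫ p : (B → ℝ) × (B → ℝ),
        (∑ β, Real.sqrt (2 * χ β) * Real.sqrt (-Real.log (p.1 β)) * Real.cos (p.2 β + a β)) *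
        (∑ β, Real.sqrt (2 * χ β) * Real.sqrt (-Real.log (p.1 β)) * Real.cos (p.2 β + b β))
      ∂((Measure.pi fun _ : B => mψ).prod (Measure.pi fun _ : B => mφ))
    = ∑ β, χ β * Real.cos (a β - b β) := by
  classical
  have hcos_int : ∀ c : ℝ, Integrable (fun u => Real.cos (u + c)) mφ := fun c =>
    integrable_bdd_mφ (by fun_prop) (fun u => Real.abs_cos_le_one _)
  have hcoscos_int : ∀ c d : ℝ,
      Integrable (fun u => Real.cos (u + c) * Real.cos (u + d)) mφ := fun c d => by
    refine integrable_bdd_mφ (by fun_prop) (fun u => ?_)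
    rw [abs_mul]
    exact mul_le_one₀ (Real.abs_cos_le_one _) (abs_nonneg _) (Real.abs_cos_le_one _)
  have hpt : ∀ p : (B → ℝ) × (B → ℝ),
      (∑ β, Real.sqrt (2 * χ β) * Real.sqrt (-Real.log (p.1 β)) * Real.cos (p.2 β + a β)) *
      (∑ β, Real.sqrt (2 * χ β) * Real.sqrt (-Real.log (p.1 β)) * Real.cos (p.2 β + b β))
      = ∑ β, ∑ γ, (Real.sqrt (2 * χ β) * Real.sqrt (2 * χ γ)) *
          ((Real.sqrt (-Real.log (p.1 β)) * Real.sqrt (-Real.log (p.1 γ))) *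
           (Real.cos (p.2 β + a β) * Real.cos (p.2 γ + b γ))) := by
    intro p
    rw [Finset.sum_mul_sum]
    exact Finset.sum_congr rfl fun β _ => Finset.sum_congr rfl fun γ _ => by ring
  have hint : ∀ β γ : B, Integrable (fun p : (B → ℝ) × (B → ℝ) =>
      (Real.sqrt (2 * χ β) * Real.sqrt (2 * χ γ)) *
      ((Real.sqrt (-Real.log (p.1 β)) * Real.sqrt (-Real.log (p.1 γ))) *
       (Real.cos (p.2 β + a β) * Real.cos (p.2 γ + b γ))))
      ((Measure.pi fun _ : B => mψ).prod (Measure.pi fun _ : B => mφ)) := by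
    intro β γ
    have hΨ : Integrable (fun ψ : B → ℝ =>
        Real.sqrt (-Real.log (ψ β)) * Real.sqrt (-Real.log (ψ γ)))
        (Measure.pi fun _ : B => mψ) :=
      integrable_pi_eval_mul mψ integrable_sqrt_log integrable_sqrt_log
        integrable_sqrt_log_sq β γ
    have hΦ : Integrable (fun φ : B → ℝ =>
        Real.cos (φ β + a β) * Real.cos (φ γ + b γ)) (Measure.pi fun _ : B => mφ) :=
      integrable_pi_eval_mul mφ (hcos_int (a β)) (hcos_int (b γ)) (hcoscos_int _ _) β γ
    exact (hΨ.mul_prod hΦ).const_mul _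
  have hval : ∀ β γ : B,
      (∫ p : (B → ℝ) × (B → ℝ),
        (Real.sqrt (2 * χ β) * Real.sqrt (2 * χ γ)) *
        ((Real.sqrt (-Real.log (p.1 β)) * Real.sqrt (-Real.log (p.1 γ))) *
         (Real.cos (p.2 β + a β) * Real.cos (p.2 γ + b γ)))
        ∂((Measure.pi fun _ : B => mψ).prod (Measure.pi fun _ : B => mφ)))
      = if β = γ then χ β * Real.cos (a β - b β) else 0 := by
    intro β γ
    rw [integral_const_mul _ _,
      MeasureTheory.integral_prod_mul
        (f := fun ψ : B → ℝ => Real.sqrt (-Real.log (ψ β)) * Real.sqrt (-Real.log (ψ γ)))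
        (g := fun φ : B → ℝ => Real.cos (φ β + a β) * Real.cos (φ γ + b γ))]
    by_cases h : β = γ
    · subst h
      rw [if_pos rfl]
      have e1 : ∫ ψ : B → ℝ, Real.sqrt (-Real.log (ψ β)) * Real.sqrt (-Real.log (ψ β))
          ∂(Measure.pi fun _ : B => mψ)
          = ∫ u, Real.sqrt (-Real.log u) * Real.sqrt (-Real.log u) ∂mψ :=
        integral_pi_eval mψ (fun u => Real.sqrt (-Real.log u) * Real.sqrt (-Real.log u)) β
      have e2 : ∫ φ : B → ℝ, Real.cos (φ β + a β) * Real.cos (φ β + b β)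
          ∂(Measure.pi fun _ : B => mφ)
          = ∫ u, Real.cos (u + a β) * Real.cos (u + b β) ∂mφ :=
        integral_pi_eval mφ (fun u => Real.cos (u + a β) * Real.cos (u + b β)) β
      rw [e1, e2, integral_sqrt_log_sq, integral_cos_mul_cos_mφ,
        Real.mul_self_sqrt (by linarith [hχ β] : (0:ℝ) ≤ 2 * χ β)]
      ring
    · rw [if_neg h]
      have e2 : ∫ φ : B → ℝ, Real.cos (φ β + a β) * Real.cos (φ γ + b γ)
          ∂(Measure.pi fun _ : B => mφ)
          = (∫ u, Real.cos (u + a β) ∂mφ) * ∫ u, Real.cos (u + b γ) ∂mφ :=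
        integral_pi_eval_mul mφ (fun u => Real.cos (u + a β)) (fun u => Real.cos (u + b γ)) h
      rw [e2, integral_cos_add_mφ, integral_cos_add_mφ]
      simp
  calc ∫ p : (B → ℝ) × (B → ℝ),
        (∑ β, Real.sqrt (2 * χ β) * Real.sqrt (-Real.log (p.1 β)) * Real.cos (p.2 β + a β)) *
        (∑ β, Real.sqrt (2 * χ β) * Real.sqrt (-Real.log (p.1 β)) * Real.cos (p.2 β + b β))
        ∂((Measure.pi fun _ : B => mψ).prod (Measure.pi fun _ : B => mφ))
      = ∫ p : (B → ℝ) × (B → ℝ), ∑ β, ∑ γ,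
          (Real.sqrt (2 * χ β) * Real.sqrt (2 * χ γ)) *
          ((Real.sqrt (-Real.log (p.1 β)) * Real.sqrt (-Real.log (p.1 γ))) *
           (Real.cos (p.2 β + a β) * Real.cos (p.2 γ + b γ)))
        ∂((Measure.pi fun _ : B => mψ).prod (Measure.pi fun _ : B => mφ)) := by
        simp only [hpt]
    _ = ∑ β, ∫ p : (B → ℝ) × (B → ℝ), ∑ γ,
          (Real.sqrt (2 * χ β) * Real.sqrt (2 * χ γ)) *
          ((Real.sqrt (-Real.log (p.1 β)) * Real.sqrt (-Real.log (p.1 γ))) *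
           (Real.cos (p.2 β + a β) * Real.cos (p.2 γ + b γ)))
        ∂((Measure.pi fun _ : B => mψ).prod (Measure.pi fun _ : B => mφ)) :=
        integral_finset_sum _ fun β _ => integrable_finset_sum _ fun γ _ => hint β γ
    _ = ∑ β, ∑ γ, ∫ p : (B → ℝ) × (B → ℝ),
          (Real.sqrt (2 * χ β) * Real.sqrt (2 * χ γ)) *
          ((Real.sqrt (-Real.log (p.1 β)) * Real.sqrt (-Real.log (p.1 γ))) *
           (Real.cos (p.2 β + a β) * Real.cos (p.2 γ + b γ)))
        ∂((Measure.pi fun _ : B => mψ).prod (Measure.pi fun _ : B => mφ)) :=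
        Finset.sum_congr rfl fun β _ => integral_finset_sum _ fun γ _ => hint β γ
    _ = ∑ β, ∑ γ, if β = γ then χ β * Real.cos (a β - b β) else 0 :=
        Finset.sum_congr rfl fun β _ => Finset.sum_congr rfl fun γ _ => hval β γ
    _ = ∑ β, χ β * Real.cos (a β - b β) := by simp


end SpectralAux

/-- Covariance structure of the spectral representation: with
`G_x(ψ,φ) = Σ_β √(2χ_β) √(−log ψ_β) cos(φ_β + ⟨k_β, x⟩)` on
`(0,1)^B × (0,2π)^B` with the product of the uniform measures,
`∫ G_{x+ζ} G_x dμ = Σ_β χ_β cos⟨k_β, ζ⟩` (independent of `x`), and if `Σ χ = 1`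
then `∫ G_x² dμ = 1`. -/
theorem spectral_field_covariance {B : Type*} [Fintype B] [Nonempty B]
    (χ : B → ℝ) (hχ : ∀ β, 0 ≤ χ β) (k : B → Fin 3 → ℝ) :
    let μ := (Measure.pi fun _ : B => volume.restrict (Set.Ioo (0 : ℝ) 1)).prod
      (Measure.pi fun _ : B =>
        (ENNReal.ofReal (2 * Real.pi))⁻¹ • volume.restrict (Set.Ioo (0 : ℝ) (2 * Real.pi)))
    let G := fun (x : Fin 3 → ℝ) (p : (B → ℝ) × (B → ℝ)) =>
      ∑ β, Real.sqrt (2 * χ β) * Real.sqrt (-Real.log (p.1 β)) *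
        Real.cos (p.2 β + ∑ j, k β j * x j)
    (∀ x ζ : Fin 3 → ℝ,
      ∫ p, G (x + ζ) p * G x p ∂μ = ∑ β, χ β * Real.cos (∑ j, k β j * ζ j)) ∧
    ((∑ β, χ β = 1) → ∀ x : Fin 3 → ℝ, ∫ p, (G x p) ^ 2 ∂μ = 1) := by
  intro μ G
  have key : ∀ x ζ : Fin 3 → ℝ,
      ∫ p, G (x + ζ) p * G x p ∂μ = ∑ β, χ β * Real.cos (∑ j, k β j * ζ j) := by
    intro x ζ
    have h := SpectralAux.main_calc χ hχ (fun β => ∑ j, k β j * (x + ζ) j)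
      (fun β => ∑ j, k β j * x j)
    have harg : ∀ β, (∑ j, k β j * (x + ζ) j) - (∑ j, k β j * x j) = ∑ j, k β j * ζ j := by
      intro β
      rw [← Finset.sum_sub_distrib]
      refine Finset.sum_congr rfl fun j _ => ?_
      simp only [Pi.add_apply]
      ring
    simp only [harg] at h
    exact h
  refine ⟨key, fun hsum x => ?_⟩
  have h := key x 0
  rw [add_zero] at h
  calc ∫ p, (G x p) ^ 2 ∂μ = ∫ p, G x p * G x p ∂μ := by simp only [pow_two]
    _ = ∑ β, χ β * Real.cos (∑ j, k β j * (0 : Fin 3 → ℝ) j) := h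
    _ = 1 := by simp [hsum]
end

section
/- Let (Ω, 𝒯, 𝒫) be a probability space, let δ ∈ (0, √(7/11)), set σ = δ/√7 and α_m = 1/(2σ²) + (1−m)/2 for m = 1,…,6 (so α₁ > … > α₆ > 3). For 1 ≤ m ≤ n ≤ 6, let G_{mn} : Ω → ℝ be mutually independent square-integrable random variables with E{G_{mn}} = 0 and E{G_{mn}²} = 1, and for each m let h_m : ℝ → ℝ be measurable with 0 ≤ h_m(b) ≤ 2α_m + b² for all b and E{h_m(G_{mm})} = α_m. Define the random 6×6 upper triangular matrix L by L_{mn} = σ G_{mn} for m < n, L_{mm} = σ √(2 h_m(G_{mm})), and L_{mn} = 0 for m > n. Then E{(Lᵀ L)_{mn}} = δ_{mn} for all 1 ≤ m, n ≤ 6; that is, E{Lᵀ L} = I₆. -/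
open scoped ENNReal
open MeasureTheory ProbabilityTheory Matrix

/-- The entries of the random upper triangular matrix. -/
noncomputable def ellEntry {Ω : Type*} (σ : ℝ) (G : Fin 6 → Fin 6 → Ω → ℝ) (h : Fin 6 → ℝ → ℝ)
    (k m : Fin 6) (ω : Ω) : ℝ :=
  if k < m then σ * G k m ω else if k = m then σ * Real.sqrt (2 * h k (G k k ω)) else 0

/-- Key computation of Proposition 1: with `σ = δ/√7`, `α_m = 1/(2σ²) + (1−m)/2`
(`m = 1,…,6`), mutually independent normalized random variables `G_{mn}` (`m ≤ n`),
and measurable `h_m` with `0 ≤ h_m(b) ≤ 2α_m + b²` and `E{h_m(G_{mm})} = α_m`, the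
random upper triangular matrix `L` with `L_{mn} = σ G_{mn}` (`m < n`),
`L_{mm} = σ √(2 h_m(G_{mm}))` satisfies `E{Lᵀ L} = I₆`. -/
theorem mean_CtC_eq_id {Ω : Type*} [MeasurableSpace Ω] (μ : Measure Ω)
    [IsProbabilityMeasure μ]
    (δ : ℝ) (hδ : δ ∈ Set.Ioo 0 (Real.sqrt (7 / 11)))
    (σ : ℝ) (hσ : σ = δ / Real.sqrt 7)
    (α : Fin 6 → ℝ) (hα : ∀ m : Fin 6, α m = 1 / (2 * σ ^ 2) + (1 - ((m : ℝ) + 1)) / 2)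
    (G : Fin 6 → Fin 6 → Ω → ℝ)
    (hGmeas : ∀ m n, Measurable (G m n))
    (hGindep : iIndepFun
      (fun p : {p : Fin 6 × Fin 6 // p.1 ≤ p.2} => G p.1.1 p.1.2) μ)
    (hGL2 : ∀ m n, MemLp (G m n) 2 μ)
    (hGmean : ∀ m n, ∫ ω, G m n ω ∂μ = 0)
    (hGvar : ∀ m n, ∫ ω, (G m n ω) ^ 2 ∂μ = 1)
    (h : Fin 6 → ℝ → ℝ) (hhmeas : ∀ m, Measurable (h m))
    (hh0 : ∀ m b, 0 ≤ h m b) (hhub : ∀ (m : Fin 6) (b : ℝ), h m b ≤ 2 * α m + b ^ 2)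
    (hhmean : ∀ m, ∫ ω, h m (G m m ω) ∂μ = α m)
    (L : Ω → Matrix (Fin 6) (Fin 6) ℝ)
    (hL : ∀ ω, L ω = Matrix.of fun m n =>
      if m < n then σ * G m n ω
      else if m = n then σ * Real.sqrt (2 * h m (G m m ω)) else 0) :
    ∀ m n : Fin 6, (∫ ω, ((L ω)ᵀ * L ω) m n ∂μ) = if m = n then 1 else 0 := by
  -- basic positivity facts
  have hσ0 : 0 < σ := by
    rw [hσ]
    exact div_pos hδ.1 (Real.sqrt_pos.2 (by norm_num))
  have hσne : σ ≠ 0 := ne_of_gt hσ0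
  -- L² membership of the entries
  have hGsq_int : ∀ m n, Integrable (fun ω => G m n ω ^ 2) μ := fun m n =>
    (memLp_two_iff_integrable_sq (hGmeas m n).aestronglyMeasurable).1 (hGL2 m n)
  have hhint : ∀ m, Integrable (fun ω => h m (G m m ω)) μ := by
    intro m
    have hmeas : Measurable fun ω => h m (G m m ω) := (hhmeas m).comp (hGmeas m m)
    refine Integrable.mono' ((integrable_const (2 * α m)).add (hGsq_int m m))
      hmeas.aestronglyMeasurable ?_
    filter_upwards with ω
    rw [Real.norm_eq_abs, abs_of_nonneg (hh0 m _)]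
    exact hhub m _
  have hsqrtmeas : ∀ m : Fin 6, Measurable fun ω => Real.sqrt (2 * h m (G m m ω)) :=
    fun m => Real.continuous_sqrt.measurable.comp
      ((measurable_const.mul (hhmeas m)).comp (hGmeas m m))
  have hsqrtL2 : ∀ m : Fin 6, MemLp (fun ω => Real.sqrt (2 * h m (G m m ω))) 2 μ := by
    intro m
    rw [memLp_two_iff_integrable_sq (hsqrtmeas m).aestronglyMeasurable]
    have : (fun ω => Real.sqrt (2 * h m (G m m ω)) ^ 2) = fun ω => 2 * h m (G m m ω) := by
      funext ω
      exact Real.sq_sqrt (by nlinarith [hh0 m (G m m ω)])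
    rw [this]
    exact (hhint m).const_mul 2
  have hellL2 : ∀ k m, MemLp (ellEntry σ G h k m) 2 μ := by
    intro k m
    unfold ellEntry
    rcases lt_trichotomy k m with hkm | hkm | hkm
    · simp only [if_pos hkm]
      exact (hGL2 k m).const_mul σ
    · subst hkm
      simp only [lt_irrefl, if_neg (lt_irrefl k), if_pos rfl]
      exact (hsqrtL2 k).const_mul σ
    · simp only [if_neg (not_lt_of_gt hkm), if_neg (ne_of_gt hkm)]
      exact memLp_const 0
  have hmul_int : ∀ (f g : Ω → ℝ), MemLp f 2 μ → MemLp g 2 μ →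
      Integrable (fun ω => f ω * g ω) μ := by
    intro f g hf hg
    have h1 : (1:ℝ≥0∞)/1 = 1/2 + 1/2 := by rw [ENNReal.add_halves, div_one]
    have := MemLp.smul (r := 1) hg hf
    rw [memLp_one_iff_integrable] at this
    exact this
  have hell_int : ∀ k k' m n,
      Integrable (fun ω => ellEntry σ G h k m ω * ellEntry σ G h k' n ω) μ :=
    fun k k' m n => hmul_int _ _ (hellL2 k m) (hellL2 k' n)
  -- pairwise independence
  have hpair : ∀ (k₁ m₁ k₂ m₂ : Fin 6), k₁ ≤ m₁ → k₂ ≤ m₂ → (k₁, m₁) ≠ (k₂, m₂) →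
      IndepFun (G k₁ m₁) (G k₂ m₂) μ := by
    intro k₁ m₁ k₂ m₂ h1 h2 hne
    exact hGindep.indepFun (i := ⟨(k₁, m₁), h1⟩) (j := ⟨(k₂, m₂), h2⟩)
      (by simpa [Subtype.ext_iff] using hne)
  -- integral of zero-mean independent products
  have hzero_prod : ∀ (k₁ m₁ k₂ m₂ : Fin 6), k₁ ≤ m₁ → k₂ ≤ m₂ → (k₁, m₁) ≠ (k₂, m₂) →
      ∫ ω, G k₁ m₁ ω * G k₂ m₂ ω ∂μ = 0 := by
    intro k₁ m₁ k₂ m₂ h1 h2 hne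
    have hi := (hpair k₁ m₁ k₂ m₂ h1 h2 hne).integral_mul_eq_mul_integral
      ((hGL2 k₁ m₁).1) ((hGL2 k₂ m₂).1)
    have he : ∫ ω, G k₁ m₁ ω * G k₂ m₂ ω ∂μ = ∫ ω, (G k₁ m₁ * G k₂ m₂) ω ∂μ := rfl
    rw [he, hi, hGmean, hGmean, mul_zero]
  -- sqrt-diagonal times strictly-upper entry has zero mean
  have hzero_sqrt : ∀ (k n : Fin 6), k < n →
      ∫ ω, Real.sqrt (2 * h k (G k k ω)) * G k n ω ∂μ = 0 := by
    intro k n hkn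
    have hind : IndepFun (fun ω => Real.sqrt (2 * h k (G k k ω))) (G k n) μ := by
      have base := hpair k k k n le_rfl (le_of_lt hkn)
        (by simp [Prod.ext_iff, ne_of_lt hkn])
      have := base.comp (φ := fun b => Real.sqrt (2 * h k b)) (ψ := id)
        (Real.continuous_sqrt.measurable.comp (measurable_const.mul (hhmeas k)))
        measurable_id
      exact this
    have hi := hind.integral_mul_eq_mul_integral
      ((hsqrtL2 k).1) ((hGL2 k n).1)
    have he : ∫ ω, Real.sqrt (2 * h k (G k k ω)) * G k n ω ∂μ
        = ∫ ω, ((fun ω => Real.sqrt (2 * h k (G k k ω))) * G k n) ω ∂μ := rfl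
    rw [he, hi, hGmean, mul_zero]
  -- the per-term integral values
  have hterm : ∀ (k m n : Fin 6), ∫ ω, ellEntry σ G h k m ω * ellEntry σ G h k n ω ∂μ =
      if k = m ∧ m = n then 2 * σ ^ 2 * α m
      else if k < m ∧ m = n then σ ^ 2 else 0 := by
    intro k m n
    have hrhs0 : m ≠ n → (if k = m ∧ m = n then 2 * σ ^ 2 * α m
        else if k < m ∧ m = n then σ ^ 2 else 0) = 0 := by
      intro hmn
      rw [if_neg (fun hc => hmn hc.2), if_neg (fun hc => hmn hc.2)]
    rcases lt_trichotomy k m with hkm | hkm | hkm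
    · -- k < m
      have e1 : ellEntry σ G h k m = fun ω => σ * G k m ω := by
        funext ω; simp [ellEntry, hkm]
      rcases lt_trichotomy k n with hkn | hkn | hkn
      · have e2 : ellEntry σ G h k n = fun ω => σ * G k n ω := by
          funext ω; simp [ellEntry, hkn]
        by_cases hmn : m = n
        · subst hmn
          rw [if_neg (fun hc => (ne_of_lt hkm) hc.1), if_pos ⟨hkm, rfl⟩]
          simp only [e1, e2]
          have e3 : (fun ω => σ * G k m ω * (σ * G k m ω))
              = fun ω => σ ^ 2 * G k m ω ^ 2 := by funext ω; ring
          rw [e3, integral_const_mul, hGvar, mul_one]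
        · rw [hrhs0 hmn]
          simp only [e1, e2]
          have e3 : (fun ω => σ * G k m ω * (σ * G k n ω))
              = fun ω => σ ^ 2 * (G k m ω * G k n ω) := by funext ω; ring
          rw [e3, integral_const_mul,
            hzero_prod k m k n hkm.le hkn.le (by simp [Prod.ext_iff, hmn]), mul_zero]
      · -- k = n < m
        subst hkn
        have hmn : m ≠ k := ne_of_gt hkm
        rw [hrhs0 hmn]
        have e2 : ellEntry σ G h k k = fun ω => σ * Real.sqrt (2 * h k (G k k ω)) := by
          funext ω; simp [ellEntry]
        simp only [e1, e2]
        have e3 : (fun ω => σ * G k m ω * (σ * Real.sqrt (2 * h k (G k k ω))))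
            = fun ω => σ ^ 2 * (Real.sqrt (2 * h k (G k k ω)) * G k m ω) := by
          funext ω; ring
        rw [e3, integral_const_mul, hzero_sqrt k m hkm, mul_zero]
      · -- n < k < m
        have hmn : m ≠ n := ne_of_gt (lt_trans hkn hkm)
        rw [hrhs0 hmn]
        have e2 : ellEntry σ G h k n = fun _ => (0:ℝ) := by
          funext ω; simp [ellEntry, not_lt_of_gt hkn, ne_of_gt hkn]
        simp only [e2, mul_zero, integral_zero]
    · -- k = m
      subst hkm
      have e1 : ellEntry σ G h k k = fun ω => σ * Real.sqrt (2 * h k (G k k ω)) := by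
        funext ω; simp [ellEntry]
      rcases lt_trichotomy k n with hkn | hkn | hkn
      · have hmn : k ≠ n := ne_of_lt hkn
        rw [hrhs0 hmn]
        have e2 : ellEntry σ G h k n = fun ω => σ * G k n ω := by
          funext ω; simp [ellEntry, hkn]
        simp only [e1, e2]
        have e3 : (fun ω => σ * Real.sqrt (2 * h k (G k k ω)) * (σ * G k n ω))
            = fun ω => σ ^ 2 * (Real.sqrt (2 * h k (G k k ω)) * G k n ω) := by
          funext ω; ring
        rw [e3, integral_const_mul, hzero_sqrt k n hkn, mul_zero]
      · -- k = m = n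
        subst hkn
        rw [if_pos ⟨rfl, rfl⟩]
        simp only [e1]
        have e3 : (fun ω => σ * Real.sqrt (2 * h k (G k k ω))
              * (σ * Real.sqrt (2 * h k (G k k ω))))
            = fun ω => 2 * σ ^ 2 * h k (G k k ω) := by
          funext ω
          have hs := Real.sq_sqrt (by nlinarith [hh0 k (G k k ω)] :
            (0:ℝ) ≤ 2 * h k (G k k ω))
          nlinarith [hs]
        rw [e3, integral_const_mul, hhmean]
      · have hmn : k ≠ n := ne_of_gt hkn
        rw [hrhs0 hmn]
        have e2 : ellEntry σ G h k n = fun _ => (0:ℝ) := by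
          funext ω; simp [ellEntry, not_lt_of_gt hkn, ne_of_gt hkn]
        simp only [e2, mul_zero, integral_zero]
    · -- m < k
      rw [if_neg (fun hc => (ne_of_gt hkm) hc.1), if_neg (fun hc => (not_lt_of_gt hkm) hc.1)]
      have e1 : ellEntry σ G h k m = fun _ => (0:ℝ) := by
        funext ω; simp [ellEntry, not_lt_of_gt hkm, ne_of_gt hkm]
      simp only [e1, zero_mul, integral_zero]
  -- the main computation
  intro m n
  have hLentry : ∀ ω, ((L ω)ᵀ * L ω) m n
      = ∑ k : Fin 6, ellEntry σ G h k m ω * ellEntry σ G h k n ω := by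
    intro ω
    rw [hL]
    simp [Matrix.mul_apply, Matrix.transpose_apply, ellEntry]
  rw [show (fun ω => ((L ω)ᵀ * L ω) m n)
      = fun ω => ∑ k : Fin 6, ellEntry σ G h k m ω * ellEntry σ G h k n ω from funext hLentry]
  rw [integral_finset_sum _ (fun k _ => hell_int k k m n)]
  rw [Finset.sum_congr rfl (fun k _ => hterm k m n)]
  by_cases hmn : m = n
  · subst hmn
    rw [if_pos rfl]
    have hsplit : ∀ k : Fin 6,
        (if k = m ∧ m = m then 2 * σ ^ 2 * α m else if k < m ∧ m = m then σ ^ 2 else 0)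
        = (if k = m then 2 * σ ^ 2 * α m else 0) + (if k < m then σ ^ 2 else 0) := by
      intro k
      rcases lt_trichotomy k m with hk | hk | hk
      · rw [if_neg (fun hc => ne_of_lt hk hc.1), if_pos ⟨hk, rfl⟩,
          if_neg (ne_of_lt hk), if_pos hk]
        ring
      · subst hk
        rw [if_pos ⟨rfl, rfl⟩, if_pos rfl, if_neg (lt_irrefl k)]
        ring
      · rw [if_neg (fun hc => ne_of_gt hk hc.1), if_neg (fun hc => not_lt_of_gt hk hc.1),
          if_neg (ne_of_gt hk), if_neg (not_lt_of_gt hk)]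
        ring
    rw [Finset.sum_congr rfl (fun k _ => hsplit k), Finset.sum_add_distrib]
    have h1 : (∑ k : Fin 6, if k = m then 2 * σ ^ 2 * α m else 0) = 2 * σ ^ 2 * α m := by
      rw [Finset.sum_ite_eq' Finset.univ m (fun _ => 2 * σ ^ 2 * α m)]
      simp
    have h2 : (∑ k : Fin 6, if k < m then σ ^ 2 else 0) = ((m : ℕ) : ℝ) * σ ^ 2 := by
      rw [← Finset.sum_filter, Finset.sum_const]
      have he : Finset.univ.filter (fun k => k < m) = Finset.Iio m := by
        ext k; simp
      rw [he, Fin.card_Iio, nsmul_eq_mul]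
    rw [h1, h2, hα m]
    field_simp
    ring
  · simp [hmn]
end
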